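/- arXiv:2001.08492 — 7 statements merged into one kernel-verified Lean document; each statement's English description precedes it below -/
import Mathlib

section
/- Let q ≥ 2 be an integer and {X_n} a stationary stochastic process with values in {0,...,q-1}. Then the probability that there exist indices m < n₀ such that X_m ≠ X_{n₀} while X_{n₀} = X_{n₀+1} = X_{n₀+2} = ... (all digits eventually constant but not from the start) is zero. -/
open MeasureTheory

/-- Under stationarity, the probability that the digits are eventually constant
but not constant from the start is zero. -/
theorem stmt_0 {Ω : Type*} [MeasurableSpace Ω] (P : Measure Ω) [IsProbabilityMeasure P]
    (q : ℕ) (hq : 2 ≤ q) (X : ℕ → Ω → ℕ)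
    (hmeas : ∀ n, Measurable (X n)) (hval : ∀ n ω, X n ω < q)
    (hstat : Measure.map (fun ω => fun n => X (n + 1) ω) P
      = Measure.map (fun ω => fun n => X n ω) P) :
    P {ω | ∃ m n₀, m < n₀ ∧ X m ω ≠ X n₀ ω ∧ ∀ k, n₀ ≤ k → X k ω = X n₀ ω} = 0 := by
  classical
  set F : ℕ → Set (ℕ → ℕ) := fun n => {f | ∀ k, n ≤ k → f k = f n} with hF
  have hFmeas : ∀ n, MeasurableSet (F n) := by
    intro n
    have : F n = ⋂ k, ⋂ _ : n ≤ k, {f : ℕ → ℕ | f k = f n} := by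
      ext f; simp [hF, Set.mem_iInter]
    rw [this]
    exact MeasurableSet.iInter fun k => MeasurableSet.iInter fun _ =>
      measurableSet_eq_fun (measurable_pi_apply k) (measurable_pi_apply n)
  set E : ℕ → Set Ω := fun n => {ω | ∀ k, n ≤ k → X k ω = X n ω} with hE
  have hXmeas : Measurable (fun ω => fun n => X n ω) :=
    measurable_pi_lambda _ fun n => hmeas n
  have hXmeas' : Measurable (fun ω => fun n => X (n + 1) ω) :=
    measurable_pi_lambda _ fun n => hmeas (n + 1)
  have hEpre : ∀ n, E n = (fun ω => fun k => X k ω) ⁻¹' F n := by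
    intro n; ext ω; simp [hE, hF]
  have hEmeas : ∀ n, MeasurableSet (E n) := by
    intro n; rw [hEpre]; exact hXmeas (hFmeas n)
  -- all E n have the same measure
  have hstep : ∀ n, P (E (n + 1)) = P (E n) := by
    intro n
    have h1 : E (n + 1) = (fun ω => fun k => X (k + 1) ω) ⁻¹' F n := by
      ext ω
      simp only [hE, hF, Set.mem_setOf_eq, Set.mem_preimage]
      constructor
      · intro h k hk; exact h (k + 1) (by omega)
      · intro h k hk
        obtain ⟨j, rfl⟩ : ∃ j, k = j + 1 := ⟨k - 1, by omega⟩
        exact h j (by omega)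
    calc P (E (n + 1)) = Measure.map (fun ω => fun k => X (k + 1) ω) P (F n) := by
          rw [h1, Measure.map_apply hXmeas' (hFmeas n)]
      _ = Measure.map (fun ω => fun k => X k ω) P (F n) := by rw [hstat]
      _ = P (E n) := by rw [Measure.map_apply hXmeas (hFmeas n), hEpre]
  have hall : ∀ n, P (E n) = P (E 0) := by
    intro n; induction n with
    | zero => rfl
    | succ n ih => rw [hstep, ih]
  have hmono : Monotone E := by
    intro a b hab ω hω k hk
    have h1 : X k ω = X a ω := hω k (le_trans hab hk)
    have h2 : X b ω = X a ω := hω b hab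
    rw [h1, h2]
  -- the target set equals (⋃ n, E n) \ E 0
  have hset : {ω | ∃ m n₀, m < n₀ ∧ X m ω ≠ X n₀ ω ∧ ∀ k, n₀ ≤ k → X k ω = X n₀ ω}
      = (⋃ n, E n) \ E 0 := by
    ext ω
    simp only [Set.mem_setOf_eq, Set.mem_diff, Set.mem_iUnion, hE]
    constructor
    · rintro ⟨m, n₀, hmn, hne, htail⟩
      refine ⟨⟨n₀, htail⟩, fun h0 => ?_⟩
      exact hne (by rw [h0 m (Nat.zero_le _), h0 n₀ (Nat.zero_le _)])
    · rintro ⟨⟨n, hn⟩, h0⟩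
      have hp : ∃ n, ∀ k, n ≤ k → X k ω = X n ω := ⟨n, hn⟩
      set n₀ := Nat.find hp with hn₀
      have hfind : ∀ k, n₀ ≤ k → X k ω = X n₀ ω := Nat.find_spec hp
      have hn₀pos : 0 < n₀ := by
        rcases Nat.eq_zero_or_pos n₀ with h | h
        · exact absurd (h ▸ hfind) h0
        · exact h
      have hnotprev : ¬ ∀ k, n₀ - 1 ≤ k → X k ω = X (n₀ - 1) ω :=
        Nat.find_min hp (by omega)
      refine ⟨n₀ - 1, n₀, by omega, fun heq => ?_, hfind⟩
      apply hnotprev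
      intro k hk
      rcases eq_or_lt_of_le hk with h | h
      · rw [← h]
      · rw [heq]; exact hfind k (by omega)
  rw [hset]
  have hsub : E 0 ⊆ ⋃ n, E n := Set.subset_iUnion E 0
  have hU : P (⋃ n, E n) = P (E 0) := by
    rw [Directed.measure_iUnion (hmono.directed_le)]
    simp [hall]
  rw [measure_diff hsub (hEmeas 0).nullMeasurableSet (measure_ne_top P _), hU]
  simp
end

section
/- Let q ≥ 2 be an integer and F the CDF of a probability distribution on [0,1] satisfying F(x) = F(0) + Σ_{j=0}^{q-1} [F((x+j)/q) - F(j/q)] for all base-q fractions x in (0,1). Then F is continuous at every base-q fraction in (0,1). -/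
open MeasureTheory Filter Topology Function

private lemma sum_range_mul_aux {M : Type*} [AddCommMonoid M] (f : ℕ → M) (a b : ℕ) :
    ∑ i ∈ Finset.range (a * b), f i
      = ∑ j ∈ Finset.range b, ∑ i ∈ Finset.range a, f (a * j + i) := by
  induction b with
  | zero => simp
  | succ b ih => rw [Nat.mul_succ, Finset.sum_range_add, ih, Finset.sum_range_succ]

/-- If a CDF of a probability measure on `[0,1]` satisfies the stationarity functional
equation at all base-`q` fractions, then it is continuous at every base-`q` fraction. -/
theorem stmt_1 (q : ℕ) (hq : 2 ≤ q) (μ : Measure ℝ) [IsProbabilityMeasure μ]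
    (hsupp : μ (Set.Icc 0 1) = 1)
    (F : ℝ → ℝ) (hF : ∀ x, F x = (μ (Set.Iic x)).toReal)
    (heq : ∀ x : ℝ, (∃ n k : ℕ, 1 ≤ n ∧ 0 < k ∧ k < q ^ n ∧ x = (k : ℝ) / (q : ℝ) ^ n) →
      F x = F 0 + ∑ j ∈ Finset.range q, (F ((x + j) / q) - F ((j : ℝ) / q))) :
    ∀ x : ℝ, (∃ n k : ℕ, 1 ≤ n ∧ 0 < k ∧ k < q ^ n ∧ x = (k : ℝ) / (q : ℝ) ^ n) →
      ContinuousAt F x := by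
  have hq1 : (1:ℝ) < (q:ℝ) := by exact_mod_cast lt_of_lt_of_le one_lt_two hq
  have hq0 : (0:ℝ) < (q:ℝ) := lt_trans one_pos hq1
  set G := ProbabilityTheory.cdf μ with hG
  have hFG : F = ⇑G := funext fun y => by rw [hF, ProbabilityTheory.cdf_eq_real, measureReal_def]
  have hmono : Monotone F := hFG ▸ G.mono
  have hright : ∀ y, rightLim F y = F y := fun y => by rw [hFG]; exact G.rightLim_eq y
  set J : ℝ → ℝ := fun y => F y - leftLim F y with hJdef
  have hatom : ∀ y : ℝ, μ {y} = ENNReal.ofReal (J y) := fun y => by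
    conv_lhs => rw [← ProbabilityTheory.measure_cdf (μ := μ)]
    rw [hJdef, hFG]
    exact G.measure_singleton y
  have hJnonneg : ∀ y, 0 ≤ J y := fun y => sub_nonneg.2 (hmono.leftLim_le le_rfl)
  -- abbreviation for base-q fractions
  set P : ℝ → Prop := fun y =>
    ∃ n k : ℕ, 1 ≤ n ∧ 0 < k ∧ k < q ^ n ∧ y = (k : ℝ) / (q : ℝ) ^ n with hP
  -- step lemma
  have hstep : ∀ y : ℝ, P y → J y = ∑ j ∈ Finset.range q, J ((y + j) / q) := by
    rintro y ⟨n, k, hn, hk, hkq, rfl⟩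
    set y := (k : ℝ) / (q : ℝ) ^ n with hy
    have hPy : P y := ⟨n, k, hn, hk, hkq, hy⟩
    set u : ℕ → ℝ := fun m => y - 1 / (q:ℝ) ^ (n + m + 1) with hu
    have hPu : ∀ m, P (u m) := by
      intro m
      refine ⟨n + m + 1, k * q ^ (m + 1) - 1, by omega, ?_, ?_, ?_⟩
      · have h2 : 2 ≤ q ^ (m + 1) := le_trans hq (Nat.le_self_pow (by omega) q)
        have h3 : 1 * 2 ≤ k * q ^ (m + 1) := Nat.mul_le_mul (by omega) h2
        omega
      · have h1 : k * q ^ (m + 1) ≤ q ^ n * q ^ (m + 1) :=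
          Nat.mul_le_mul_right _ (le_of_lt hkq)
        have h2 : q ^ n * q ^ (m + 1) = q ^ (n + m + 1) := by
          rw [← pow_add, Nat.add_assoc]
        have hq1' : 1 ≤ q ^ (n + m + 1) := Nat.one_le_pow _ _ (by omega)
        omega
      · have h1 : 1 ≤ k * q ^ (m + 1) :=
          Nat.one_le_iff_ne_zero.2 (by positivity)
        rw [hu]
        push_cast [Nat.cast_sub h1]
        rw [hy]
        have e1 : (q:ℝ) ^ (n + m + 1) = (q:ℝ) ^ n * (q:ℝ) ^ (m + 1) := by
          rw [← pow_add, Nat.add_assoc]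
        field_simp
        ring
    have hult : ∀ m, u m < y := fun m => sub_lt_self _ (by positivity)
    have hu0 : Tendsto u atTop (𝓝 y) := by
      have h0 : Tendsto (fun j : ℕ => ((q:ℝ)⁻¹) ^ j) atTop (𝓝 0) :=
        tendsto_pow_atTop_nhds_zero_of_lt_one (by positivity) (inv_lt_one_of_one_lt₀ hq1)
      have h1 : Tendsto (fun m : ℕ => n + m + 1) atTop atTop :=
        tendsto_atTop_atTop.2 fun b => ⟨b, fun m hm => by omega⟩
      have h2 : Tendsto (fun m : ℕ => 1 / (q:ℝ) ^ (n + m + 1)) atTop (𝓝 0) := by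
        simpa only [one_div, ← inv_pow, Function.comp_def] using h0.comp h1
      have h3 := Tendsto.sub (tendsto_const_nhds : Tendsto (fun _ : ℕ => y) atTop (𝓝 y)) h2
      rw [hu]
      simpa [sub_zero] using h3
    have huIio : Tendsto u atTop (𝓝[<] y) :=
      tendsto_nhdsWithin_of_tendsto_nhds_of_eventually_within _ hu0
        (Eventually.of_forall fun m => hult m)
    have hFul : Tendsto (fun m => F (u m)) atTop (𝓝 (leftLim F y)) :=
      (hmono.tendsto_leftLim y).comp huIio
    have hFuj : ∀ j : ℕ, Tendsto (fun m => F ((u m + j) / q)) atTop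
        (𝓝 (leftLim F ((y + j) / q))) := by
      intro j
      have ht : Tendsto (fun m => (u m + j) / q) atTop (𝓝 ((y + j) / q)) :=
        (hu0.add_const _).div_const _
      have hlt : ∀ m, (u m + j) / q < (y + j) / q := fun m =>
        div_lt_div_of_pos_right (by linarith [hult m]) hq0
      refine (hmono.tendsto_leftLim _).comp ?_
      exact tendsto_nhdsWithin_of_tendsto_nhds_of_eventually_within _ ht
        (Eventually.of_forall hlt)
    have hEm : ∀ m, F y - F (u m)
        = ∑ j ∈ Finset.range q, (F ((y + j) / q) - F ((u m + j) / q)) := by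
      intro m
      rw [heq y hPy, heq (u m) (hPu m)]
      rw [Finset.sum_sub_distrib, Finset.sum_sub_distrib, Finset.sum_sub_distrib]
      ring
    have hL : Tendsto (fun m => F y - F (u m)) atTop (𝓝 (J y)) :=
      tendsto_const_nhds.sub hFul
    have hR : Tendsto (fun m => ∑ j ∈ Finset.range q, (F ((y + j) / q) - F ((u m + j) / q)))
        atTop (𝓝 (∑ j ∈ Finset.range q, J ((y + j) / q))) := by
      refine tendsto_finset_sum _ fun j _ => tendsto_const_nhds.sub (hFuj j)
    exact tendsto_nhds_unique (hL.congr fun m => hEm m) hR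
  -- step on fraction property
  have hPstep : ∀ y : ℝ, P y → ∀ j < q, P ((y + j) / q) := by
    rintro _ ⟨n, k, hn, hk, hkq, rfl⟩ j hj
    refine ⟨n + 1, k + j * q ^ n, by omega, by omega, ?_, ?_⟩
    · have h1 : j * q ^ n + q ^ n ≤ q * q ^ n := by
        have h0 := Nat.mul_le_mul_right (q ^ n) (show j + 1 ≤ q by omega)
        rwa [Nat.succ_mul] at h0
      have h2 : q * q ^ n = q ^ (n + 1) := (pow_succ' q n).symm
      omega
    · push_cast
      rw [pow_succ]
      field_simp
      try ring
  -- iterated decomposition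
  have hiter : ∀ m : ℕ, ∀ y : ℝ, P y →
      J y = ∑ i ∈ Finset.range (q ^ m), J ((y + i) / (q:ℝ) ^ m) := by
    intro m
    induction m with
    | zero => intro y _; simp
    | succ m ih =>
      intro y hy
      rw [hstep y hy]
      have h1 : ∀ j ∈ Finset.range q, J ((y + j) / q)
          = ∑ i ∈ Finset.range (q ^ m), J ((y + ((j + q * i : ℕ) : ℝ)) / (q:ℝ) ^ (m + 1)) := by
        intro j hj
        rw [ih _ (hPstep y hy j (Finset.mem_range.1 hj))]
        refine Finset.sum_congr rfl fun i _ => ?_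
        congr 1
        push_cast
        rw [pow_succ]
        field_simp
        ring
      rw [Finset.sum_congr rfl h1, Finset.sum_comm]
      rw [show q ^ (m + 1) = q * q ^ m from by rw [pow_succ]; ring]
      rw [sum_range_mul_aux (fun N => J ((y + N) / (q:ℝ) ^ (m + 1)))]
      exact Finset.sum_congr rfl fun i _ => Finset.sum_congr rfl fun j _ => by
        rw [Nat.add_comm (q * i) j]
  -- main argument
  intro x hx
  -- reduced representation
  have key : ∀ n k : ℕ, 1 ≤ n → 0 < k → k < q ^ n →
      ∃ n' k' : ℕ, 1 ≤ n' ∧ 0 < k' ∧ k' < q ^ n' ∧ ¬ q ∣ k' ∧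
        (k:ℝ) / (q:ℝ) ^ n = (k':ℝ) / (q:ℝ) ^ n' := by
    intro n
    induction n with
    | zero => intro k h; omega
    | succ n ih =>
      intro k h1 hk hkq
      by_cases hd : q ∣ k
      · obtain ⟨k', rfl⟩ := hd
        have hk' : 0 < k' := by
          rcases Nat.eq_zero_or_pos k' with h | h
          · subst h; omega
          · exact h
        have hn1 : 1 ≤ n := by
          by_contra h
          push_neg at h
          interval_cases n
          norm_num at hkq
          have h5 := Nat.le_mul_of_pos_right q hk'
          omega
        have hk'q : k' < q ^ n := by
          have h6 : q * k' < q * q ^ n := by rw [← pow_succ']; exact hkq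
          exact Nat.lt_of_mul_lt_mul_left h6
        obtain ⟨n', k'', hA, hB, hC, hD, hE⟩ := ih k' hn1 hk' hk'q
        refine ⟨n', k'', hA, hB, hC, hD, ?_⟩
        rw [← hE]
        push_cast
        rw [pow_succ']
        field_simp
      · exact ⟨n + 1, k, h1, hk, hkq, hd, rfl⟩
  have hred : ∃ n k : ℕ, 1 ≤ n ∧ 0 < k ∧ k < q ^ n ∧ ¬ q ∣ k ∧
      x = (k:ℝ) / (q:ℝ) ^ n := by
    obtain ⟨n, k, hn, hk, hkq, hxe⟩ := hx
    obtain ⟨n', k', hA, hB, hC, hD, hE⟩ := key n k hn hk hkq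
    exact ⟨n', k', hA, hB, hC, hD, by rw [hxe, hE]⟩
  obtain ⟨n, k, hn, hk, hkq, hkd, hxe⟩ := hred
  set S : ℕ → Set ℝ :=
    fun m => ⋃ i ∈ Finset.range (q ^ (m + 1)), {(x + i) / (q:ℝ) ^ (m + 1)} with hS
  have hSmeas : ∀ m, MeasurableSet (S m) := fun m =>
    (Finset.range _).measurableSet_biUnion fun i _ => measurableSet_singleton _
  have hqpow0 : ∀ m : ℕ, (0:ℝ) < (q:ℝ) ^ m := fun m => by positivity
  have hinj : ∀ m : ℕ, ∀ i i' : ℕ,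
      (x + i) / (q:ℝ) ^ m = (x + i') / (q:ℝ) ^ m → i = i' := by
    intro m i i' h
    field_simp at h
    exact_mod_cast add_left_cancel h
  have hSmeasure : ∀ m, μ (S m) = ENNReal.ofReal (J x) := by
    intro m
    rw [hS]
    rw [measure_biUnion_finset ?_ fun i _ => measurableSet_singleton _]
    · rw [Finset.sum_congr rfl fun i _ => hatom _]
      rw [← ENNReal.ofReal_sum_of_nonneg fun i _ => hJnonneg _]
      rw [← hiter (m + 1) x hx]
    · intro i _ i' _ hne
      exact Set.disjoint_singleton.2 fun h => hne (hinj _ _ _ h)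
  have hxcast : ∀ m i : ℕ, (x + i) / (q:ℝ) ^ (m + 1)
      = ((k + i * q ^ n : ℕ) : ℝ) / (q:ℝ) ^ (n + m + 1) := by
    intro m i
    rw [hxe]
    push_cast
    rw [show (q:ℝ) ^ (n + m + 1) = (q:ℝ) ^ n * (q:ℝ) ^ (m + 1) from by
      rw [← pow_add, Nat.add_assoc]]
    field_simp
    try ring
  have hne2 : ∀ m m' i i' : ℕ, m < m' →
      (x + i) / (q:ℝ) ^ (m + 1) ≠ (x + i') / (q:ℝ) ^ (m' + 1) := by
    intro m m' i i' hmm hcontra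
    rw [hxcast, hxcast] at hcontra
    rw [div_eq_div_iff (hqpow0 _).ne' (hqpow0 _).ne'] at hcontra
    have hnat : (k + i * q ^ n) * q ^ (n + m' + 1)
        = (k + i' * q ^ n) * q ^ (n + m + 1) := by exact_mod_cast hcontra
    have hdd : n + m' + 1 = (n + m + 1) + (m' - m) := by omega
    rw [hdd, pow_add] at hnat
    have hnat2 : ((k + i * q ^ n) * q ^ (m' - m)) * q ^ (n + m + 1)
        = (k + i' * q ^ n) * q ^ (n + m + 1) := by
      calc ((k + i * q ^ n) * q ^ (m' - m)) * q ^ (n + m + 1)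
          = (k + i * q ^ n) * (q ^ (n + m + 1) * q ^ (m' - m)) := by ring
        _ = (k + i' * q ^ n) * q ^ (n + m + 1) := hnat
    have hpos : 0 < q ^ (n + m + 1) := Nat.one_le_pow _ _ (by omega)
    have hcancel : (k + i * q ^ n) * q ^ (m' - m) = k + i' * q ^ n :=
      Nat.eq_of_mul_eq_mul_right hpos hnat2
    apply hkd
    have hq_dvd_left : q ∣ (k + i * q ^ n) * q ^ (m' - m) :=
      Dvd.dvd.mul_left (dvd_pow_self q (by omega)) _
    rw [hcancel] at hq_dvd_left
    have hq_dvd_i : q ∣ i' * q ^ n := Dvd.dvd.mul_left (dvd_pow_self q (by omega)) i'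
    rw [Nat.add_comm] at hq_dvd_left
    exact (Nat.dvd_add_right hq_dvd_i).mp hq_dvd_left
  have hdisj : ∀ m m', m ≠ m' → Disjoint (S m) (S m') := by
    have base : ∀ m m', m < m' → Disjoint (S m) (S m') := by
      intro m m' hmm
      rw [Set.disjoint_left]
      intro a ha ha'
      rw [hS] at ha ha'
      simp only [Set.mem_iUnion, Set.mem_singleton_iff, Finset.mem_range] at ha ha'
      obtain ⟨i, _, rfl⟩ := ha
      obtain ⟨i', _, h⟩ := ha'
      exact hne2 m m' i i' hmm h
    intro m m' hmm
    rcases lt_or_gt_of_ne hmm with h | h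
    · exact base m m' h
    · exact (base m' m h).symm
  have hM : ∀ M : ℕ, (M : ENNReal) * ENNReal.ofReal (J x) ≤ 1 := by
    intro M
    have h1 : μ (⋃ m ∈ Finset.range M, S m) = ∑ m ∈ Finset.range M, μ (S m) :=
      measure_biUnion_finset (fun m _ m' _ h => hdisj m m' h) (fun m _ => hSmeas m)
    have h2 : μ (⋃ m ∈ Finset.range M, S m) ≤ 1 := by
      rw [← measure_univ (μ := μ)]
      exact measure_mono (Set.subset_univ _)
    rw [h1] at h2
    simpa [hSmeasure, Finset.sum_const, Finset.card_range, nsmul_eq_mul] using h2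
  have hJx : J x = 0 := by
    by_contra hne0
    have hpos : 0 < J x := lt_of_le_of_ne (hJnonneg x) (Ne.symm hne0)
    obtain ⟨M, hM'⟩ := exists_nat_gt (1 / J x)
    have h1 := hM M
    rw [← ENNReal.ofReal_natCast, ← ENNReal.ofReal_mul (by positivity)] at h1
    have h2 : (M:ℝ) * J x ≤ 1 := ENNReal.ofReal_le_one.mp h1
    rw [div_lt_iff₀ hpos] at hM'
    linarith
  rw [hmono.continuousAt_iff_leftLim_eq_rightLim, hright x]
  have h0 : F x - leftLim F x = 0 := by simpa [hJdef] using hJx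
  linarith
end

section
/- Let q ≥ 2 be an integer, {X_n}_{n≥1} a stochastic process with values in {0,...,q-1}, X = Σ_{n≥1} X_n q^{-n}, and F the CDF of X. Then {X_n}_{n≥1} is stationary if and only if F(x) = F(0) + Σ_{j=0}^{q-1} [F((x+j)/q) - F(j/q)] for all base-q fractions x in (0,1). -/
open MeasureTheory Set
open scoped ENNReal NNReal


namespace PfAux

noncomputable section

abbrev E : Type := ℕ → ℕ

def shift (s : E) : E := fun n => s (n + 1)

def Sq (q : ℕ) : Set E := {s | ∀ n, s n < q}

def ff (q : ℕ) (s : E) : ℝ := ∑' n, (s n : ℝ) / (q : ℝ) ^ (n + 1)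

def val (q m : ℕ) (s : E) : ℕ := ∑ i ∈ Finset.range m, s i * q ^ (m - 1 - i)

def tau (q k m : ℕ) : E := fun n => if n < m then k / q ^ (m - 1 - n) % q else 0

def sig (q k m : ℕ) : E := fun n => if n < m then (k - 1) / q ^ (m - 1 - n) % q else q - 1

variable {q : ℕ}

lemma hq0R (hq : 2 ≤ q) : (0:ℝ) < q := by
  have : (0:ℕ) < q := by omega
  exact_mod_cast this

lemma hq1R (hq : 2 ≤ q) : (1:ℝ) < q := by
  have : (1:ℕ) < q := by omega
  exact_mod_cast this

lemma hgeom (hq : 2 ≤ q) : Summable (fun n : ℕ => ((q:ℝ)⁻¹) ^ n) := by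
  apply summable_geometric_of_lt_one (by positivity)
  rw [inv_lt_one_iff₀]
  right
  exact hq1R hq

lemma summable_aux (hq : 2 ≤ q) (s : E) (hs : ∀ n, s n < q) :
    Summable (fun n => (s n : ℝ) / (q : ℝ) ^ (n + 1)) := by
  have hq0 : (0:ℝ) < q := hq0R hq
  apply Summable.of_nonneg_of_le (fun n => by positivity) (fun n => ?_) (hgeom hq)
  have h1 : (s n : ℝ) ≤ q := by
    have := le_of_lt (hs n); exact_mod_cast this
  calc (s n : ℝ) / (q:ℝ)^(n+1) ≤ (q:ℝ) / (q:ℝ)^(n+1) := by gcongr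
  _ = (q:ℝ)⁻¹ ^ n := by
      rw [inv_pow, pow_succ]
      field_simp
      try ring

lemma summable_geomQ (hq : 2 ≤ q) : Summable (fun n : ℕ => ((q:ℝ) - 1) / (q : ℝ) ^ (n + 1)) := by
  have hq0 : (0:ℝ) < q := hq0R hq
  apply ((hgeom hq).mul_right (((q:ℝ) - 1) * (q:ℝ)⁻¹)).congr
  intro n
  rw [pow_succ, inv_pow]
  field_simp
  try ring

lemma ff_nonneg (s : E) : 0 ≤ ff q s :=
  tsum_nonneg (fun n => by positivity)

lemma tsum_geom (hq : 2 ≤ q) : ∑' n : ℕ, ((q:ℝ) - 1) / (q : ℝ) ^ (n + 1) = 1 := by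
  have hq0 : (0:ℝ) < q := hq0R hq
  have hq1 : (1:ℝ) < q := hq1R hq
  have hlt : (q:ℝ)⁻¹ < 1 := by
    rw [inv_lt_one_iff₀]; right; exact hq1
  have hgeo : ∑' n : ℕ, ((q:ℝ)⁻¹) ^ n = (1 - (q:ℝ)⁻¹)⁻¹ :=
    tsum_geometric_of_lt_one (by positivity) hlt
  have h1 : ∀ n : ℕ, ((q:ℝ) - 1) / (q : ℝ) ^ (n + 1) = ((q:ℝ)⁻¹)^n * (((q:ℝ)-1) * (q:ℝ)⁻¹) := by
    intro n
    rw [pow_succ, inv_pow]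
    field_simp
    try ring
  rw [tsum_congr h1, tsum_mul_right, hgeo]
  have h2 : (1:ℝ) - (q:ℝ)⁻¹ ≠ 0 := by
    have : (q:ℝ)⁻¹ < 1 := hlt
    intro h; nlinarith
  field_simp
  exact div_self (sub_pos.mpr hq1).ne'

lemma cast_pred (hq : 2 ≤ q) : ((q - 1 : ℕ) : ℝ) = (q:ℝ) - 1 := by
  have : 1 ≤ q := by omega
  push_cast [this]
  ring

lemma ff_le_one (hq : 2 ≤ q) (s : E) (hs : ∀ n, s n < q) : ff q s ≤ 1 := by
  have hq0 : (0:ℝ) < q := hq0R hq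
  rw [← tsum_geom hq]
  apply Summable.tsum_le_tsum (fun n => ?_) (summable_aux hq s hs) (summable_geomQ hq)
  apply div_le_div_of_nonneg_right ?_ (by positivity)
  · have h1 : s n ≤ q - 1 := by have := hs n; omega
    have h2 : ((s n : ℕ) : ℝ) ≤ ((q - 1 : ℕ) : ℝ) := by exact_mod_cast h1
    rw [cast_pred hq] at h2
    exact h2

lemma shift_mem (s : E) (hs : ∀ n, s n < q) : ∀ n, shift s n < q := fun n => hs (n + 1)

lemma ff_shift (hq : 2 ≤ q) (s : E) (hs : ∀ n, s n < q) :
    ff q s = ((s 0 : ℝ) + ff q (shift s)) / q := by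
  have hq0 : (0:ℝ) < q := hq0R hq
  have hsum : Summable (fun n => (s n : ℝ) / (q : ℝ) ^ (n + 1)) := summable_aux hq s hs
  have h0 : ff q s = (s 0 : ℝ) / q ^ (0+1) + ∑' n : ℕ, (s (n+1) : ℝ) / (q : ℝ) ^ (n + 1 + 1) :=
    Summable.tsum_eq_zero_add hsum
  have h1 : ∀ n : ℕ, (s (n+1) : ℝ) / (q : ℝ) ^ (n + 1 + 1)
      = ((shift s n : ℝ) / (q:ℝ) ^ (n+1)) * (q:ℝ)⁻¹ := by
    intro n
    show _ = ((s (n+1) : ℝ) / (q:ℝ) ^ (n+1)) * (q:ℝ)⁻¹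
    rw [pow_succ]
    ring
  rw [h0, tsum_congr h1, tsum_mul_right]
  show (s 0 : ℝ) / q ^ (0+1) + ff q (shift s) * (q:ℝ)⁻¹ = _
  rw [pow_one]
  field_simp

end

end PfAux

namespace PfAux

variable {q : ℕ}

lemma shift_iter (s : E) (m n : ℕ) : (shift^[m] s) n = s (n + m) := by
  induction m generalizing s n with
  | zero => rfl
  | succ m ih =>
    rw [Function.iterate_succ_apply, ih (shift s) n]
    show s (n + m + 1) = s (n + (m + 1))
    have e : n + m + 1 = n + (m + 1) := by omega
    rw [e]

lemma val_congr (m : ℕ) {s t : E} (h : ∀ i, i < m → s i = t i) : val q m s = val q m t := by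
  unfold val
  apply Finset.sum_congr rfl
  intro i hi
  rw [Finset.mem_range] at hi
  rw [h i hi]

lemma val_succ (m : ℕ) (s : E) : val q (m + 1) s = val q m s * q + s m := by
  unfold val
  rw [Finset.sum_range_succ]
  have h : ∀ i ∈ Finset.range m, s i * q ^ (m + 1 - 1 - i) = (s i * q ^ (m - 1 - i)) * q := by
    intro i hi
    rw [Finset.mem_range] at hi
    have e : m + 1 - 1 - i = (m - 1 - i) + 1 := by omega
    rw [e, pow_succ]
    ring
  rw [Finset.sum_congr rfl h, ← Finset.sum_mul]
  have e2 : m + 1 - 1 - m = 0 := by omega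
  rw [e2, pow_zero, mul_one]

lemma ff_prefix (hq : 2 ≤ q) (s : E) (hs : ∀ n, s n < q) (m : ℕ) :
    ff q s = (val q m s : ℝ) / (q:ℝ) ^ m + ff q (shift^[m] s) / (q:ℝ) ^ m := by
  have hq0 : (0:ℝ) < q := hq0R hq
  induction m with
  | zero => simp [val]
  | succ m ih =>
    have hmem : ∀ n, (shift^[m] s) n < q := by
      intro n; rw [shift_iter]; exact hs _
    have h2 : ff q (shift^[m] s) = ((s m : ℝ) + ff q (shift^[m + 1] s)) / q := by
      have h3 := ff_shift hq (shift^[m] s) hmem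
      rw [shift_iter s m 0] at h3
      rw [← Function.iterate_succ_apply' shift m s] at h3
      simpa using h3
    rw [ih, h2, val_succ]
    push_cast
    field_simp
    ring

lemma val_lt : ∀ (m : ℕ) (s : E), (∀ i, i < m → s i < q) → val q m s < q ^ m := by
  intro m
  induction m with
  | zero => intro s h; simp [val]
  | succ m ih =>
    intro s h
    rw [val_succ, pow_succ]
    have h1 := ih s (fun i hi => h i (by omega))
    have h2 := h m (by omega)
    nlinarith

lemma dig_val : ∀ (m : ℕ) (s : E), (∀ i, i < m → s i < q) →
    ∀ i, i < m → val q m s / q ^ (m - 1 - i) % q = s i := by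
  intro m
  induction m with
  | zero => intro s h i hi; omega
  | succ m ih =>
    intro s h i hi
    have hq0 : 0 < q := by
      have := h i hi; omega
    rw [val_succ]
    rcases Nat.lt_succ_iff_lt_or_eq.mp hi with h1 | h1
    · have e1 : m + 1 - 1 - i = (m - 1 - i) + 1 := by omega
      have e2 : q ^ ((m - 1 - i) + 1) = q * q ^ (m - 1 - i) := by
        rw [pow_succ]; ring
      rw [e1, e2, ← Nat.div_div_eq_div_mul]
      have e3 : (val q m s * q + s m) / q = val q m s := by
        rw [mul_comm, Nat.mul_add_div hq0, Nat.div_eq_of_lt (h m (by omega)), add_zero]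
      rw [e3]
      exact ih s (fun j hj => h j (by omega)) i h1
    · subst h1
      have e1 : i + 1 - 1 - i = 0 := by omega
      rw [e1, pow_zero, Nat.div_one, add_comm, Nat.add_mul_mod_self_right,
        Nat.mod_eq_of_lt (h i hi)]

lemma tau_mem (hq : 2 ≤ q) (k m : ℕ) : ∀ n, tau q k m n < q := by
  intro n
  unfold tau
  split
  · exact Nat.mod_lt _ (by omega)
  · omega

lemma sig_mem (hq : 2 ≤ q) (k m : ℕ) : ∀ n, sig q k m n < q := by
  intro n
  unfold sig
  split
  · exact Nat.mod_lt _ (by omega)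
  · omega

lemma tau_shift_digit (hq : 2 ≤ q) (k m i : ℕ) (hi : i < m) :
    tau q k (m + 1) i = tau q (k / q) m i := by
  unfold tau
  rw [if_pos (by omega : i < m + 1), if_pos hi]
  have e : m + 1 - 1 - i = (m - 1 - i) + 1 := by omega
  rw [e, pow_succ, mul_comm (q ^ (m - 1 - i)) q, ← Nat.div_div_eq_div_mul]

lemma val_tau (hq : 2 ≤ q) : ∀ (m k : ℕ), k < q ^ m → val q m (tau q k m) = k := by
  intro m
  induction m with
  | zero =>
    intro k hk
    have : k = 0 := by simpa using hk
    simp [val, this]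
  | succ m ih =>
    intro k hk
    rw [val_succ]
    have h1 : val q m (tau q k (m + 1)) = val q m (tau q (k / q) m) :=
      val_congr m (fun i hi => tau_shift_digit hq k m i hi)
    have h2 : k / q < q ^ m := by
      rw [Nat.div_lt_iff_lt_mul (by omega : 0 < q)]
      rw [pow_succ] at hk
      exact hk
    have h3 : tau q k (m + 1) m = k % q := by
      unfold tau
      rw [if_pos (by omega : m < m + 1)]
      have : m + 1 - 1 - m = 0 := by omega
      rw [this, pow_zero, Nat.div_one]
    rw [h1, ih _ h2, h3, mul_comm]
    exact Nat.div_add_mod k q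

lemma ff_c0 : ff q (fun _ => 0) = 0 := by simp [ff]

lemma ff_cQ (hq : 2 ≤ q) : ff q (fun _ => q - 1) = 1 := by
  unfold ff
  rw [tsum_congr (fun n : ℕ => by rw [cast_pred hq] :
    ∀ n : ℕ, (((fun _ => q - 1) n : ℕ) : ℝ) / (q:ℝ)^(n+1) = ((q:ℝ)-1) / (q:ℝ)^(n+1))]
  exact tsum_geom hq

lemma ff_tau (hq : 2 ≤ q) (m k : ℕ) (hk : k < q ^ m) :
    ff q (tau q k m) = (k : ℝ) / (q:ℝ) ^ m := by
  have hmem := tau_mem hq k m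
  have hpre := ff_prefix hq (tau q k m) hmem m
  have htail : shift^[m] (tau q k m) = (fun _ => 0) := by
    funext n
    rw [shift_iter]
    unfold tau
    rw [if_neg (by omega)]
  rw [htail, ff_c0, val_tau hq m k hk] at hpre
  simpa using hpre

lemma sig_eq_tau_below (k m i : ℕ) (hi : i < m) : sig q k m i = tau q (k - 1) m i := by
  unfold sig tau
  rw [if_pos hi, if_pos hi]

lemma ff_sig (hq : 2 ≤ q) (m k : ℕ) (h0 : 0 < k) (hk : k ≤ q ^ m) :
    ff q (sig q k m) = (k : ℝ) / (q:ℝ) ^ m := by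
  have hq0 : (0:ℝ) < q := hq0R hq
  have hmem := sig_mem hq k m
  have hpre := ff_prefix hq (sig q k m) hmem m
  have htail : shift^[m] (sig q k m) = (fun _ => q - 1) := by
    funext n
    rw [shift_iter]
    unfold sig
    rw [if_neg (by omega)]
  have hval : val q m (sig q k m) = k - 1 := by
    rw [val_congr m (fun i hi => sig_eq_tau_below k m i hi)]
    exact val_tau hq m (k - 1) (by omega)
  rw [htail, ff_cQ hq, hval] at hpre
  rw [hpre]
  have hc : ((k - 1 : ℕ) : ℝ) = (k:ℝ) - 1 := by
    have h1 : (1:ℕ) ≤ k := h0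
    push_cast [h1]
    ring
  rw [hc]
  field_simp
  ring

lemma ff_eq_zero (hq : 2 ≤ q) (s : E) (hs : ∀ n, s n < q) (h : ff q s = 0) :
    ∀ n, s n = 0 := by
  intro n
  have hsum := summable_aux hq s hs
  have h1 : (s n : ℝ) / (q:ℝ)^(n+1) ≤ ff q s :=
    Summable.le_tsum hsum n (fun i _ => by positivity)
  rw [h] at h1
  have hq0 : (0:ℝ) < q := hq0R hq
  have h2 : (s n : ℝ) ≤ 0 := by
    by_contra hcon
    push_neg at hcon
    have : 0 < (s n : ℝ) / (q:ℝ)^(n+1) := by positivity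
    linarith
  have : s n ≤ 0 := by exact_mod_cast h2
  omega

lemma ff_eq_one (hq : 2 ≤ q) (s : E) (hs : ∀ n, s n < q) (h : ff q s = 1) :
    ∀ n, s n = q - 1 := by
  set t : E := fun n => q - 1 - s n with ht'
  have ht : ∀ n, t n < q := fun n => by simp only [ht']; omega
  have hcast : ∀ n, ((t n : ℕ) : ℝ) = ((q:ℝ) - 1) - (s n : ℝ) := by
    intro n
    have h1 : s n ≤ q - 1 := by have := hs n; omega
    simp only [ht']
    rw [Nat.cast_sub h1, cast_pred hq]
  have hft : ff q t = 0 := by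
    unfold ff
    have e : ∀ n : ℕ, (t n : ℝ) / (q:ℝ)^(n+1)
        = ((q:ℝ)-1) / (q:ℝ)^(n+1) - (s n : ℝ) / (q:ℝ)^(n+1) := by
      intro n
      rw [hcast n]
      ring
    rw [tsum_congr e, Summable.tsum_sub (summable_geomQ hq) (summable_aux hq s hs), tsum_geom hq]
    have : ∑' n : ℕ, (s n : ℝ) / (q:ℝ)^(n+1) = ff q s := rfl
    rw [this, h]
    ring
  intro n
  have h2 := ff_eq_zero hq t ht hft n
  simp only [ht'] at h2
  have := hs n
  omega

lemma expansion (hq : 2 ≤ q) (s : E) (hs : ∀ n, s n < q) (m k : ℕ) (h0 : 0 < k)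
    (hk : k ≤ q ^ m) (h : ff q s = (k : ℝ) / (q:ℝ) ^ m) :
    s = tau q k m ∨ s = sig q k m := by
  have hq0 : (0:ℝ) < q := hq0R hq
  have hqm : (0:ℝ) < (q:ℝ) ^ m := by positivity
  have hmem : ∀ n, (shift^[m] s) n < q := fun n => by rw [shift_iter]; exact hs _
  have hpre := ff_prefix hq s hs m
  set K := val q m s with hK
  set r := ff q (shift^[m] s) with hr
  have hr0 : 0 ≤ r := ff_nonneg _
  have hr1 : r ≤ 1 := ff_le_one hq _ hmem
  have hKr : (K : ℝ) + r = k := by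
    rw [h] at hpre
    have h5 : (k:ℝ) / (q:ℝ)^m * (q:ℝ)^m = ((K:ℝ) / (q:ℝ)^m + r / (q:ℝ)^m) * (q:ℝ)^m := by
      rw [← hpre]
    field_simp at h5
    linarith
  have hKle : K ≤ k := by
    by_contra hcon
    push_neg at hcon
    have : (k:ℝ) + 1 ≤ (K:ℝ) := by exact_mod_cast hcon
    linarith
  have hkK : k ≤ K + 1 := by
    by_contra hcon
    push_neg at hcon
    have : (K:ℝ) + 1 + 1 ≤ (k:ℝ) := by exact_mod_cast hcon
    linarith
  rcases (by omega : K = k ∨ K + 1 = k) with hc | hc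
  · left
    have hKk : (K:ℝ) = (k:ℝ) := by exact_mod_cast hc
    have hrz : r = 0 := by linarith
    have htail := ff_eq_zero hq _ hmem hrz
    funext n
    rcases lt_or_ge n m with hn | hn
    · unfold tau
      rw [if_pos hn, ← hc]
      exact (dig_val m s (fun i _ => hs i) n hn).symm
    · unfold tau
      rw [if_neg (by omega)]
      have h6 := htail (n - m)
      rw [shift_iter] at h6
      have e : n - m + m = n := by omega
      rw [e] at h6
      exact h6
  · right
    have hKk : (K:ℝ) + 1 = (k:ℝ) := by exact_mod_cast hc
    have hrz : r = 1 := by linarith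
    have htail := ff_eq_one hq _ hmem hrz
    funext n
    rcases lt_or_ge n m with hn | hn
    · unfold sig
      rw [if_pos hn]
      have e : k - 1 = K := by omega
      rw [e]
      exact (dig_val m s (fun i _ => hs i) n hn).symm
    · unfold sig
      rw [if_neg (by omega)]
      have h6 := htail (n - m)
      rw [shift_iter] at h6
      have e : n - m + m = n := by omega
      rw [e] at h6
      exact h6

end PfAux
namespace PfAux

variable {q : ℕ}

def cons (d : ℕ) (s : E) : E := fun n => match n with
  | 0 => d
  | Nat.succ k => s k

@[simp] lemma cons_zero (d : ℕ) (s : E) : cons d s 0 = d := rfl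
@[simp] lemma cons_succ (d : ℕ) (s : E) (n : ℕ) : cons d s (n + 1) = s n := rfl

lemma shift_cons (d : ℕ) (s : E) : shift (cons d s) = s := rfl

lemma cons_inj {d d' : ℕ} {s s' : E} (h : cons d s = cons d' s') : d = d' ∧ s = s' := by
  constructor
  · have := congrFun h 0; simpa using this
  · funext n; have := congrFun h (n + 1); simpa using this

lemma shift_eq_iff (w s : E) : shift w = s ↔ w = cons (w 0) s := by
  constructor
  · intro h
    funext n
    cases n with
    | zero => rfl
    | succ k => rw [cons_succ, ← h]; rfl
  · intro h
    rw [h, shift_cons]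

lemma cons_tau (hq : 2 ≤ q) (d k m : ℕ) (hd : d < q) (hk : k < q ^ m) :
    cons d (tau q k m) = tau q (k + d * q ^ m) (m + 1) := by
  have hq0 : 0 < q := by omega
  funext n
  cases n with
  | zero =>
    rw [cons_zero]
    unfold tau
    rw [if_pos (by omega : 0 < m + 1)]
    have e : m + 1 - 1 - 0 = m := by omega
    rw [e, Nat.add_mul_div_right _ _ (Nat.pow_pos (n := m) hq0), Nat.div_eq_of_lt hk,
      zero_add, Nat.mod_eq_of_lt hd]
  | succ n =>
    rw [cons_succ]
    unfold tau
    rcases lt_or_ge n m with hn | hn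
    · rw [if_pos hn, if_pos (by omega : n + 1 < m + 1)]
      have e : m + 1 - 1 - (n + 1) = m - 1 - n := by omega
      rw [e]
      have e2 : q ^ m = q ^ (n + 1) * q ^ (m - 1 - n) := by
        rw [← pow_add]; congr 1; omega
      have e3 : k + d * q ^ m = k + (d * q ^ (n + 1)) * q ^ (m - 1 - n) := by
        rw [e2]; ring
      rw [e3, Nat.add_mul_div_right _ _ (Nat.pow_pos hq0)]
      have e4 : d * q ^ (n + 1) = (d * q ^ n) * q := by rw [pow_succ]; ring
      rw [e4, Nat.add_mul_mod_self_right]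
    · rw [if_neg (by omega), if_neg (by omega)]

lemma cons_sig (hq : 2 ≤ q) (d k m : ℕ) (hd : d < q) (h0 : 0 < k) (hk : k ≤ q ^ m) :
    cons d (sig q k m) = sig q (k + d * q ^ m) (m + 1) := by
  have hq0 : 0 < q := by omega
  have e0 : k + d * q ^ m - 1 = (k - 1) + d * q ^ m := by omega
  funext n
  cases n with
  | zero =>
    rw [cons_zero]
    unfold sig
    rw [if_pos (by omega : 0 < m + 1)]
    have e : m + 1 - 1 - 0 = m := by omega
    rw [e, e0, Nat.add_mul_div_right _ _ (Nat.pow_pos (n := m) hq0),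
      Nat.div_eq_of_lt (by omega : k - 1 < q ^ m), zero_add, Nat.mod_eq_of_lt hd]
  | succ n =>
    rw [cons_succ]
    unfold sig
    rcases lt_or_ge n m with hn | hn
    · rw [if_pos hn, if_pos (by omega : n + 1 < m + 1)]
      have e : m + 1 - 1 - (n + 1) = m - 1 - n := by omega
      rw [e, e0]
      have e2 : q ^ m = q ^ (n + 1) * q ^ (m - 1 - n) := by
        rw [← pow_add]; congr 1; omega
      have e3 : (k - 1) + d * q ^ m = (k - 1) + (d * q ^ (n + 1)) * q ^ (m - 1 - n) := by
        rw [e2]; ring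
      rw [e3, Nat.add_mul_div_right _ _ (Nat.pow_pos hq0)]
      have e4 : d * q ^ (n + 1) = (d * q ^ n) * q := by rw [pow_succ]; ring
      rw [e4, Nat.add_mul_mod_self_right]
    · rw [if_neg (by omega), if_neg (by omega)]

lemma tau_zero_eq (m : ℕ) : tau q 0 m = (fun _ => 0) := by
  funext n
  unfold tau
  split <;> simp

lemma cons_c0 (hq : 2 ≤ q) (d : ℕ) (hd : d < q) : cons d (fun _ => 0) = tau q d 1 := by
  funext n
  cases n with
  | zero =>
    rw [cons_zero]
    unfold tau
    rw [if_pos (by omega : 0 < 1)]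
    simp [Nat.mod_eq_of_lt hd]
  | succ n =>
    rw [cons_succ]
    unfold tau
    rw [if_neg (by omega)]

lemma cons_cQ (hq : 2 ≤ q) (d : ℕ) (hd : d < q) :
    cons d (fun _ => q - 1) = sig q (d + 1) 1 := by
  funext n
  cases n with
  | zero =>
    rw [cons_zero]
    unfold sig
    rw [if_pos (by omega : 0 < 1)]
    simp [Nat.mod_eq_of_lt hd]
  | succ n =>
    rw [cons_succ]
    unfold sig
    rw [if_neg (by omega)]

lemma pow_sub_one_div (hq : 2 ≤ q) (j m : ℕ) (h : j ≤ m) :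
    (q ^ m - 1) / q ^ j = q ^ (m - j) - 1 := by
  have hq0 : 0 < q := by omega
  have h1 : q ^ j * q ^ (m - j) = q ^ m := by rw [← pow_add]; congr 1; omega
  have h2 : 1 ≤ q ^ j := Nat.one_le_pow _ _ hq0
  have h3 : 1 ≤ q ^ (m - j) := Nat.one_le_pow _ _ hq0
  obtain ⟨a, ha⟩ : ∃ a, q ^ (m - j) = a + 1 := ⟨q ^ (m - j) - 1, by omega⟩
  have e : q ^ m - 1 = q ^ j * a + (q ^ j - 1) := by
    have : q ^ j * (a + 1) = q ^ m := by rw [← ha]; exact h1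
    have h4 : q ^ j * (a + 1) = q ^ j * a + q ^ j := by ring
    omega
  rw [e, Nat.mul_add_div (by omega : 0 < q ^ j),
    Nat.div_eq_of_lt (by omega : q ^ j - 1 < q ^ j), add_zero, ha]
  omega

lemma sig_top (hq : 2 ≤ q) (m : ℕ) : sig q (q ^ m) m = (fun _ => q - 1) := by
  have hq0 : 0 < q := by omega
  funext n
  unfold sig
  rcases lt_or_ge n m with hn | hn
  · rw [if_pos hn, pow_sub_one_div hq (m - 1 - n) m (by omega)]
    have e : m - (m - 1 - n) = n + 1 := by omega
    rw [e]
    obtain ⟨a, ha⟩ : ∃ a, q ^ n = a + 1 :=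
      ⟨q ^ n - 1, by have := Nat.one_le_pow n q (by omega); omega⟩
    have e2 : q ^ (n + 1) - 1 = (q - 1) + a * q := by
      have h4 : q ^ (n + 1) = (a + 1) * q := by rw [pow_succ, ha]
      have h5 : (a + 1) * q = a * q + q := by ring
      omega
    rw [e2, Nat.add_mul_mod_self_right, Nat.mod_eq_of_lt (by omega)]
  · rw [if_neg (by omega)]

lemma tau_red (hq : 2 ≤ q) (k m : ℕ) : tau q (k * q) (m + 1) = tau q k m := by
  have hq0 : 0 < q := by omega
  funext n
  unfold tau
  rcases lt_trichotomy n m with hn | hn | hn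
  · rw [if_pos (by omega : n < m + 1), if_pos hn]
    have e : m + 1 - 1 - n = (m - 1 - n) + 1 := by omega
    rw [e, pow_succ, Nat.mul_div_mul_right _ _ hq0]
  · subst hn
    rw [if_pos (by omega : n < n + 1), if_neg (by omega)]
    have e : n + 1 - 1 - n = 0 := by omega
    rw [e, pow_zero, Nat.div_one, Nat.mul_mod_left]
  · rw [if_neg (by omega), if_neg (by omega)]

lemma sig_red (hq : 2 ≤ q) (k m : ℕ) (h0 : 0 < k) :
    sig q (k * q) (m + 1) = sig q k m := by
  have hq0 : 0 < q := by omega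
  obtain ⟨k', rfl⟩ : ∃ k', k = k' + 1 := ⟨k - 1, by omega⟩
  have e0 : (k' + 1) * q - 1 = (q - 1) + k' * q := by
    have : (k' + 1) * q = k' * q + q := by ring
    omega
  funext n
  unfold sig
  rcases lt_trichotomy n m with hn | hn | hn
  · rw [if_pos (by omega : n < m + 1), if_pos hn]
    have e : m + 1 - 1 - n = (m - 1 - n) + 1 := by omega
    rw [e, e0]
    have e2 : ((q - 1) + k' * q) / q ^ ((m - 1 - n) + 1)
        = (k' + 1 - 1) / q ^ (m - 1 - n) := by
      rw [pow_succ, mul_comm (q ^ (m - 1 - n)) q, ← Nat.div_div_eq_div_mul,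
        Nat.add_mul_div_right _ _ hq0, Nat.div_eq_of_lt (by omega : q - 1 < q), zero_add]
      simp
    rw [e2]
  · subst hn
    rw [if_pos (by omega : n < n + 1), if_neg (by omega)]
    have e : n + 1 - 1 - n = 0 := by omega
    rw [e, pow_zero, Nat.div_one, e0, Nat.add_mul_mod_self_right,
      Nat.mod_eq_of_lt (by omega)]
  · rw [if_neg (by omega), if_neg (by omega)]

lemma tau_pow (hq : 2 ≤ q) (j : ℕ) : ∀ m, tau q (j * q ^ m) (m + 1) = tau q j 1 := by
  intro m
  induction m with
  | zero => simp
  | succ m ih =>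
    have e : j * q ^ (m + 1) = (j * q ^ m) * q := by rw [pow_succ]; ring
    rw [e, tau_red hq, ih]

lemma sig_pow (hq : 2 ≤ q) (j : ℕ) (h0 : 0 < j) :
    ∀ m, sig q (j * q ^ m) (m + 1) = sig q j 1 := by
  intro m
  induction m with
  | zero => simp
  | succ m ih =>
    have e : j * q ^ (m + 1) = (j * q ^ m) * q := by rw [pow_succ]; ring
    rw [e, sig_red hq _ _ (by positivity), ih]

lemma tau_ne_sig (hq : 2 ≤ q) (k k' m m' : ℕ) (hm : m = m')
    : tau q k m ≠ sig q k' m' := by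
  subst hm
  intro h
  have := congrFun h m
  unfold tau sig at this
  rw [if_neg (by omega), if_neg (by omega)] at this
  omega

end PfAux
namespace PfAux

variable {q : ℕ}

lemma measurable_shift : Measurable (shift) :=
  measurable_pi_lambda _ (fun n => measurable_pi_apply (n + 1))

lemma measurable_ff (hq : 2 ≤ q) : Measurable (ff q) := by
  have h : ff q = fun s : E => (∑' n : ℕ, ((s n : ℝ≥0∞) / (q : ℝ≥0∞) ^ (n + 1))).toReal := by
    funext s
    rw [ENNReal.tsum_toReal_eq]
    · unfold ff
      apply tsum_congr
      intro n
      rw [ENNReal.toReal_div]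
      simp [ENNReal.toReal_pow]
    · intro n
      exact (ENNReal.div_lt_top (by simp) (by
        apply pow_ne_zero
        simp
        omega)).ne
  rw [h]
  apply Measurable.ennreal_toReal
  apply Measurable.ennreal_tsum
  intro n
  exact ((measurable_from_top (f := fun k : ℕ => (k : ℝ≥0∞) / (q : ℝ≥0∞) ^ (n+1))).comp
    (measurable_pi_apply n))

lemma measSq : MeasurableSet (Sq q) := by
  have h : Sq q = ⋂ n, (fun s : E => s n) ⁻¹' (Set.Iio q) := by
    ext s; simp [Sq]
  rw [h]
  exact MeasurableSet.iInter (fun n => (measurable_pi_apply n) measurableSet_Iio)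

lemma congr_on_Sq (ρ : Measure E) (hρ : ρ ((Sq q)ᶜ) = 0) {A B : Set E}
    (h : ∀ s, s ∈ Sq q → (s ∈ A ↔ s ∈ B)) : ρ A = ρ B := by
  refine measure_congr ?_
  unfold Filter.EventuallyEq
  rw [Filter.eventually_iff, mem_ae_iff]
  apply measure_mono_null _ hρ
  intro x hx
  simp only [Set.mem_compl_iff, Set.mem_setOf_eq] at hx ⊢
  intro hxS
  exact hx (propext (h x hxS))

end PfAux
namespace PfAux

variable {q : ℕ}

lemma divq_le (hq : 2 ≤ q) {a b : ℝ} : a / q ≤ b / q ↔ a ≤ b :=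
  div_le_div_iff_of_pos_right (hq0R hq)

lemma measLe (hq : 2 ≤ q) (x : ℝ) : MeasurableSet {s : E | ff q s ≤ x} :=
  measurable_ff hq measurableSet_Iic

lemma measLt (hq : 2 ≤ q) (x : ℝ) : MeasurableSet {s : E | ff q s < x} :=
  measurable_ff hq measurableSet_Iio

lemma measEq (hq : 2 ≤ q) (x : ℝ) : MeasurableSet {s : E | ff q s = x} := by
  have h := measurable_ff hq (measurableSet_singleton x)
  exact h

lemma measCond (hq : 2 ≤ q) (j : ℕ) (x : ℝ) :
    MeasurableSet {s : E | s 0 = j ∧ ff q (shift s) ≤ x} := by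
  have h : {s : E | s 0 = j ∧ ff q (shift s) ≤ x}
      = ((fun s : E => s 0) ⁻¹' {j}) ∩ ((ff q ∘ shift) ⁻¹' Set.Iic x) := rfl
  rw [h]
  exact ((measurable_pi_apply 0) (measurableSet_singleton j)).inter
    (((measurable_ff hq).comp measurable_shift) measurableSet_Iic)

lemma shift_pre_null (μ : Measure E) (hnull : μ ((Sq q)ᶜ) = 0) :
    μ.map shift ((Sq q)ᶜ) = 0 := by
  rw [Measure.map_apply measurable_shift measSq.compl]
  apply measure_mono_null _ hnull
  intro s hs
  simp only [Set.mem_preimage, Set.mem_compl_iff] at *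
  intro hcon
  exact hs (fun n => hcon (n + 1))

lemma decompM (hq : 2 ≤ q) (μ : Measure E) (hnull : μ ((Sq q)ᶜ) = 0)
    (x : ℝ) (hx0 : 0 ≤ x) (hx1 : x < 1) (j : ℕ) (hj : j < q) :
    μ {s | ff q s ≤ (x + j) / q}
      = μ {s : E | s 0 < j} + μ {s | s 0 = j ∧ ff q (shift s) ≤ x} := by
  have hq0 : (0:ℝ) < q := hq0R hq
  have hstep : μ {s | ff q s ≤ (x + j) / q}
      = μ ({s : E | s 0 < j} ∪ {s | s 0 = j ∧ ff q (shift s) ≤ x}) := by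
    apply congr_on_Sq μ hnull
    intro s hs
    have hsq : ∀ n, s n < q := hs
    have hff := ff_shift hq s hsq
    have h0 : 0 ≤ ff q (shift s) := ff_nonneg _
    have h1 : ff q (shift s) ≤ 1 := ff_le_one hq _ (shift_mem s hsq)
    simp only [Set.mem_setOf_eq, Set.mem_union]
    constructor
    · intro hle
      rcases lt_trichotomy (s 0) j with hc | hc | hc
      · exact Or.inl hc
      · right
        refine ⟨hc, ?_⟩
        rw [hff, divq_le hq, hc] at hle
        linarith
      · exfalso
        have hcast : (j:ℝ) + 1 ≤ (s 0 : ℝ) := by exact_mod_cast hc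
        rw [hff, divq_le hq] at hle
        linarith
    · rintro (hc | ⟨hc, hcle⟩)
      · have hcast : (s 0 : ℝ) + 1 ≤ (j:ℝ) := by exact_mod_cast hc
        rw [hff, divq_le hq]
        linarith
      · rw [hff, divq_le hq, hc]
        linarith
  rw [hstep]
  apply measure_union _ (measCond hq j x)
  rw [Set.disjoint_left]
  intro s h1 h2
  simp only [Set.mem_setOf_eq] at h1 h2
  omega

lemma mapSum (hq : 2 ≤ q) (μ : Measure E) (hnull : μ ((Sq q)ᶜ) = 0) (x : ℝ) :
    μ.map shift {s | ff q s ≤ x}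
      = ∑ j ∈ Finset.range q, μ {s | s 0 = j ∧ ff q (shift s) ≤ x} := by
  rw [Measure.map_apply measurable_shift (measLe hq x)]
  have h1 : shift ⁻¹' {s | ff q s ≤ x} = {s : E | ff q (shift s) ≤ x} := rfl
  rw [h1]
  have h2 : μ {s : E | ff q (shift s) ≤ x}
      = μ (⋃ j ∈ Finset.range q, {s : E | s 0 = j ∧ ff q (shift s) ≤ x}) := by
    apply congr_on_Sq μ hnull
    intro s hs
    simp only [Set.mem_setOf_eq, Set.mem_iUnion, Finset.mem_range, exists_prop]
    constructor
    · intro h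
      exact ⟨s 0, hs 0, rfl, h⟩
    · rintro ⟨j, hj, hj2, h⟩
      exact h
  rw [h2, measure_biUnion_finset _ (fun j _ => measCond hq j x)]
  intro i _ j _ hij
  rw [Function.onFun, Set.disjoint_left]
  intro s h1' h2'
  simp only [Set.mem_setOf_eq] at h1' h2'
  omega

lemma sum_formula (hq : 2 ≤ q) (μ : Measure E) [IsProbabilityMeasure μ]
    (hnull : μ ((Sq q)ᶜ) = 0) (x : ℝ) (hx0 : 0 ≤ x) (hx1 : x < 1) :
    ∑ j ∈ Finset.range q,
        ((μ {s | ff q s ≤ (x + j) / q}).toReal - (μ {s | ff q s ≤ (j:ℝ) / q}).toReal)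
      = (μ.map shift {s | ff q s ≤ x}).toReal - (μ.map shift {s | ff q s ≤ 0}).toReal := by
  have hterm : ∀ j ∈ Finset.range q,
      (μ {s | ff q s ≤ (x + j) / q}).toReal - (μ {s | ff q s ≤ (j:ℝ) / q}).toReal
        = (μ {s | s 0 = j ∧ ff q (shift s) ≤ x}).toReal
          - (μ {s | s 0 = j ∧ ff q (shift s) ≤ 0}).toReal := by
    intro j hj
    rw [Finset.mem_range] at hj
    have e0 : ((j:ℝ)) / q = (0 + j) / q := by ring_nf
    rw [e0, decompM hq μ hnull x hx0 hx1 j hj,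
      decompM hq μ hnull 0 le_rfl (by norm_num) j hj,
      ENNReal.toReal_add (measure_ne_top _ _) (measure_ne_top _ _),
      ENNReal.toReal_add (measure_ne_top _ _) (measure_ne_top _ _)]
    ring
  rw [Finset.sum_congr rfl hterm, Finset.sum_sub_distrib,
    mapSum hq μ hnull x, mapSum hq μ hnull 0,
    ENNReal.toReal_sum (fun j _ => measure_ne_top _ _),
    ENNReal.toReal_sum (fun j _ => measure_ne_top _ _)]

end PfAux
namespace PfAux

variable {q : ℕ}

lemma c0_mem_Sq (hq : 2 ≤ q) : (fun _ => 0 : E) ∈ Sq q := fun _ => show 0 < q by omega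
lemma cQ_mem_Sq (hq : 2 ≤ q) : (fun _ => q - 1 : E) ∈ Sq q := fun _ => show q - 1 < q by omega

/-- `{ff ≤ 0}` coincides with the all-zero singleton, up to `Sq`-null sets. -/
lemma le_zero_sing (hq : 2 ≤ q) (ρ : Measure E) (hnull : ρ ((Sq q)ᶜ) = 0) :
    ρ {s | ff q s ≤ 0} = ρ {(fun _ => 0 : E)} := by
  apply congr_on_Sq ρ hnull
  intro s hs
  simp only [Set.mem_setOf_eq, Set.mem_singleton_iff]
  constructor
  · intro h
    have h0 : ff q s = 0 := le_antisymm h (ff_nonneg s)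
    funext n
    exact ff_eq_zero hq s hs h0 n
  · intro h
    rw [h, ff_c0]

lemma le_one_full (hq : 2 ≤ q) (ρ : Measure E) [IsProbabilityMeasure ρ]
    (hnull : ρ ((Sq q)ᶜ) = 0) : ρ {s | ff q s ≤ 1} = 1 := by
  have h : ρ {s | ff q s ≤ 1} = ρ Set.univ := by
    apply congr_on_Sq ρ hnull
    intro s hs
    simp only [Set.mem_setOf_eq, Set.mem_univ, iff_true]
    exact ff_le_one hq s hs
  rw [h, measure_univ]

lemma eq_one_sing (hq : 2 ≤ q) (ρ : Measure E) (hnull : ρ ((Sq q)ᶜ) = 0) :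
    ρ {s | ff q s = 1} = ρ {(fun _ => q - 1 : E)} := by
  apply congr_on_Sq ρ hnull
  intro s hs
  simp only [Set.mem_setOf_eq, Set.mem_singleton_iff]
  constructor
  · intro h
    funext n
    exact ff_eq_one hq s hs h n
  · intro h
    rw [h, ff_cQ hq]

lemma lt_one_split (hq : 2 ≤ q) (ρ : Measure E) [IsProbabilityMeasure ρ]
    (hnull : ρ ((Sq q)ᶜ) = 0) :
    ρ {s | ff q s < 1} + ρ {(fun _ => q - 1 : E)} = 1 := by
  rw [← eq_one_sing hq ρ hnull, ← le_one_full hq ρ hnull]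
  have hu : {s : E | ff q s ≤ 1} = {s | ff q s < 1} ∪ {s | ff q s = 1} := by
    ext s
    simp only [Set.mem_setOf_eq, Set.mem_union]
    constructor
    · intro h; rcases lt_or_eq_of_le h with h' | h'
      · exact Or.inl h'
      · exact Or.inr h'
    · rintro (h | h)
      · exact le_of_lt h
      · exact le_of_eq h
  rw [hu, measure_union _ (measEq hq 1)]
  rw [Set.disjoint_left]
  intro s h1 h2
  simp only [Set.mem_setOf_eq] at h1 h2
  linarith

lemma shift_c0 : shift (fun _ => 0 : E) = (fun _ => 0 : E) := rfl
lemma shift_cQ : shift (fun _ => q - 1 : E) = (fun _ => q - 1 : E) := rfl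

lemma mono_fixed (μ : Measure E) (x : E) (hx : shift x = x) :
    μ {x} ≤ μ.map shift {x} := by
  rw [Measure.map_apply measurable_shift (measurableSet_singleton x)]
  apply measure_mono
  intro s hs
  simp only [Set.mem_singleton_iff] at hs
  simp only [Set.mem_preimage, Set.mem_singleton_iff]
  rw [hs, hx]

/-- the atom at a base-q fraction splits into the two expansions -/
lemma pair_split (hq : 2 ≤ q) (ρ : Measure E) (hnull : ρ ((Sq q)ᶜ) = 0)
    (n k : ℕ) (h0 : 0 < k) (hk : k < q ^ n) :
    ρ {s | ff q s = (k:ℝ) / (q:ℝ) ^ n} = ρ {tau q k n} + ρ {sig q k n} := by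
  have hstep : ρ {s | ff q s = (k:ℝ) / (q:ℝ) ^ n} = ρ ({tau q k n} ∪ {sig q k n}) := by
    apply congr_on_Sq ρ hnull
    intro s hs
    simp only [Set.mem_setOf_eq, Set.mem_union, Set.mem_singleton_iff]
    constructor
    · intro h
      exact expansion hq s hs n k h0 (le_of_lt hk) h
    · rintro (h | h)
      · rw [h]; exact ff_tau hq n k hk
      · rw [h]; exact ff_sig hq n k h0 (le_of_lt hk)
  rw [hstep, measure_union _ (measurableSet_singleton _)]
  rw [Set.disjoint_left]
  intro s h1 h2
  simp only [Set.mem_singleton_iff] at h1 h2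
  exact tau_ne_sig hq k k n n rfl (h1 ▸ h2)

lemma consSum (hq : 2 ≤ q) (μ : Measure E) (hnull : μ ((Sq q)ᶜ) = 0) (x : E) :
    μ.map shift {x} = ∑ d ∈ Finset.range q, μ {cons d x} := by
  rw [Measure.map_apply measurable_shift (measurableSet_singleton x)]
  have hpre : shift ⁻¹' {x} = ⋃ d : ℕ, {cons d x} := by
    ext w
    simp only [Set.mem_preimage, Set.mem_singleton_iff, Set.mem_iUnion]
    constructor
    · intro h
      exact ⟨w 0, (shift_eq_iff w x).mp h⟩
    · rintro ⟨d, hd⟩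
      rw [hd, shift_cons]
  rw [hpre, measure_iUnion _ (fun d => measurableSet_singleton _)]
  · rw [tsum_eq_sum (s := Finset.range q)]
    intro d hd
    rw [Finset.mem_range, not_lt] at hd
    apply measure_mono_null _ hnull
    intro w hw
    simp only [Set.mem_singleton_iff] at hw
    simp only [Set.mem_compl_iff]
    intro hcon
    have := hcon 0
    rw [hw, cons_zero] at this
    omega
  · intro d d' hdd'
    simp only [Function.onFun, Set.disjoint_left]
    intro w h1 h2
    simp only [Set.mem_singleton_iff] at h1 h2
    exact hdd' (cons_inj (h1.symm.trans h2)).1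

end PfAux
namespace PfAux

variable {q : ℕ}

lemma toReal_eq_toReal_meas {a b : ℝ≥0∞} (ha : a ≠ ⊤) (hb : b ≠ ⊤)
    (h : a.toReal = b.toReal) : a = b :=
  (ENNReal.toReal_eq_toReal_iff' ha hb).mp h

lemma step1 (hq : 2 ≤ q) (μ : Measure E) [IsProbabilityMeasure μ] (hnull : μ ((Sq q)ᶜ) = 0)
    (heqR : ∀ n k : ℕ, 1 ≤ n → 0 < k → k < q ^ n →
      (μ {s | ff q s ≤ (k:ℝ)/(q:ℝ)^n}).toReal + (μ.map shift {s | ff q s ≤ 0}).toReal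
        = (μ.map shift {s | ff q s ≤ (k:ℝ)/(q:ℝ)^n}).toReal + (μ {s | ff q s ≤ 0}).toReal) :
    μ {s | ff q s ≤ 0} = μ.map shift {s | ff q s ≤ 0}
    ∧ μ {(fun _ => 0 : E)} = μ.map shift {(fun _ => 0 : E)}
    ∧ μ {(fun _ => q - 1 : E)} = μ.map shift {(fun _ => q - 1 : E)}
    ∧ (∀ n k : ℕ, 1 ≤ n → 0 < k → k < q ^ n →
        μ {s | ff q s ≤ (k:ℝ)/(q:ℝ)^n} = μ.map shift {s | ff q s ≤ (k:ℝ)/(q:ℝ)^n}) := by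
  have hq0 : (0:ℝ) < q := hq0R hq
  have hq1 : (1:ℝ) < q := hq1R hq
  set ν := μ.map shift with hν
  haveI : IsProbabilityMeasure ν := Measure.isProbabilityMeasure_map measurable_shift.aemeasurable
  have hnν : ν ((Sq q)ᶜ) = 0 := shift_pre_null μ hnull
  set A : ℕ → Set E := fun j => {s | ff q s ≤ ((q^(j+1) - 1 : ℕ):ℝ)/(q:ℝ)^(j+1)} with hA
  have hp : ∀ j : ℕ, ((q:ℝ))^(j+1) ≠ 0 := fun j => by positivity
  have hvA : ∀ j : ℕ, ((q^(j+1) - 1 : ℕ):ℝ) / (q:ℝ)^(j+1) = 1 - ((q:ℝ)⁻¹)^(j+1) := by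
    intro j
    have h1 : 1 ≤ q^(j+1) := Nat.one_le_pow _ _ (by omega)
    rw [Nat.cast_sub h1]
    push_cast
    have h2 : ((q:ℝ)⁻¹)^(j+1) = 1 / (q:ℝ)^(j+1) := by rw [inv_pow, one_div]
    rw [h2, sub_div, div_self (hp j)]
  have hiq0 : (0:ℝ) ≤ (q:ℝ)⁻¹ := by positivity
  have hiq1 : (q:ℝ)⁻¹ ≤ 1 := by
    rw [inv_le_one_iff₀]; right; linarith
  have hmA : Monotone A := by
    intro i j hij s hs
    simp only [hA, Set.mem_setOf_eq, hvA] at hs ⊢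
    have := pow_le_pow_of_le_one hiq0 hiq1 (by omega : i + 1 ≤ j + 1)
    linarith
  have hUA : (⋃ j, A j) = {s | ff q s < 1} := by
    ext s
    simp only [Set.mem_iUnion, hA, Set.mem_setOf_eq, hvA]
    constructor
    · rintro ⟨j, hj⟩
      have : (0:ℝ) < ((q:ℝ)⁻¹)^(j+1) := by positivity
      linarith
    · intro h
      obtain ⟨j, hj⟩ := exists_pow_lt_of_lt_one (sub_pos.2 h)
        (by rw [inv_lt_one_iff₀]; right; exact hq1)
      refine ⟨j, ?_⟩
      have := pow_le_pow_of_le_one hiq0 hiq1 (by omega : j ≤ j + 1)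
      linarith
  have htμ : Filter.Tendsto (fun j => (μ (A j)).toReal) Filter.atTop
      (nhds ((μ {s | ff q s < 1}).toReal)) := by
    have h := tendsto_measure_iUnion_atTop (μ := μ) hmA
    rw [hUA] at h
    exact (ENNReal.tendsto_toReal (measure_ne_top _ _)).comp h
  have htν : Filter.Tendsto (fun j => (ν (A j)).toReal) Filter.atTop
      (nhds ((ν {s | ff q s < 1}).toReal)) := by
    have h := tendsto_measure_iUnion_atTop (μ := ν) hmA
    rw [hUA] at h
    exact (ENNReal.tendsto_toReal (measure_ne_top _ _)).comp h
  have hdiffc : ∀ j : ℕ, (μ (A j)).toReal - (ν (A j)).toReal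
      = (μ {s | ff q s ≤ 0}).toReal - (ν {s | ff q s ≤ 0}).toReal := by
    intro j
    have hle : q ≤ q^(j+1) := Nat.le_self_pow (by omega) q
    have h := heqR (j+1) (q^(j+1) - 1) (by omega) (by omega) (by omega)
    have e : ((q^(j+1) - 1 : ℕ):ℝ) = ((q^(j+1) - 1 : ℕ):ℝ) := rfl
    simp only [hA, Set.mem_setOf_eq]
    push_cast at h ⊢
    linarith
  have hlim : (μ {s | ff q s < 1}).toReal - (ν {s | ff q s < 1}).toReal
      = (μ {s | ff q s ≤ 0}).toReal - (ν {s | ff q s ≤ 0}).toReal := by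
    apply tendsto_nhds_unique (htμ.sub htν)
    rw [show (fun j => (μ (A j)).toReal - (ν (A j)).toReal)
        = fun _ => ((μ {s | ff q s ≤ 0}).toReal - (ν {s | ff q s ≤ 0}).toReal)
      from funext hdiffc]
    exact tendsto_const_nhds
  have hz1 : (μ {s | ff q s ≤ 0}).toReal ≤ (ν {s | ff q s ≤ 0}).toReal := by
    rw [le_zero_sing hq μ hnull, le_zero_sing hq ν hnν]
    exact (ENNReal.toReal_le_toReal (measure_ne_top _ _) (measure_ne_top _ _)).mpr
      (mono_fixed μ _ shift_c0)
  have hsplitμ : (μ {s | ff q s < 1}).toReal + (μ {(fun _ => q - 1 : E)}).toReal = 1 := by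
    have h := lt_one_split hq μ hnull
    have h2 := congrArg ENNReal.toReal h
    rwa [ENNReal.toReal_add (measure_ne_top _ _) (measure_ne_top _ _), ENNReal.toReal_one] at h2
  have hsplitν : (ν {s | ff q s < 1}).toReal + (ν {(fun _ => q - 1 : E)}).toReal = 1 := by
    have h := lt_one_split hq ν hnν
    have h2 := congrArg ENNReal.toReal h
    rwa [ENNReal.toReal_add (measure_ne_top _ _) (measure_ne_top _ _), ENNReal.toReal_one] at h2
  have hcq : (μ {(fun _ => q - 1 : E)}).toReal ≤ (ν {(fun _ => q - 1 : E)}).toReal :=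
    (ENNReal.toReal_le_toReal (measure_ne_top _ _) (measure_ne_top _ _)).mpr
      (mono_fixed μ _ shift_cQ)
  have e1 : (μ {s | ff q s ≤ 0}).toReal = (ν {s | ff q s ≤ 0}).toReal := by linarith
  have e1' : μ {s | ff q s ≤ 0} = ν {s | ff q s ≤ 0} :=
    toReal_eq_toReal_meas (measure_ne_top _ _) (measure_ne_top _ _) e1
  have e2 : μ {(fun _ => q - 1 : E)} = ν {(fun _ => q - 1 : E)} :=
    toReal_eq_toReal_meas (measure_ne_top _ _) (measure_ne_top _ _) (by linarith)
  have e3 : μ {(fun _ => 0 : E)} = ν {(fun _ => 0 : E)} := by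
    rw [← le_zero_sing hq μ hnull, ← le_zero_sing hq ν hnν]
    exact e1'
  refine ⟨e1', e3, e2, ?_⟩
  intro n k hn h0 hk
  have h := heqR n k hn h0 hk
  apply toReal_eq_toReal_meas (measure_ne_top _ _) (measure_ne_top _ _)
  show (μ _).toReal = (ν _).toReal
  linarith

end PfAux
namespace PfAux

variable {q : ℕ}

lemma le_split (hq : 2 ≤ q) (ρ : Measure E) (t : ℝ) :
    ρ {s | ff q s ≤ t} = ρ {s | ff q s < t} + ρ {s | ff q s = t} := by
  have hu : {s : E | ff q s ≤ t} = {s | ff q s < t} ∪ {s | ff q s = t} := by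
    ext s
    simp only [Set.mem_setOf_eq, Set.mem_union]
    exact le_iff_lt_or_eq
  rw [hu, measure_union _ (measEq hq t)]
  rw [Set.disjoint_left]
  intro s h1 h2
  simp only [Set.mem_setOf_eq] at h1 h2
  linarith

lemma step2 (hq : 2 ≤ q) (μ : Measure E) [IsProbabilityMeasure μ] (hnull : μ ((Sq q)ᶜ) = 0)
    (hLe : ∀ n k : ℕ, 1 ≤ n → 0 < k → k < q ^ n →
      μ {s | ff q s ≤ (k:ℝ)/(q:ℝ)^n} = μ.map shift {s | ff q s ≤ (k:ℝ)/(q:ℝ)^n}) :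
    ∀ n k : ℕ, 1 ≤ n → 0 < k → k ≤ q ^ n →
      μ {s | ff q s < (k:ℝ)/(q:ℝ)^n} = μ.map shift {s | ff q s < (k:ℝ)/(q:ℝ)^n} := by
  intro n k hn h0 hk
  have hq0 : (0:ℝ) < q := hq0R hq
  have hq1 : (1:ℝ) < q := hq1R hq
  set ν := μ.map shift with hν
  set B : ℕ → Set E :=
    fun j => {s | ff q s ≤ ((k * q^(j+1) - 1 : ℕ):ℝ)/(q:ℝ)^(n+(j+1))} with hB
  have hkq : ∀ j : ℕ, q ≤ k * q^(j+1) := by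
    intro j
    have h1 : q ≤ q^(j+1) := Nat.le_self_pow (by omega) q
    have h2 : q^(j+1) ≤ k * q^(j+1) := Nat.le_mul_of_pos_left _ h0
    omega
  have hklt : ∀ j : ℕ, k * q^(j+1) ≤ q^(n+(j+1)) := by
    intro j
    calc k * q^(j+1) ≤ q^n * q^(j+1) := Nat.mul_le_mul_right _ hk
    _ = q^(n+(j+1)) := (pow_add q n (j+1)).symm
  have hvB : ∀ j : ℕ, ((k * q^(j+1) - 1 : ℕ):ℝ)/(q:ℝ)^(n+(j+1))
      = (k:ℝ)/(q:ℝ)^n - ((q:ℝ)⁻¹)^(n+(j+1)) := by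
    intro j
    have h1 : 1 ≤ k * q^(j+1) := by have := hkq j; omega
    rw [Nat.cast_sub h1]
    push_cast
    rw [sub_div]
    congr 1
    · have e : ((q:ℝ))^(n+(j+1)) = (q:ℝ)^n * (q:ℝ)^(j+1) := pow_add (q:ℝ) n (j+1)
      rw [e, mul_div_mul_right _ _ (by positivity : ((q:ℝ))^(j+1) ≠ 0)]
    · rw [inv_pow, one_div]
  have hiq0 : (0:ℝ) ≤ (q:ℝ)⁻¹ := by positivity
  have hiq1 : (q:ℝ)⁻¹ ≤ 1 := by rw [inv_le_one_iff₀]; right; linarith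
  have hmB : Monotone B := by
    intro i j hij s hs
    simp only [hB, Set.mem_setOf_eq, hvB] at hs ⊢
    have := pow_le_pow_of_le_one hiq0 hiq1 (by omega : n + (i+1) ≤ n + (j+1))
    linarith
  have hUB : (⋃ j, B j) = {s | ff q s < (k:ℝ)/(q:ℝ)^n} := by
    ext s
    simp only [Set.mem_iUnion, hB, Set.mem_setOf_eq, hvB]
    constructor
    · rintro ⟨j, hj⟩
      have : (0:ℝ) < ((q:ℝ)⁻¹)^(n+(j+1)) := by positivity
      linarith
    · intro h
      obtain ⟨j, hj⟩ := exists_pow_lt_of_lt_one (sub_pos.2 h)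
        (by rw [inv_lt_one_iff₀]; right; exact hq1)
      refine ⟨j, ?_⟩
      have := pow_le_pow_of_le_one hiq0 hiq1 (by omega : j ≤ n + (j+1))
      linarith
  have hBeq : ∀ j, μ (B j) = ν (B j) := by
    intro j
    exact hLe (n+(j+1)) (k * q^(j+1) - 1) (by omega) (by have := hkq j; omega)
      (by have := hklt j; have h2 : 1 ≤ q^(n+(j+1)) := Nat.one_le_pow _ _ (by omega); omega)
  rw [← hUB]
  rw [hmB.directed_le.measure_iUnion, hmB.directed_le.measure_iUnion]
  exact iSup_congr hBeq

lemma atomEq (hq : 2 ≤ q) (μ : Measure E) [IsProbabilityMeasure μ] (hnull : μ ((Sq q)ᶜ) = 0)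
    (hLe : ∀ n k : ℕ, 1 ≤ n → 0 < k → k < q ^ n →
      μ {s | ff q s ≤ (k:ℝ)/(q:ℝ)^n} = μ.map shift {s | ff q s ≤ (k:ℝ)/(q:ℝ)^n}) :
    ∀ n k : ℕ, 1 ≤ n → 0 < k → k ≤ q ^ n →
      μ {s | ff q s = (k:ℝ)/(q:ℝ)^n} = μ.map shift {s | ff q s = (k:ℝ)/(q:ℝ)^n} := by
  intro n k hn h0 hk
  set ν := μ.map shift with hν
  haveI : IsProbabilityMeasure ν := Measure.isProbabilityMeasure_map measurable_shift.aemeasurable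
  have hnν : ν ((Sq q)ᶜ) = 0 := shift_pre_null μ hnull
  have hLe' : μ {s | ff q s ≤ (k:ℝ)/(q:ℝ)^n} = ν {s | ff q s ≤ (k:ℝ)/(q:ℝ)^n} := by
    rcases lt_or_eq_of_le hk with h | h
    · exact hLe n k hn h0 h
    · have ht : (k:ℝ)/(q:ℝ)^n = 1 := by
        rw [h]
        push_cast
        exact div_self (by positivity)
      simp only [ht]
      rw [le_one_full hq μ hnull, le_one_full hq ν hnν]
  have hLt := step2 hq μ hnull hLe n k hn h0 hk
  rw [le_split hq μ, le_split hq ν] at hLe'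
  rw [hLt] at hLe'
  exact (ENNReal.add_right_inj (measure_ne_top _ _)).mp hLe'

lemma sum_range_mul {M : Type*} [AddCommMonoid M] (f : ℕ → M) (D b : ℕ) :
    ∑ k ∈ Finset.range (D * b), f k
      = ∑ d ∈ Finset.range b, ∑ k ∈ Finset.range D, f (k + d * D) := by
  induction b with
  | zero => simp
  | succ b ih =>
    rw [Nat.mul_succ, Finset.sum_range_add, ih, Finset.sum_range_succ]
    congr 1
    apply Finset.sum_congr rfl
    intro k _
    congr 1
    ring

lemma tauSum (hq : 2 ≤ q) (μ : Measure E) (hnull : μ ((Sq q)ᶜ) = 0) (n k : ℕ)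
    (hk : k < q ^ n) :
    μ.map shift {tau q k n} = ∑ d ∈ Finset.range q, μ {tau q (k + d * q ^ n) (n + 1)} := by
  rw [consSum hq μ hnull (tau q k n)]
  apply Finset.sum_congr rfl
  intro d hd
  rw [Finset.mem_range] at hd
  rw [cons_tau hq d k n hd hk]

lemma sigSum (hq : 2 ≤ q) (μ : Measure E) (hnull : μ ((Sq q)ᶜ) = 0) (n k : ℕ)
    (h0 : 0 < k) (hk : k ≤ q ^ n) :
    μ.map shift {sig q k n} = ∑ d ∈ Finset.range q, μ {sig q (k + d * q ^ n) (n + 1)} := by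
  rw [consSum hq μ hnull (sig q k n)]
  apply Finset.sum_congr rfl
  intro d hd
  rw [Finset.mem_range] at hd
  rw [cons_sig hq d k n hd h0 hk]

lemma Wzero (hq : 2 ≤ q) (μ : Measure E) [IsProbabilityMeasure μ] (hnull : μ ((Sq q)ᶜ) = 0)
    (hC0 : μ {(fun _ => 0 : E)} = μ.map shift {(fun _ => 0 : E)})
    (hCQ : μ {(fun _ => q - 1 : E)} = μ.map shift {(fun _ => q - 1 : E)})
    (hAtom : ∀ n k : ℕ, 1 ≤ n → 0 < k → k ≤ q ^ n →
      μ {s | ff q s = (k:ℝ)/(q:ℝ)^n} = μ.map shift {s | ff q s = (k:ℝ)/(q:ℝ)^n}) :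
    ∀ n k : ℕ, 0 < k → k < q ^ n → μ {tau q k n} = 0 ∧ μ {sig q k n} = 0 := by
  set ν := μ.map shift with hν
  have hnν : ν ((Sq q)ᶜ) = 0 := shift_pre_null μ hnull
  have hrel : ∀ n k : ℕ, 0 < k → k < q ^ n →
      μ {tau q k n} + μ {sig q k n}
        = ∑ d ∈ Finset.range q,
            (μ {tau q (k + d * q ^ n) (n + 1)} + μ {sig q (k + d * q ^ n) (n + 1)}) := by
    intro n k h0 hk
    have hn1 : 1 ≤ n := by
      rcases Nat.eq_zero_or_pos n with h | h
      · subst h; simp at hk; omega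
      · exact h
    have h1 := hAtom n k hn1 h0 (le_of_lt hk)
    rw [pair_split hq μ hnull n k h0 hk, pair_split hq ν hnν n k h0 hk] at h1
    rw [h1, tauSum hq μ hnull n k hk, sigSum hq μ hnull n k h0 (le_of_lt hk),
      Finset.sum_add_distrib]
  have hrangesplit : Finset.range q = insert 0 (Finset.Ico 1 q) := by
    ext x
    simp only [Finset.mem_range, Finset.mem_insert, Finset.mem_Ico]
    omega
  have hbaseT : ∑ d ∈ Finset.Ico 1 q, μ {tau q d 1} = 0 := by
    have h := consSum hq μ hnull (fun _ => 0 : E)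
    have h2 : ∀ d ∈ Finset.range q, μ {cons d (fun _ => 0 : E)} = μ {tau q d 1} := by
      intro d hd
      rw [Finset.mem_range] at hd
      rw [cons_c0 hq d hd]
    rw [Finset.sum_congr rfl h2, hrangesplit, Finset.sum_insert (by simp)] at h
    rw [tau_zero_eq, ← hC0] at h
    have h3 : μ {(fun _ => 0 : E)} + 0 = μ {(fun _ => 0 : E)} + ∑ d ∈ Finset.Ico 1 q, μ {tau q d 1} := by
      simpa using h
    exact ((ENNReal.add_right_inj (measure_ne_top _ _)).mp h3).symm
  have hbaseS : ∑ d ∈ Finset.Ico 1 q, μ {sig q d 1} = 0 := by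
    have h := consSum hq μ hnull (fun _ => q - 1 : E)
    have h2 : ∀ d ∈ Finset.range q, μ {cons d (fun _ => q - 1 : E)} = μ {sig q (d+1) 1} := by
      intro d hd
      rw [Finset.mem_range] at hd
      rw [cons_cQ hq d hd]
    rw [Finset.sum_congr rfl h2] at h
    have h3 : ∑ d ∈ Finset.range q, μ {sig q (d+1) 1} = ∑ j ∈ Finset.Ico 1 (q+1), μ {sig q j 1} := by
      rw [Finset.sum_Ico_eq_sum_range]
      simp only [Nat.add_sub_cancel]
      apply Finset.sum_congr rfl
      intro i _
      rw [add_comm 1 i]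
    have h4 : ∑ j ∈ Finset.Ico 1 (q+1), μ {sig q j 1}
        = ∑ j ∈ Finset.Ico 1 q, μ {sig q j 1} + μ {sig q q 1} :=
      Finset.sum_Ico_succ_top (by omega) _
    have h5 : sig q q 1 = (fun _ => q - 1 : E) := by
      have h6 := sig_top hq 1
      rw [pow_one] at h6
      exact h6
    rw [h3, h4, h5, ← hCQ] at h
    have h7 : μ {(fun _ => q - 1 : E)} + 0
        = μ {(fun _ => q - 1 : E)} + ∑ j ∈ Finset.Ico 1 q, μ {sig q j 1} := by
      rw [add_comm (μ {(fun _ => q - 1 : E)}) (∑ j ∈ Finset.Ico 1 q, μ {sig q j 1})]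
      simpa using h
    exact ((ENNReal.add_right_inj (measure_ne_top _ _)).mp h7).symm
  have hbase1 : ∑ k ∈ Finset.Ico 1 (q ^ 1), (μ {tau q k 1} + μ {sig q k 1}) = 0 := by
    rw [pow_one, Finset.sum_add_distrib, hbaseT, hbaseS, add_zero]
  have hS : ∀ n, 1 ≤ n → ∑ k ∈ Finset.Ico 1 (q ^ n), (μ {tau q k n} + μ {sig q k n}) = 0 := by
    intro n hn
    induction n with
    | zero => omega
    | succ m ih =>
      rcases Nat.eq_zero_or_pos m with hm | hm
      · subst hm
        exact hbase1
      · have ihm := ih hm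
        have hA : ∑ k' ∈ Finset.range (q ^ (m+1)), (μ {tau q k' (m+1)} + μ {sig q k' (m+1)})
            = (μ {tau q 0 (m+1)} + μ {sig q 0 (m+1)})
              + ∑ k' ∈ Finset.Ico 1 (q ^ (m+1)), (μ {tau q k' (m+1)} + μ {sig q k' (m+1)}) := by
          rw [show Finset.range (q ^ (m+1)) = insert 0 (Finset.Ico 1 (q ^ (m+1))) by
              ext x
              simp only [Finset.mem_range, Finset.mem_insert, Finset.mem_Ico]
              have : 0 < q ^ (m+1) := Nat.pow_pos (by omega)
              omega,
            Finset.sum_insert (by simp)]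
        have hB : ∑ k' ∈ Finset.range (q ^ (m+1)), (μ {tau q k' (m+1)} + μ {sig q k' (m+1)})
            = ∑ d ∈ Finset.range q, ∑ k ∈ Finset.range (q ^ m),
                (μ {tau q (k + d * q ^ m) (m+1)} + μ {sig q (k + d * q ^ m) (m+1)}) := by
          rw [pow_succ]
          exact sum_range_mul _ (q ^ m) q
        have hC : ∀ d ∈ Finset.range q, ∑ k ∈ Finset.range (q ^ m),
              (μ {tau q (k + d * q ^ m) (m+1)} + μ {sig q (k + d * q ^ m) (m+1)})
            = (μ {tau q (d * q ^ m) (m+1)} + μ {sig q (d * q ^ m) (m+1)})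
              + ∑ k ∈ Finset.Ico 1 (q ^ m),
                  (μ {tau q (k + d * q ^ m) (m+1)} + μ {sig q (k + d * q ^ m) (m+1)}) := by
          intro d _
          have hqm1 : 0 < q ^ m := Nat.pow_pos (n := m) (by omega)
          rw [show Finset.range (q ^ m) = insert 0 (Finset.Ico 1 (q ^ m)) by
              ext x
              simp only [Finset.mem_range, Finset.mem_insert, Finset.mem_Ico]
              omega,
            Finset.sum_insert (by simp)]
          rw [zero_add]
        have hD : ∑ d ∈ Finset.range q, ∑ k ∈ Finset.Ico 1 (q ^ m),
              (μ {tau q (k + d * q ^ m) (m+1)} + μ {sig q (k + d * q ^ m) (m+1)})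
            = ∑ k ∈ Finset.Ico 1 (q ^ m), (μ {tau q k m} + μ {sig q k m}) := by
          rw [Finset.sum_comm]
          apply Finset.sum_congr rfl
          intro k hk
          rw [Finset.mem_Ico] at hk
          have hkq : k < q ^ m := hk.2
          exact (hrel m k (by omega) hkq).symm
        have hE : ∑ d ∈ Finset.range q,
              (μ {tau q (d * q ^ m) (m+1)} + μ {sig q (d * q ^ m) (m+1)})
            = (μ {tau q 0 (m+1)} + μ {sig q 0 (m+1)}) + 0 := by
          rw [hrangesplit, Finset.sum_insert (by simp)]
          congr 1
          · rw [zero_mul]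
          · calc ∑ d ∈ Finset.Ico 1 q,
                  (μ {tau q (d * q ^ m) (m+1)} + μ {sig q (d * q ^ m) (m+1)})
                = ∑ d ∈ Finset.Ico 1 q, (μ {tau q d 1} + μ {sig q d 1}) := by
                  apply Finset.sum_congr rfl
                  intro d hd
                  rw [Finset.mem_Ico] at hd
                  rw [tau_pow hq d m, sig_pow hq d (by omega) m]
              _ = 0 := by rw [Finset.sum_add_distrib, hbaseT, hbaseS, add_zero]
        have key : (μ {tau q 0 (m+1)} + μ {sig q 0 (m+1)})
              + ∑ k' ∈ Finset.Ico 1 (q ^ (m+1)), (μ {tau q k' (m+1)} + μ {sig q k' (m+1)})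
            = (μ {tau q 0 (m+1)} + μ {sig q 0 (m+1)}) + 0 := by
          calc (μ {tau q 0 (m+1)} + μ {sig q 0 (m+1)})
                + ∑ k' ∈ Finset.Ico 1 (q ^ (m+1)), (μ {tau q k' (m+1)} + μ {sig q k' (m+1)})
              = ∑ k' ∈ Finset.range (q ^ (m+1)), (μ {tau q k' (m+1)} + μ {sig q k' (m+1)}) :=
                hA.symm
            _ = ∑ d ∈ Finset.range q, ∑ k ∈ Finset.range (q ^ m),
                  (μ {tau q (k + d * q ^ m) (m+1)} + μ {sig q (k + d * q ^ m) (m+1)}) := hB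
            _ = ∑ d ∈ Finset.range q,
                  ((μ {tau q (d * q ^ m) (m+1)} + μ {sig q (d * q ^ m) (m+1)})
                    + ∑ k ∈ Finset.Ico 1 (q ^ m),
                        (μ {tau q (k + d * q ^ m) (m+1)} + μ {sig q (k + d * q ^ m) (m+1)})) :=
                Finset.sum_congr rfl hC
            _ = ∑ d ∈ Finset.range q,
                  (μ {tau q (d * q ^ m) (m+1)} + μ {sig q (d * q ^ m) (m+1)})
                + ∑ d ∈ Finset.range q, ∑ k ∈ Finset.Ico 1 (q ^ m),
                    (μ {tau q (k + d * q ^ m) (m+1)} + μ {sig q (k + d * q ^ m) (m+1)}) :=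
                Finset.sum_add_distrib
            _ = ((μ {tau q 0 (m+1)} + μ {sig q 0 (m+1)}) + 0)
                + ∑ k ∈ Finset.Ico 1 (q ^ m), (μ {tau q k m} + μ {sig q k m}) := by
                rw [hE, hD]
            _ = (μ {tau q 0 (m+1)} + μ {sig q 0 (m+1)}) + 0 := by
                rw [ihm]
                simp
        exact (ENNReal.add_right_inj
          (ENNReal.add_ne_top.mpr ⟨measure_ne_top _ _, measure_ne_top _ _⟩)).mp key
  intro n k h0 hk
  have hn1 : 1 ≤ n := by
    rcases Nat.eq_zero_or_pos n with h | h
    · subst h; simp at hk; omega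
    · exact h
  have hmem : k ∈ Finset.Ico 1 (q ^ n) := by rw [Finset.mem_Ico]; omega
  have hterm := (Finset.sum_eq_zero_iff.mp (hS n hn1)) k hmem
  exact add_eq_zero.mp hterm

end PfAux
namespace PfAux

variable {q : ℕ}

lemma child_lt (hq : 2 ≤ q) {m k d : ℕ} (hk : k < q ^ m) (hd : d < q) :
    k + d * q ^ m < q ^ (m + 1) := by
  have e2 : (d + 1) * q ^ m = d * q ^ m + q ^ m := by ring
  have h1 : (d + 1) * q ^ m ≤ q * q ^ m := Nat.mul_le_mul_right _ (by omega)
  have e3 : q ^ (m + 1) = q * q ^ m := by rw [pow_succ]; ring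
  omega

lemma nu_tau_zero (hq : 2 ≤ q) (μ : Measure E) (hnull : μ ((Sq q)ᶜ) = 0)
    (hZ : ∀ n k : ℕ, 0 < k → k < q ^ n → μ {tau q k n} = 0 ∧ μ {sig q k n} = 0)
    (m k : ℕ) (h0 : 0 < k) (hk : k < q ^ m) : μ.map shift {tau q k m} = 0 := by
  rw [tauSum hq μ hnull m k hk]
  apply Finset.sum_eq_zero
  intro d hd
  rw [Finset.mem_range] at hd
  exact (hZ (m+1) (k + d * q ^ m) (by omega) (child_lt hq hk hd)).1

lemma nu_sig_zero (hq : 2 ≤ q) (μ : Measure E) (hnull : μ ((Sq q)ᶜ) = 0)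
    (hZ : ∀ n k : ℕ, 0 < k → k < q ^ n → μ {tau q k n} = 0 ∧ μ {sig q k n} = 0)
    (m k : ℕ) (h0 : 0 < k) (hk : k < q ^ m) : μ.map shift {sig q k m} = 0 := by
  rw [sigSum hq μ hnull m k h0 (le_of_lt hk)]
  apply Finset.sum_eq_zero
  intro d hd
  rw [Finset.mem_range] at hd
  exact (hZ (m+1) (k + d * q ^ m) (by omega) (child_lt hq hk hd)).2

lemma cyl_eq (hq : 2 ≤ q) (μ : Measure E) [IsProbabilityMeasure μ] (hnull : μ ((Sq q)ᶜ) = 0)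
    (hF0 : μ {s | ff q s ≤ 0} = μ.map shift {s | ff q s ≤ 0})
    (hC0 : μ {(fun _ => 0 : E)} = μ.map shift {(fun _ => 0 : E)})
    (hCQ : μ {(fun _ => q - 1 : E)} = μ.map shift {(fun _ => q - 1 : E)})
    (hLe : ∀ n k : ℕ, 1 ≤ n → 0 < k → k < q ^ n →
      μ {s | ff q s ≤ (k:ℝ)/(q:ℝ)^n} = μ.map shift {s | ff q s ≤ (k:ℝ)/(q:ℝ)^n})
    (hLt : ∀ n k : ℕ, 1 ≤ n → 0 < k → k ≤ q ^ n →
      μ {s | ff q s < (k:ℝ)/(q:ℝ)^n} = μ.map shift {s | ff q s < (k:ℝ)/(q:ℝ)^n})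
    (hZ : ∀ n k : ℕ, 0 < k → k < q ^ n → μ {tau q k n} = 0 ∧ μ {sig q k n} = 0)
    (m : ℕ) (hm : 1 ≤ m) (a : ℕ → ℕ) (ha : ∀ i, i < m → a i < q) :
    μ {s | ∀ i, i < m → s i = a i} = μ.map shift {s | ∀ i, i < m → s i = a i} := by
  have hq0 : (0:ℝ) < q := hq0R hq
  set ν := μ.map shift with hν
  haveI : IsProbabilityMeasure ν := Measure.isProbabilityMeasure_map measurable_shift.aemeasurable
  have hnν : ν ((Sq q)ᶜ) = 0 := shift_pre_null μ hnull
  set k := val q m a with hk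
  have hklt : k < q ^ m := val_lt m a ha
  have hqm : (0:ℝ) < (q:ℝ) ^ m := by positivity
  have hcast1 : ((k + 1 : ℕ) : ℝ) = (k:ℝ) + 1 := by push_cast; ring
  have hfftau : ff q (tau q k m) = (k:ℝ)/(q:ℝ)^m := ff_tau hq m k hklt
  have hffsig : ff q (sig q (k + 1) m) = ((k + 1 : ℕ):ℝ)/(q:ℝ)^m :=
    ff_sig hq m (k + 1) (by omega) (by omega)
  have htns : tau q k m ≠ sig q (k + 1) m := tau_ne_sig hq k (k + 1) m m rfl
  have hsetC : ∀ s, s ∈ Sq q →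
      ((∀ i, i < m → s i = a i) ↔
        (((k:ℝ)/(q:ℝ)^m < ff q s ∧ ff q s < ((k + 1 : ℕ):ℝ)/(q:ℝ)^m)
          ∨ s = tau q k m ∨ s = sig q (k + 1) m)) := by
    intro s hs
    have hsq : ∀ n, s n < q := hs
    have hmem : ∀ n, (shift^[m] s) n < q := fun n => by rw [shift_iter]; exact hsq _
    have hpre := ff_prefix hq s hsq m
    have hr0 : 0 ≤ ff q (shift^[m] s) := ff_nonneg _
    have hr1 : ff q (shift^[m] s) ≤ 1 := ff_le_one hq _ hmem
    constructor
    · intro hsa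
      have hvs : val q m s = k := by
        rw [hk]
        exact val_congr m (fun i hi => hsa i hi)
      rw [hvs] at hpre
      rcases eq_or_lt_of_le hr0 with hz | hpos
      · right; left
        have htail := ff_eq_zero hq _ hmem hz.symm
        funext n
        rcases lt_or_ge n m with hn | hn
        · unfold tau
          rw [if_pos hn, ← hvs]
          exact (dig_val m s (fun i _ => hsq i) n hn).symm
        · unfold tau
          rw [if_neg (by omega)]
          have h6 := htail (n - m)
          rw [shift_iter, show n - m + m = n by omega] at h6
          exact h6
      · rcases eq_or_lt_of_le hr1 with ho | hlt1
        · right; right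
          have htail := ff_eq_one hq _ hmem ho
          funext n
          rcases lt_or_ge n m with hn | hn
          · unfold sig
            rw [if_pos hn, show k + 1 - 1 = k by omega, ← hvs]
            exact (dig_val m s (fun i _ => hsq i) n hn).symm
          · unfold sig
            rw [if_neg (by omega)]
            have h6 := htail (n - m)
            rw [shift_iter, show n - m + m = n by omega] at h6
            exact h6
        · left
          rw [hpre, hcast1]
          have hrq : 0 < ff q (shift^[m] s) / (q:ℝ)^m := div_pos hpos hqm
          constructor
          · linarith
          · rw [← add_div]
            exact (div_lt_div_iff_of_pos_right hqm).mpr (by linarith)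
    · rintro (⟨h1, h2⟩ | h | h)
      · intro i hi
        have hKr1 : (k:ℝ) < (val q m s : ℝ) + ff q (shift^[m] s) := by
          rw [hpre, ← add_div] at h1
          exact (div_lt_div_iff_of_pos_right hqm).mp h1
        have hKr2 : (val q m s : ℝ) + ff q (shift^[m] s) < (k:ℝ) + 1 := by
          rw [hpre, ← add_div] at h2
          have h3 := (div_lt_div_iff_of_pos_right hqm).mp h2
          rwa [hcast1] at h3
        have hge : k ≤ val q m s := by
          by_contra hcon
          push_neg at hcon
          have : (val q m s : ℝ) + 1 ≤ (k:ℝ) := by exact_mod_cast hcon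
          linarith
        have hle : val q m s ≤ k := by
          by_contra hcon
          push_neg at hcon
          have : (k:ℝ) + 1 ≤ (val q m s : ℝ) := by exact_mod_cast hcon
          linarith
        have hvs : val q m s = val q m a := by omega
        have e1 := dig_val m s (fun i' _ => hsq i') i hi
        have e2 := dig_val m a (fun i' hi' => ha i' hi') i hi
        rw [← e1, ← e2, hvs]
      · intro i hi
        rw [h]
        unfold tau
        rw [if_pos hi, hk]
        exact dig_val m a (fun i' hi' => ha i' hi') i hi
      · intro i hi
        rw [h]
        unfold sig
        rw [if_pos hi, show k + 1 - 1 = k by omega, hk]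
        exact dig_val m a (fun i' hi' => ha i' hi') i hi
  have hmeasMid : MeasurableSet
      {s : E | (k:ℝ)/(q:ℝ)^m < ff q s ∧ ff q s < ((k + 1 : ℕ):ℝ)/(q:ℝ)^m} := by
    have h := measurable_ff hq (measurableSet_Ioo
      (a := (k:ℝ)/(q:ℝ)^m) (b := ((k + 1 : ℕ):ℝ)/(q:ℝ)^m))
    exact h
  have main : ∀ (ρ : Measure E), ρ ((Sq q)ᶜ) = 0 →
      ρ {s | ∀ i, i < m → s i = a i} + ρ {s | ff q s ≤ (k:ℝ)/(q:ℝ)^m}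
        = ρ {s | ff q s < ((k + 1 : ℕ):ℝ)/(q:ℝ)^m}
          + (ρ {tau q k m} + ρ {sig q (k + 1) m}) := by
    intro ρ hρn
    have hC : ρ {s | ∀ i, i < m → s i = a i}
        = ρ (({s | (k:ℝ)/(q:ℝ)^m < ff q s ∧ ff q s < ((k + 1 : ℕ):ℝ)/(q:ℝ)^m}
            ∪ {tau q k m}) ∪ {sig q (k + 1) m}) := by
      apply congr_on_Sq ρ hρn
      intro s hs
      have h := hsetC s hs
      simp only [Set.mem_setOf_eq, Set.mem_union, Set.mem_singleton_iff]
      rw [h]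
      tauto
    have hsplit2 : ρ (({s | (k:ℝ)/(q:ℝ)^m < ff q s ∧ ff q s < ((k + 1 : ℕ):ℝ)/(q:ℝ)^m}
          ∪ {tau q k m}) ∪ {sig q (k + 1) m})
        = ρ ({s | (k:ℝ)/(q:ℝ)^m < ff q s ∧ ff q s < ((k + 1 : ℕ):ℝ)/(q:ℝ)^m}
            ∪ {tau q k m}) + ρ {sig q (k + 1) m} := by
      apply measure_union _ (measurableSet_singleton _)
      rw [Set.disjoint_left]
      intro s hsl
      simp only [Set.mem_union, Set.mem_setOf_eq, Set.mem_singleton_iff] at hsl ⊢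
      intro hse
      rcases hsl with ⟨_, hlt⟩ | heq
      · rw [hse, hffsig] at hlt
        exact lt_irrefl _ hlt
      · exact htns (heq ▸ hse)
    have hsplit1 : ρ ({s | (k:ℝ)/(q:ℝ)^m < ff q s ∧ ff q s < ((k + 1 : ℕ):ℝ)/(q:ℝ)^m}
          ∪ {tau q k m})
        = ρ {s | (k:ℝ)/(q:ℝ)^m < ff q s ∧ ff q s < ((k + 1 : ℕ):ℝ)/(q:ℝ)^m}
          + ρ {tau q k m} := by
      apply measure_union _ (measurableSet_singleton _)
      rw [Set.disjoint_left]
      intro s hsl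
      simp only [Set.mem_setOf_eq, Set.mem_singleton_iff] at hsl ⊢
      intro hse
      rw [hse, hfftau] at hsl
      exact lt_irrefl _ hsl.1
    have hMid : ρ {s | ff q s < ((k + 1 : ℕ):ℝ)/(q:ℝ)^m}
        = ρ {s | ff q s ≤ (k:ℝ)/(q:ℝ)^m}
          + ρ {s | (k:ℝ)/(q:ℝ)^m < ff q s ∧ ff q s < ((k + 1 : ℕ):ℝ)/(q:ℝ)^m} := by
      have hu : {s : E | ff q s < ((k + 1 : ℕ):ℝ)/(q:ℝ)^m}
          = {s | ff q s ≤ (k:ℝ)/(q:ℝ)^m}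
            ∪ {s | (k:ℝ)/(q:ℝ)^m < ff q s ∧ ff q s < ((k + 1 : ℕ):ℝ)/(q:ℝ)^m} := by
        ext s
        simp only [Set.mem_setOf_eq, Set.mem_union]
        constructor
        · intro hlt
          rcases le_or_gt (ff q s) ((k:ℝ)/(q:ℝ)^m) with h | h
          · exact Or.inl h
          · exact Or.inr ⟨h, hlt⟩
        · rintro (h | ⟨_, h⟩)
          · have ht01 : (k:ℝ)/(q:ℝ)^m < ((k + 1 : ℕ):ℝ)/(q:ℝ)^m := by
              rw [hcast1]
              exact (div_lt_div_iff_of_pos_right hqm).mpr (by linarith)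
            linarith
          · exact h
      rw [hu]
      apply measure_union _ hmeasMid
      rw [Set.disjoint_left]
      intro s h1 h2
      simp only [Set.mem_setOf_eq] at h1 h2
      linarith [h2.1]
    rw [hC, hsplit2, hsplit1, hMid]
    ring
  have h1 := main μ hnull
  have h2 := main ν hnν
  have eLt : μ {s | ff q s < ((k + 1 : ℕ):ℝ)/(q:ℝ)^m}
      = ν {s | ff q s < ((k + 1 : ℕ):ℝ)/(q:ℝ)^m} :=
    hLt m (k + 1) hm (by omega) (by omega)
  have eLe : μ {s | ff q s ≤ (k:ℝ)/(q:ℝ)^m} = ν {s | ff q s ≤ (k:ℝ)/(q:ℝ)^m} := by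
    rcases Nat.eq_zero_or_pos k with h0 | h0
    · have e : ((k:ℕ):ℝ)/(q:ℝ)^m = (0:ℝ) := by rw [h0]; simp
      rw [show {s : E | ff q s ≤ (k:ℝ)/(q:ℝ)^m} = {s : E | ff q s ≤ 0} by rw [e]]
      exact hF0
    · exact hLe m k hm h0 hklt
  have eTau : μ {tau q k m} = ν {tau q k m} := by
    rcases Nat.eq_zero_or_pos k with h0 | h0
    · rw [h0, tau_zero_eq]
      exact hC0
    · rw [(hZ m k h0 hklt).1, nu_tau_zero hq μ hnull hZ m k h0 hklt]
  have eSig : μ {sig q (k + 1) m} = ν {sig q (k + 1) m} := by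
    rcases lt_or_eq_of_le (show k + 1 ≤ q ^ m by omega) with hlt | heq
    · rw [(hZ m (k+1) (by omega) hlt).2, nu_sig_zero hq μ hnull hZ m (k+1) (by omega) hlt]
    · rw [heq, sig_top hq m]
      exact hCQ
  rw [eLe, eLt, eTau, eSig] at h1
  have h3 := h1.trans h2.symm
  rw [add_comm (μ {s | ∀ i, i < m → s i = a i}) (ν {s | ff q s ≤ (k:ℝ)/(q:ℝ)^m}),
    add_comm (ν {s | ∀ i, i < m → s i = a i}) (ν {s | ff q s ≤ (k:ℝ)/(q:ℝ)^m})] at h3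
  exact (ENNReal.add_right_inj (measure_ne_top _ _)).mp h3

end PfAux
namespace PfAux

variable {q : ℕ}

def Cyl : Set (Set E) := {S | ∃ (m : ℕ) (a : ℕ → ℕ), S = {s : E | ∀ i, i < m → s i = a i}}

lemma cyl_inter {m m' : ℕ} (hmm : m ≤ m') (a a' : ℕ → ℕ)
    (hw : ∃ w : E, (∀ i, i < m → w i = a i) ∧ (∀ i, i < m' → w i = a' i)) :
    {s : E | ∀ i, i < m → s i = a i} ∩ {s : E | ∀ i, i < m' → s i = a' i}
      = {s : E | ∀ i, i < m' → s i = a' i} := by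
  obtain ⟨w, hw1, hw2⟩ := hw
  ext s
  simp only [Set.mem_inter_iff, Set.mem_setOf_eq]
  constructor
  · rintro ⟨_, hs2⟩
    exact hs2
  · intro hs
    refine ⟨fun i hi => ?_, hs⟩
    rw [hs i (by omega), ← hw2 i (by omega), hw1 i hi]

lemma isPiCyl : IsPiSystem Cyl := by
  rintro S ⟨m, a, rfl⟩ T ⟨m', a', rfl⟩ hne
  obtain ⟨w, hw⟩ := hne
  simp only [Set.mem_inter_iff, Set.mem_setOf_eq] at hw
  rcases le_total m m' with hmm | hmm
  · rw [cyl_inter hmm a a' ⟨w, hw.1, hw.2⟩]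
    exact ⟨m', a', rfl⟩
  · rw [Set.inter_comm, cyl_inter hmm a' a ⟨w, hw.2, hw.1⟩]
    exact ⟨m, a, rfl⟩

lemma genCyl : (inferInstance : MeasurableSpace E) = MeasurableSpace.generateFrom Cyl := by
  apply le_antisymm
  · have hev : ∀ i : ℕ, @Measurable E ℕ (MeasurableSpace.generateFrom Cyl) _ (fun s => s i) := by
      intro i
      letI : MeasurableSpace E := MeasurableSpace.generateFrom Cyl
      apply measurable_to_countable'
      intro j
      have hU : (fun s : E => s i) ⁻¹' {j}
          = ⋃ (v : Fin (i + 1) → ℕ) (_ : v ⟨i, Nat.lt_succ_self i⟩ = j),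
              {s : E | ∀ l, l < i + 1 →
                s l = (fun l' => if h : l' < i + 1 then v ⟨l', h⟩ else 0) l} := by
        ext s
        simp only [Set.mem_preimage, Set.mem_singleton_iff, Set.mem_iUnion, Set.mem_setOf_eq]
        constructor
        · intro hs
          refine ⟨fun l => s l.1, by simpa using hs, fun l hl => ?_⟩
          rw [dif_pos hl]
        · rintro ⟨v, hv, hs⟩
          have h2 := hs i (Nat.lt_succ_self i)
          rw [dif_pos (Nat.lt_succ_self i)] at h2
          rw [h2, hv]
      rw [hU]
      apply MeasurableSet.iUnion
      intro v
      apply MeasurableSet.iUnion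
      intro _
      exact MeasurableSpace.measurableSet_generateFrom ⟨i + 1, _, rfl⟩
    have h4 : (⨆ i : ℕ, MeasurableSpace.comap (fun s : E => s i)
        (inferInstance : MeasurableSpace ℕ)) ≤ MeasurableSpace.generateFrom Cyl :=
      iSup_le fun i => measurable_iff_comap_le.mp (hev i)
    exact h4
  · apply MeasurableSpace.generateFrom_le
    rintro S ⟨m, a, rfl⟩
    have h : {s : E | ∀ i, i < m → s i = a i}
        = ⋂ (i : ℕ) (_ : i < m), (fun s : E => s i) ⁻¹' {a i} := by
      ext s
      simp only [Set.mem_setOf_eq, Set.mem_iInter, Set.mem_preimage, Set.mem_singleton_iff]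
    rw [h]
    exact MeasurableSet.iInter fun i => MeasurableSet.iInter fun _ =>
      (measurable_pi_apply i) (measurableSet_singleton (a i))

lemma backward (hq : 2 ≤ q) (μ : Measure E) [IsProbabilityMeasure μ] (hnull : μ ((Sq q)ᶜ) = 0)
    (heqR : ∀ n k : ℕ, 1 ≤ n → 0 < k → k < q ^ n →
      (μ {s | ff q s ≤ (k:ℝ)/(q:ℝ)^n}).toReal + (μ.map shift {s | ff q s ≤ 0}).toReal
        = (μ.map shift {s | ff q s ≤ (k:ℝ)/(q:ℝ)^n}).toReal + (μ {s | ff q s ≤ 0}).toReal) :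
    μ.map shift = μ := by
  obtain ⟨hF0, hC0, hCQ, hLe⟩ := step1 hq μ hnull heqR
  have hLt := step2 hq μ hnull hLe
  have hAtom := atomEq hq μ hnull hLe
  have hZ := Wzero hq μ hnull hC0 hCQ hAtom
  haveI : IsProbabilityMeasure (μ.map shift) :=
    Measure.isProbabilityMeasure_map measurable_shift.aemeasurable
  apply ext_of_generate_finite Cyl genCyl isPiCyl
  · rintro S ⟨m, a, rfl⟩
    rcases Nat.eq_zero_or_pos m with hm | hm
    · subst hm
      have h : {s : E | ∀ i, i < 0 → s i = a i} = Set.univ := by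
        ext s; simp
      rw [h, measure_univ, measure_univ]
    · by_cases hcase : ∀ i, i < m → a i < q
      · exact (cyl_eq hq μ hnull hF0 hC0 hCQ hLe hLt hZ m hm a hcase).symm
      · push_neg at hcase
        obtain ⟨i, hi, hiq⟩ := hcase
        have hz : ∀ (ρ : Measure E), ρ ((Sq q)ᶜ) = 0 →
            ρ {s : E | ∀ i', i' < m → s i' = a i'} = 0 := by
          intro ρ hρ
          have h := congr_on_Sq ρ hρ
            (A := {s : E | ∀ i', i' < m → s i' = a i'}) (B := (∅ : Set E)) ?_
          · rw [h, measure_empty]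
          · intro s hs
            simp only [Set.mem_setOf_eq, Set.mem_empty_iff_false, iff_false]
            intro hcon
            have h2 := hs i
            rw [hcon i hi] at h2
            omega
        rw [hz (μ.map shift) (shift_pre_null μ hnull), hz μ hnull]
  · rw [measure_univ, measure_univ]

end PfAux
open PfAux in
/-- Stationarity of the digit process is equivalent to the stationarity functional
equation for the CDF of `X = Σ Xₙ q^{-n}` at all base-`q` fractions. -/
theorem stmt_2 {Ω : Type*} [MeasurableSpace Ω] (P : Measure Ω) [IsProbabilityMeasure P]
    (q : ℕ) (hq : 2 ≤ q) (X : ℕ → Ω → ℕ)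
    (hmeas : ∀ n, Measurable (X n)) (hval : ∀ n ω, X n ω < q)
    (Y : Ω → ℝ) (hY : ∀ ω, Y ω = ∑' n : ℕ, (X n ω : ℝ) / (q : ℝ) ^ (n + 1))
    (F : ℝ → ℝ) (hF : ∀ x, F x = (P {ω | Y ω ≤ x}).toReal) :
    (Measure.map (fun ω => fun n => X (n + 1) ω) P
        = Measure.map (fun ω => fun n => X n ω) P)
      ↔ (∀ x : ℝ, (∃ n k : ℕ, 1 ≤ n ∧ 0 < k ∧ k < q ^ n ∧ x = (k : ℝ) / (q : ℝ) ^ n) →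
          F x = F 0 + ∑ j ∈ Finset.range q, (F ((x + j) / q) - F ((j : ℝ) / q))) := by
  classical
  set dig : Ω → PfAux.E := fun ω => fun n => X n ω with hdig
  have hdigMeas : Measurable dig := measurable_pi_lambda _ (fun n => hmeas n)
  set μ := P.map dig with hμ
  haveI : IsProbabilityMeasure μ := Measure.isProbabilityMeasure_map hdigMeas.aemeasurable
  have hmapshift : Measure.map (fun ω => fun n => X (n + 1) ω) P = μ.map shift := by
    rw [hμ, Measure.map_map measurable_shift hdigMeas]
    rfl
  have hnull : μ ((Sq q)ᶜ) = 0 := by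
    rw [hμ, Measure.map_apply hdigMeas measSq.compl]
    have h : dig ⁻¹' ((Sq q)ᶜ) = ∅ := by
      ext ω
      simp only [Set.mem_preimage, Set.mem_compl_iff, Set.mem_empty_iff_false, iff_false,
        not_not]
      intro n
      exact hval n ω
    rw [h, measure_empty]
  have hYf : ∀ ω, Y ω = ff q (dig ω) := fun ω => by rw [hY ω]; rfl
  have hFμ : ∀ x : ℝ, F x = (μ {s | ff q s ≤ x}).toReal := by
    intro x
    have hsets : {ω | Y ω ≤ x} = dig ⁻¹' {s | ff q s ≤ x} := by
      ext ω
      simp only [Set.mem_setOf_eq, Set.mem_preimage]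
      rw [hYf ω]
    rw [hF x, hsets, hμ, Measure.map_apply hdigMeas (measLe hq x)]
  have hTF : ∀ x : ℝ, 0 ≤ x → x < 1 →
      ((F x = F 0 + ∑ j ∈ Finset.range q, (F ((x + j) / q) - F ((j : ℝ) / q)))
        ↔ (μ {s | ff q s ≤ x}).toReal + (μ.map shift {s | ff q s ≤ 0}).toReal
            = (μ.map shift {s | ff q s ≤ x}).toReal + (μ {s | ff q s ≤ 0}).toReal) := by
    intro x hx0 hx1
    have hsf := sum_formula hq μ hnull x hx0 hx1
    have e3 : ∑ j ∈ Finset.range q, (F ((x + j) / q) - F ((j : ℝ) / q))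
        = ∑ j ∈ Finset.range q, ((μ {s | ff q s ≤ (x + j) / q}).toReal
            - (μ {s | ff q s ≤ (j : ℝ) / q}).toReal) :=
      Finset.sum_congr rfl fun j _ => by rw [hFμ ((x + j) / q), hFμ ((j : ℝ) / q)]
    rw [hFμ x, hFμ 0, e3, hsf]
    constructor <;> intro h <;> linarith
  constructor
  · intro hstat x hx
    obtain ⟨n, k, hn, h0, hk, rfl⟩ := hx
    have hx0 : (0:ℝ) ≤ (k : ℝ) / (q : ℝ) ^ n := by positivity
    have hx1 : (k : ℝ) / (q : ℝ) ^ n < 1 := by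
      rw [div_lt_one (by positivity)]
      exact_mod_cast hk
    rw [hTF _ hx0 hx1]
    rw [hmapshift] at hstat
    rw [hstat]
  · intro heq
    rw [hmapshift]
    apply backward hq μ hnull
    intro n k hn h0 hk
    have hx0 : (0:ℝ) ≤ (k : ℝ) / (q : ℝ) ^ n := by positivity
    have hx1 : (k : ℝ) / (q : ℝ) ^ n < 1 := by
      rw [div_lt_one (by positivity)]
      exact_mod_cast hk
    exact (hTF _ hx0 hx1).mp (heq _ ⟨n, k, hn, h0, hk, rfl⟩)
end

section
/- Let q ≥ 2 be an integer and f ∈ L¹([0,1]) (complex-valued) satisfy f(x) = (1/q) Σ_{j=0}^{q-1} f((x+j)/q) for almost all x ∈ [0,1] with respect to Lebesgue measure. Then f is almost everywhere equal to the constant ∫₀¹ f(x) dx. -/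
open MeasureTheory Complex Filter Set intervalIntegral
open scoped FourierTransform Real RealInnerProductSpace Topology

noncomputable def ee (n : ℤ) (x : ℝ) : ℂ := Complex.exp (2 * Real.pi * Complex.I * n * x)

lemma ee_eq (n : ℤ) (x : ℝ) : ee n x = Complex.exp ((2 * Real.pi * Complex.I * n) * x) := rfl

lemma exp_two_pi_int (m : ℤ) : Complex.exp (2 * Real.pi * Complex.I * m) = 1 := by
  rw [show (2 * (Real.pi:ℂ) * Complex.I * m) = (m : ℂ) * (2 * Real.pi * Complex.I) by ring,
    Complex.exp_int_mul_two_pi_mul_I]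

lemma ee_cont (n : ℤ) : Continuous (ee n) := by
  apply Complex.continuous_exp.comp; continuity

lemma coef_ne (n : ℤ) (hn : n ≠ 0) : (2 * Real.pi * Complex.I * n) ≠ 0 := by
  have : (n:ℂ) ≠ 0 := Int.cast_ne_zero.mpr hn
  simp [Real.pi_ne_zero, Complex.I_ne_zero, this, mul_ne_zero]

lemma ee_integral (n : ℤ) (hn : n ≠ 0) (t : ℝ) :
    ∫ x in t..1, ee n x = (1 - ee n t) / (2 * Real.pi * Complex.I * n) := by
  simp only [ee_eq]
  rw [integral_exp_mul_complex (coef_ne n hn)]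
  congr 2
  rw [show ((1:ℝ):ℂ) = 1 by norm_num, mul_one, exp_two_pi_int]

lemma ee_integral_zero (n : ℤ) (hn : n ≠ 0) : ∫ x in (0:ℝ)..1, ee n x = 0 := by
  rw [ee_integral n hn 0]
  simp [ee_eq]

lemma const_of_coeff_zero (F : ℝ → ℂ) (hF : ContinuousOn F (Set.Icc 0 1)) (h01 : F 0 = F 1)
    (hcoeff : ∀ n : ℤ, n ≠ 0 → (∫ x in (0:ℝ)..1, ee (-n) x * F x) = 0) :
    ∀ t ∈ Set.Icc (0:ℝ) 1, F t = F 0 := by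
  haveI : Fact ((0:ℝ) < 1) := ⟨one_pos⟩
  set Fc : AddCircle (1:ℝ) → ℂ := AddCircle.liftIco 1 0 F with hFc
  have hFc_cont : Continuous Fc := AddCircle.liftIco_zero_continuous h01 hF
  have hFc_ae : ∀ᵐ x ∂(volume : Measure ℝ), x ∈ Set.uIoc (0:ℝ) 1 → Fc (x:ℝ) = F x := by
    have h1ne : ∀ᵐ x ∂(volume : Measure ℝ), x ≠ 1 := by
      simp [ae_iff, Set.setOf_eq_eq_singleton, measure_singleton]
    filter_upwards [h1ne] with x hne hx
    rw [Set.uIoc_of_le (zero_le_one' ℝ)] at hx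
    exact AddCircle.liftIco_zero_coe_apply ⟨hx.1.le, lt_of_le_of_ne hx.2 hne⟩
  -- interval integral formula for fourierCoeff
  have coeff_eq : ∀ (G : AddCircle (1:ℝ) → ℂ) (n : ℤ), fourierCoeff G n
      = ∫ x in (0:ℝ)..1, ee (-n) x * G (x : ℝ) := by
    intro G n
    rw [fourierCoeff_eq_intervalIntegral G n 0]
    rw [show (0:ℝ) + 1 = 1 by norm_num, show (1/(1:ℝ)) = 1 by norm_num, one_smul]
    apply intervalIntegral.integral_congr
    intro x _
    dsimp only
    rw [smul_eq_mul]
    congr 1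
    rw [fourier_coe_apply, ee_eq]
    push_cast
    ring_nf
  have hee0 : ∀ x : ℝ, ee 0 x = 1 := by intro x; simp [ee_eq]
  set d0 : ℂ := fourierCoeff Fc 0 with hd0
  set Kc : C(AddCircle (1:ℝ), ℂ) := ⟨fun z => Fc z - d0, hFc_cont.sub continuous_const⟩ with hKc
  have hKcoeff : ∀ n : ℤ, fourierCoeff (⇑Kc) n = 0 := by
    intro n
    rw [coeff_eq]
    have hsplit : ∀ x : ℝ, ee (-n) x * Kc (x:ℝ) = ee (-n) x * Fc (x:ℝ) - d0 * ee (-n) x := by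
      intro x; simp only [hKc, ContinuousMap.coe_mk]; ring
    rw [intervalIntegral.integral_congr (fun x _ => hsplit x)]
    have hInt1 : IntervalIntegrable (fun x : ℝ => ee (-n) x * Fc (x:ℝ)) volume 0 1 :=
      (((ee_cont (-n)).mul (hFc_cont.comp (AddCircle.continuous_mk' 1))).continuousOn).intervalIntegrable
    have hInt2 : IntervalIntegrable (fun x : ℝ => d0 * ee (-n) x) volume 0 1 :=
      (continuous_const.mul (ee_cont (-n))).continuousOn.intervalIntegrable
    rw [intervalIntegral.integral_sub hInt1 hInt2, intervalIntegral.integral_const_mul]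
    rcases eq_or_ne n 0 with rfl | hn
    · rw [← coeff_eq Fc 0, ← hd0]
      have : ∫ x in (0:ℝ)..1, ee (-(0:ℤ)) x = 1 := by
        simp only [neg_zero, hee0]
        simp
      rw [this]
      ring
    · have h1 : (∫ x in (0:ℝ)..1, ee (-n) x * Fc (x:ℝ)) = 0 := by
        rw [← hcoeff n hn]
        apply intervalIntegral.integral_congr_ae
        filter_upwards [hFc_ae] with x hx hx'
        rw [hx hx']
      rw [h1, ee_integral_zero (-n) (neg_ne_zero.mpr hn)]
      ring
  -- L² argument: Kc = 0
  have hKzero : ∀ z, Kc z = 0 := by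
    set μh : Measure (AddCircle (1:ℝ)) := AddCircle.haarAddCircle with hμh
    set KLp : Lp ℂ 2 μh := ContinuousMap.toLp (E := ℂ) 2 μh ℂ Kc with hKLp
    have hae : ⇑KLp =ᵐ[μh] ⇑Kc := ContinuousMap.coeFn_toLp (𝕜 := ℂ) (p := 2) μh Kc
    have hcoeff' : ∀ n : ℤ, fourierCoeff (⇑KLp) n = 0 := by
      intro n
      rw [← hKcoeff n]
      simp only [fourierCoeff]
      have heqi : (∫ t, fourier (-n) t • (⇑KLp) t ∂μh) = ∫ t, fourier (-n) t • (⇑Kc) t ∂μh := by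
        apply MeasureTheory.integral_congr_ae
        filter_upwards [hae] with z hz
        rw [hz]
      rw [heqi]
    have hrepr : fourierBasis.repr KLp = 0 := by
      apply lp.ext
      funext n
      rw [fourierBasis_repr]
      simpa using hcoeff' n
    have : KLp = 0 := by
      have := fourierBasis.repr.map_eq_zero_iff.mp hrepr
      exact this
    have hKae : ⇑Kc =ᵐ[μh] (fun _ => (0:ℂ)) := by
      refine hae.symm.trans ?_
      rw [this]
      exact Lp.coeFn_zero _ _ _
    have := (Kc.continuous.ae_eq_iff_eq (μ := μh) continuous_const).mp hKae
    intro z; rw [congrFun this z]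
  have hFc_const : ∀ z, Fc z = d0 := by
    intro z
    have := hKzero z
    simp only [hKc, ContinuousMap.coe_mk, sub_eq_zero] at this
    exact this
  have hIco : ∀ t ∈ Set.Ico (0:ℝ) 1, F t = d0 := by
    intro t ht
    rw [← AddCircle.liftIco_zero_coe_apply (f := F) (p := 1) ht]
    exact hFc_const _
  have hF0 : F 0 = d0 := hIco 0 ⟨le_refl _, one_pos⟩
  intro t ht
  rcases eq_or_lt_of_le ht.2 with rfl | hlt
  · exact h01.symm
  · rw [hIco t ⟨ht.1, hlt⟩, hF0]

lemma pairing (a b : ℝ → ℂ) (ha : IntegrableOn a (Set.Ioc 0 1)) (hb : IntegrableOn b (Set.Ioc 0 1)) :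
    ∫ x in (0:ℝ)..1, a x * (∫ t in (0:ℝ)..x, b t) = ∫ t in (0:ℝ)..1, (∫ x in t..1, a x) * b t := by
  set ν : Measure ℝ := volume.restrict (Set.Ioc 0 1) with hν
  have hS : MeasurableSet {p : ℝ × ℝ | p.2 ≤ p.1} := measurableSet_le measurable_snd measurable_fst
  set K : ℝ → ℝ → ℂ := fun x t => ({p : ℝ × ℝ | p.2 ≤ p.1}.indicator (fun p => a p.1 * b p.2)) (x, t) with hKdef
  have hK : Integrable (Function.uncurry K) (ν.prod ν) := by
    have h1 : Integrable (fun p : ℝ × ℝ => a p.1 * b p.2) (ν.prod ν) := ha.mul_prod hb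
    exact h1.indicator hS
  have key := integral_integral_swap hK
  have hL : ∀ x ∈ Set.Ioc (0:ℝ) 1, (∫ t, K x t ∂ν) = a x * ∫ t in (0:ℝ)..x, b t := by
    intro x hx
    have h2 : (fun t => K x t) = (Set.Iic x).indicator (fun t => a x * b t) := by
      funext t; by_cases h : t ≤ x <;> simp [hKdef, Set.indicator_apply, h]
    rw [h2, MeasureTheory.integral_indicator measurableSet_Iic, Measure.restrict_restrict measurableSet_Iic]
    have hset : Set.Iic x ∩ Set.Ioc 0 1 = Set.Ioc 0 x := by
      ext t
      simp only [Set.mem_inter_iff, Set.mem_Iic, Set.mem_Ioc]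
      exact ⟨fun ⟨h1, h2, _⟩ => ⟨h2, h1⟩, fun ⟨h1, h2⟩ => ⟨h2, h1, h2.trans hx.2⟩⟩
    rw [hset, MeasureTheory.integral_const_mul, ← intervalIntegral.integral_of_le hx.1.le]
  have hR : ∀ t ∈ Set.Ioc (0:ℝ) 1, (∫ x, K x t ∂ν) = (∫ x in t..1, a x) * b t := by
    intro t ht
    have h2 : (fun x => K x t) = (Set.Ici t).indicator (fun x => a x * b t) := by
      funext x; by_cases h : t ≤ x <;> simp [hKdef, Set.indicator_apply, h]
    rw [h2, MeasureTheory.integral_indicator measurableSet_Ici, Measure.restrict_restrict measurableSet_Ici]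
    have hset : Set.Ici t ∩ Set.Ioc 0 1 = Set.Icc t 1 := by
      ext x
      simp only [Set.mem_inter_iff, Set.mem_Ici, Set.mem_Ioc, Set.mem_Icc]
      exact ⟨fun ⟨h1, _, h3⟩ => ⟨h1, h3⟩, fun ⟨h1, h2⟩ => ⟨h1, ht.1.trans_le h1, h2⟩⟩
    rw [hset, MeasureTheory.integral_Icc_eq_integral_Ioc, MeasureTheory.integral_mul_const,
      ← intervalIntegral.integral_of_le ht.2]
  rw [intervalIntegral.integral_of_le (zero_le_one' ℝ), intervalIntegral.integral_of_le (zero_le_one' ℝ)]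
  calc ∫ x in Set.Ioc (0:ℝ) 1, a x * ∫ t in (0:ℝ)..x, b t
      = ∫ x, (∫ t, K x t ∂ν) ∂ν := (setIntegral_congr_fun measurableSet_Ioc hL).symm
    _ = ∫ t, (∫ x, K x t ∂ν) ∂ν := key
    _ = ∫ t in Set.Ioc (0:ℝ) 1, (∫ x in t..1, a x) * b t := setIntegral_congr_fun measurableSet_Ioc hR

lemma coeffs_vanish (q : ℕ) (hq : 2 ≤ q) (f : ℝ → ℂ)
    (hint : IntegrableOn f (Set.Icc 0 1))
    (heq : ∀ᵐ x ∂(volume.restrict (Set.Icc (0 : ℝ) 1)),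
      f x = (1 / (q : ℂ)) * ∑ j ∈ Finset.range q, f ((x + j) / q)) :
    ∀ n : ℤ, n ≠ 0 → (∫ x in (0:ℝ)..1, ee n x * f x) = 0 := by
  have hq1R : (1:ℝ) < q := by exact_mod_cast hq.trans_lt' one_lt_two
  have hq0R : (q:ℝ) ≠ 0 := by positivity
  have hq0C : (q:ℂ) ≠ 0 := Nat.cast_ne_zero.mpr (by omega)
  have hsub : ∀ j : ℕ, j < q → Set.Icc ((j:ℝ)/q) (((j:ℝ)+1)/q) ⊆ Set.Icc 0 1 := by
    intro j hj
    apply Set.Icc_subset_Icc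
    · positivity
    · rw [div_le_one (by positivity)]
      exact_mod_cast Nat.succ_le_of_lt hj
  have hle : ∀ j : ℕ, (j:ℝ)/q ≤ ((j:ℝ)+1)/q := by
    intro j
    gcongr
    linarith
  have hfj0 : ∀ j : ℕ, j < q → IntervalIntegrable f volume ((j:ℝ)/q) (((j:ℝ)+1)/q) := by
    intro j hj
    rw [intervalIntegrable_iff', Set.uIcc_of_le (hle j)]
    exact hint.mono_set (hsub j hj)
  have hfj : ∀ j : ℕ, j < q → IntervalIntegrable (fun x => f ((x + (j:ℝ))/q)) volume 0 1 := by
    intro j hj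
    have h2 := (hfj0 j hj).comp_mul_left (c := (q:ℝ)⁻¹)
    have e1 : ((j:ℝ)/q)/(q:ℝ)⁻¹ = (j:ℝ) := by field_simp
    have e2 : ((((j:ℝ))+1)/q)/(q:ℝ)⁻¹ = (j:ℝ)+1 := by field_simp
    rw [e1, e2] at h2
    have h3 := h2.comp_add_right (j:ℝ)
    have e3 : (j:ℝ) - (j:ℝ) = 0 := sub_self _
    have e4 : ((j:ℝ)+1) - (j:ℝ) = 1 := by ring
    rw [e3, e4] at h3
    have hfun : (fun x : ℝ => f ((x + (j:ℝ))/q)) = fun x => f ((q:ℝ)⁻¹ * (x + (j:ℝ))) := by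
      funext x; rw [div_eq_inv_mul]
    rw [hfun]
    exact h3
  have hGII : ∀ (m : ℤ) (j : ℕ), j < q →
      IntervalIntegrable (fun y => ee m y * f y) volume ((j:ℝ)/q) (((j:ℝ)+1)/q) :=
    fun m j hj => (hfj0 j hj).continuousOn_mul (ee_cont m).continuousOn
  have hscale : ∀ n : ℤ, (∫ x in (0:ℝ)..1, ee n x * f x)
      = ∫ x in (0:ℝ)..1, ee ((q:ℤ)*n) x * f x := by
    intro n
    have h0 := (ae_restrict_iff' measurableSet_Icc).mp heq
    have hae : ∀ᵐ x ∂(volume : Measure ℝ), x ∈ Set.uIoc (0:ℝ) 1 →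
        ee n x * f x = ∑ j ∈ Finset.range q, (q:ℂ)⁻¹ * (ee n x * f ((x + (j:ℝ))/q)) := by
      filter_upwards [h0] with x hx hx'
      rw [Set.uIoc_of_le (zero_le_one' ℝ)] at hx'
      rw [hx (Set.Ioc_subset_Icc_self hx')]
      simp only [Finset.mul_sum]
      apply Finset.sum_congr rfl
      intro j _
      rw [one_div]
      ring
    rw [intervalIntegral.integral_congr_ae hae,
      intervalIntegral.integral_finset_sum (fun j hj =>
        ((hfj j (Finset.mem_range.mp hj)).continuousOn_mul (ee_cont n).continuousOn).const_mul _)]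
    have hterm : ∀ j ∈ Finset.range q,
        (∫ x in (0:ℝ)..1, (q:ℂ)⁻¹ * (ee n x * f ((x + (j:ℝ))/q)))
          = ∫ y in ((j:ℝ)/q)..(((j:ℝ)+1)/q), ee ((q:ℤ)*n) y * f y := by
      intro j hj
      rw [intervalIntegral.integral_const_mul]
      have hpt : ∀ x : ℝ, ee n x * f ((x + (j:ℝ))/q)
          = (fun y => ee ((q:ℤ)*n) y * f y) (x/q + (j:ℝ)/q) := by
        intro x
        have harg : x/(q:ℝ) + (j:ℝ)/q = (x + (j:ℝ))/q := by ring
        rw [harg]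
        dsimp only
        congr 1
        rw [ee_eq, ee_eq]
        rw [show ((2:ℂ) * Real.pi * Complex.I * ((q:ℤ)*n : ℤ)) * (((x + (j:ℝ))/q : ℝ) : ℂ)
          = (2 * Real.pi * Complex.I * n) * (x:ℂ) + ((n*j : ℤ) : ℂ) * (2 * Real.pi * Complex.I) by
            push_cast; field_simp]
        rw [Complex.exp_add, Complex.exp_int_mul_two_pi_mul_I, mul_one]
      rw [intervalIntegral.integral_congr (fun x _ => hpt x),
        intervalIntegral.integral_comp_div_add (fun y => ee ((q:ℤ)*n) y * f y) hq0R ((j:ℝ)/q),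
        zero_div, zero_add, show (1:ℝ)/q + (j:ℝ)/q = ((j:ℝ)+1)/q by ring,
        Complex.real_smul, show (((q:ℝ)):ℂ) = (q:ℂ) from by norm_cast,
        ← mul_assoc, inv_mul_cancel₀ hq0C, one_mul]
    rw [Finset.sum_congr rfl hterm]
    have hadj := intervalIntegral.sum_integral_adjacent_intervals
      (a := fun k : ℕ => (k:ℝ)/q) (μ := volume) (n := q)
      (f := fun y => ee ((q:ℤ)*n) y * f y)
      (fun k hk => by
        have := hGII ((q:ℤ)*n) k hk
        convert this using 2
        push_cast
        ring)
    rw [show ((0:ℕ):ℝ)/(q:ℝ) = 0 by norm_num, show ((q:ℕ):ℝ)/(q:ℝ) = 1 from div_self hq0R] at hadj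
    rw [← hadj]
    apply Finset.sum_congr rfl
    intro j _
    congr 1
    push_cast
    ring
  -- Riemann-Lebesgue
  intro n hn
  set g : ℝ → ℂ := (Set.Ioc (0:ℝ) 1).indicator f with hg
  have hgint : Integrable g volume :=
    (hint.mono_set Set.Ioc_subset_Icc_self).integrable_indicator measurableSet_Ioc
  have hFg : ∀ m : ℤ, 𝓕 g (-(m:ℝ)) = ∫ x in (0:ℝ)..1, ee m x * f x := by
    intro m
    rw [Real.fourier_eq']
    simp only [RCLike.inner_apply, conj_trivial]
    have hind : (fun v : ℝ => Complex.exp (((-2 * Real.pi * ((-(m:ℝ)) * v) : ℝ) : ℂ) * Complex.I) • g v)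
        = (Set.Ioc (0:ℝ) 1).indicator (fun v => ee m v * f v) := by
      funext v
      by_cases h : v ∈ Set.Ioc (0:ℝ) 1
      · simp only [hg, Set.indicator_of_mem h, smul_eq_mul]
        congr 1
        rw [ee_eq]
        push_cast
        ring_nf
      · simp [hg, Set.indicator_of_notMem h]
    rw [hind, MeasureTheory.integral_indicator measurableSet_Ioc,
      ← intervalIntegral.integral_of_le (zero_le_one' ℝ)]
  have hiter : ∀ k : ℕ, (∫ x in (0:ℝ)..1, ee n x * f x)
      = ∫ x in (0:ℝ)..1, ee ((q:ℤ)^k * n) x * f x := by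
    intro k
    induction k with
    | zero => simp
    | succ k ih =>
      rw [ih, hscale ((q:ℤ)^k * n), show (q:ℤ) * ((q:ℤ)^k * n) = (q:ℤ)^(k+1) * n by ring]
  have hcocomp : Tendsto (fun k : ℕ => -(((q:ℤ)^k * n : ℤ) : ℝ)) atTop (cocompact ℝ) := by
    have hqpow : Tendsto (fun k : ℕ => ((q:ℝ))^k) atTop atTop :=
      tendsto_pow_atTop_atTop_of_one_lt hq1R
    have heqfun : (fun k : ℕ => -(((q:ℤ)^k * n : ℤ) : ℝ)) = fun k => ((q:ℝ))^k * (-(n:ℝ)) := by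
      funext k; push_cast; ring
    rw [cocompact_eq_atBot_atTop, heqfun]
    rcases hn.lt_or_gt with h | h
    · apply Tendsto.mono_right _ le_sup_right
      have hpos : (0:ℝ) < -(n:ℝ) := by
        have : (n:ℝ) < 0 := by exact_mod_cast h
        linarith
      exact hqpow.atTop_mul_const hpos
    · apply Tendsto.mono_right _ le_sup_left
      have hneg : -(n:ℝ) < 0 := by
        have : (0:ℝ) < (n:ℝ) := by exact_mod_cast h
        linarith
      exact hqpow.atTop_mul_const_of_neg hneg
  have htends : Tendsto (fun k : ℕ => 𝓕 g (-(((q:ℤ)^k * n : ℤ) : ℝ))) atTop (𝓝 0) :=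
    (Real.zero_at_infty_fourier g).comp hcocomp
  have hconst : ∀ k : ℕ, 𝓕 g (-(((q:ℤ)^k * n : ℤ) : ℝ)) = ∫ x in (0:ℝ)..1, ee n x * f x := by
    intro k
    rw [hFg ((q:ℤ)^k * n), ← hiter k]
  simp only [hconst] at htends
  exact tendsto_nhds_unique tendsto_const_nhds htends


/-- Any `L¹` solution of the averaging functional equation on `[0,1]` is a.e. constant,
equal to its integral. -/
theorem stmt_4 (q : ℕ) (hq : 2 ≤ q) (f : ℝ → ℂ)
    (hint : IntegrableOn f (Set.Icc 0 1))
    (heq : ∀ᵐ x ∂(volume.restrict (Set.Icc (0 : ℝ) 1)),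
      f x = (1 / (q : ℂ)) * ∑ j ∈ Finset.range q, f ((x + j) / q)) :
    ∀ᵐ x ∂(volume.restrict (Set.Icc (0 : ℝ) 1)), f x = ∫ y in Set.Icc (0 : ℝ) 1, f y := by
  set c₀ : ℂ := ∫ y in Set.Icc (0:ℝ) 1, f y with hc₀
  set h : ℝ → ℂ := fun x => f x - c₀ with hh
  -- integrability facts
  have hintIoc : IntegrableOn f (Set.Ioc 0 1) := hint.mono_set Set.Ioc_subset_Icc_self
  have hconst_int : IntegrableOn (fun _ : ℝ => c₀) (Set.Icc 0 1) volume :=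
    integrableOn_const (hs := measure_Icc_lt_top.ne)
  have hh_int : IntegrableOn h (Set.Icc 0 1) := hint.sub hconst_int
  have hh_Ioc : IntegrableOn h (Set.Ioc 0 1) := hh_int.mono_set Set.Ioc_subset_Icc_self
  have hh_II : IntervalIntegrable h volume 0 1 := by
    rw [intervalIntegrable_iff, Set.uIoc_of_le (zero_le_one' ℝ)]
    exact hh_Ioc
  have hf_II : IntervalIntegrable f volume 0 1 := by
    rw [intervalIntegrable_iff, Set.uIoc_of_le (zero_le_one' ℝ)]
    exact hintIoc
  have hc_II : IntervalIntegrable (fun _ : ℝ => c₀) volume 0 1 :=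
    _root_.intervalIntegrable_const
  have hfint01 : (∫ x in (0:ℝ)..1, f x) = c₀ := by
    rw [intervalIntegral.integral_of_le (zero_le_one' ℝ), hc₀,
      MeasureTheory.integral_Icc_eq_integral_Ioc]
  -- the primitive F
  set F : ℝ → ℂ := fun t => ∫ x in (0:ℝ)..t, h x with hF
  have hF0 : F 0 = 0 := intervalIntegral.integral_same
  have hF1 : F 1 = 0 := by
    show (∫ x in (0:ℝ)..1, h x) = 0
    have : ∀ x : ℝ, h x = f x - c₀ := fun x => rfl
    rw [intervalIntegral.integral_congr (fun x _ => this x),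
      intervalIntegral.integral_sub hf_II hc_II, hfint01, intervalIntegral.integral_const]
    simp
  -- vanishing coefficients of f and h
  have hcn := coeffs_vanish q hq f hint heq
  have hhn : ∀ n : ℤ, n ≠ 0 → (∫ x in (0:ℝ)..1, ee n x * h x) = 0 := by
    intro n hn
    have hsplit : ∀ x : ℝ, ee n x * h x = ee n x * f x - ee n x * c₀ := by
      intro x; simp only [hh]; ring
    rw [intervalIntegral.integral_congr (fun x _ => hsplit x),
      intervalIntegral.integral_sub (hf_II.continuousOn_mul (ee_cont n).continuousOn)
        ((_root_.intervalIntegrable_const).continuousOn_mul (ee_cont n).continuousOn),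
      hcn n hn, intervalIntegral.integral_mul_const, ee_integral_zero n hn]
    simp
  -- Fourier coefficients of F vanish
  have hFcoeff : ∀ n : ℤ, n ≠ 0 → (∫ x in (0:ℝ)..1, ee (-n) x * F x) = 0 := by
    intro n hn
    have hn' : (-n : ℤ) ≠ 0 := neg_ne_zero.mpr hn
    rw [pairing (ee (-n)) h ((ee_cont (-n)).integrableOn_Ioc) hh_Ioc]
    have hpt : ∀ t : ℝ, (∫ x in t..1, ee (-n) x) * h t
        = (2 * Real.pi * Complex.I * ((-n : ℤ) : ℂ))⁻¹ * (h t - ee (-n) t * h t) := by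
      intro t
      rw [ee_integral (-n) hn' t]
      ring
    rw [intervalIntegral.integral_congr (fun t _ => hpt t),
      intervalIntegral.integral_const_mul,
      intervalIntegral.integral_sub hh_II (hh_II.continuousOn_mul (ee_cont (-n)).continuousOn)]
    have : (∫ x in (0:ℝ)..1, h x) = 0 := hF1
    rw [this, hhn (-n) hn']
    simp
  -- F is continuous and vanishes on [0,1]
  have hFcont : ContinuousOn F (Set.Icc 0 1) := by
    have := intervalIntegral.continuousOn_primitive_interval
      (f := h) (μ := volume) (a := 0) (b := 1)
      (by rw [Set.uIcc_of_le (zero_le_one' ℝ)]; exact hh_int)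
    rwa [Set.uIcc_of_le (zero_le_one' ℝ)] at this
  have h01 : F 0 = F 1 := by rw [hF0, hF1]
  have hFzero : ∀ t ∈ Set.Icc (0:ℝ) 1, F t = 0 := by
    intro t ht
    rw [const_of_coeff_zero F hFcont h01 hFcoeff t ht, hF0]
  -- test function argument
  have hmain : ∀ᵐ x ∂(volume.restrict (Set.Icc (0:ℝ) 1)), h x = 0 := by
    apply ae_eq_zero_of_integral_contDiff_smul_eq_zero (μ := volume.restrict (Set.Icc (0:ℝ) 1))
    · exact hh_int.locallyIntegrable
    · intro g hg hgsupp
      have hgc : Continuous g := hg.continuous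
      have hcont2 : Continuous (fun x : ℝ => ((g x : ℝ) : ℂ)) := Complex.continuous_ofReal.comp hgc
      have hgd : Continuous (deriv g) := hg.continuous_deriv (by exact_mod_cast le_top)
      have hcont3 : Continuous (fun t : ℝ => ((deriv g t : ℝ) : ℂ)) :=
        Complex.continuous_ofReal.comp hgd
      have hpair := pairing h (fun t => ((deriv g t : ℝ) : ℂ)) hh_Ioc hcont3.integrableOn_Ioc
      have hR : (∫ t in (0:ℝ)..1, (∫ x in t..1, h x) * ((deriv g t : ℝ) : ℂ)) = 0 := by
        have hzz : ∀ t ∈ Set.uIcc (0:ℝ) 1, (∫ x in t..1, h x) * ((deriv g t : ℝ) : ℂ)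
            = (0 : ℂ) := by
          intro t ht
          rw [Set.uIcc_of_le (zero_le_one' ℝ)] at ht
          have hsub : (∫ x in t..1, h x) = 0 := by
            have h0t : IntervalIntegrable h volume 0 t := by
              apply hh_II.mono_set
              rw [Set.uIcc_of_le ht.1, Set.uIcc_of_le (zero_le_one' ℝ)]
              exact Set.Icc_subset_Icc le_rfl ht.2
            have := intervalIntegral.integral_interval_sub_left hh_II h0t
            have hFt : (∫ x in (0:ℝ)..t, h x) = 0 := hFzero t ht
            have hF1' : (∫ x in (0:ℝ)..1, h x) = 0 := hF1
            rw [hFt, hF1'] at this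
            rw [← this]
            ring
          rw [hsub, zero_mul]
        rw [intervalIntegral.integral_congr hzz]
        simp
      rw [hR] at hpair
      have hftc : ∀ x : ℝ, (∫ t in (0:ℝ)..x, ((deriv g t : ℝ) : ℂ)) = ((g x : ℂ) - (g 0 : ℂ)) := by
        intro x
        rw [intervalIntegral.integral_ofReal,
          intervalIntegral.integral_deriv_eq_sub
            (fun t _ => (hg.differentiable (by simp)).differentiableAt)
            (hgd.intervalIntegrable 0 x)]
        push_cast
        ring
      have hkey : (∫ x in (0:ℝ)..1, h x * ((g x : ℂ) - (g 0 : ℂ))) = 0 := by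
        rw [← hpair]
        apply intervalIntegral.integral_congr
        intro x _
        dsimp only
        rw [hftc x]
      have hgprod : (∫ x in (0:ℝ)..1, h x * (g x : ℂ)) = 0 := by
        have hsplit : ∀ x : ℝ, h x * ((g x : ℂ) - (g 0 : ℂ))
            = h x * (g x : ℂ) - h x * (g 0 : ℂ) := fun x => by ring
        rw [intervalIntegral.integral_congr (fun x _ => hsplit x),
          intervalIntegral.integral_sub
            (hh_II.mul_continuousOn hcont2.continuousOn)
            ((hh_II.mul_const _)),
          intervalIntegral.integral_mul_const] at hkey
        have hF1'' : (∫ x in (0:ℝ)..1, h x) = 0 := hF1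
        rw [hF1'', zero_mul, sub_zero] at hkey
        exact hkey
      calc ∫ x, g x • h x ∂(volume.restrict (Set.Icc (0:ℝ) 1))
          = ∫ x in Set.Icc (0:ℝ) 1, g x • h x := rfl
        _ = ∫ x in Set.Ioc (0:ℝ) 1, g x • h x := MeasureTheory.integral_Icc_eq_integral_Ioc
        _ = ∫ x in (0:ℝ)..1, g x • h x := (intervalIntegral.integral_of_le (zero_le_one' ℝ)).symm
        _ = ∫ x in (0:ℝ)..1, h x * (g x : ℂ) := by
            apply intervalIntegral.integral_congr
            intro x _
            dsimp only
            rw [Complex.real_smul]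
            ring
        _ = 0 := hgprod
  filter_upwards [hmain] with x hx
  have : f x - c₀ = 0 := hx
  rw [sub_eq_zero] at this
  rw [this]
end

section
/- Let q ≥ 2 be an integer and F a CDF on [0,1] satisfying the stationarity functional equation F(x) = F(0) + Σ_{j=0}^{q-1}[F((x+j)/q) − F(j/q)] for all x ∈ [0,1]. If the measure dF is absolutely continuous with respect to Lebesgue measure, then F(x) = x for all x ∈ [0,1]. -/
open MeasureTheory

lemma my_sum_range_mul {M : Type*} [AddCommMonoid M] (f : ℕ → M) (a b : ℕ) :
    ∑ m ∈ Finset.range (a * b), f m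
      = ∑ j ∈ Finset.range a, ∑ k ∈ Finset.range b, f (j * b + k) := by
  induction a with
  | zero => simp
  | succ a ih =>
    rw [Finset.sum_range_succ, ← ih, Nat.succ_mul, Finset.sum_range_add]

lemma my_iter (q : ℕ) (hq : 2 ≤ q) (F : ℝ → ℝ) (hF0 : F 0 = 0)
    (heq : ∀ x ∈ Set.Icc (0 : ℝ) 1,
      F x = ∑ j ∈ Finset.range q, (F ((x + j) / q) - F ((j : ℝ) / q)))
    (n : ℕ) :
    ∀ x ∈ Set.Icc (0 : ℝ) 1,
      F x = ∑ k ∈ Finset.range (q ^ n),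
        (F ((x + k) / (q : ℝ) ^ n) - F ((k : ℝ) / (q : ℝ) ^ n)) := by
  have hq0 : (0 : ℝ) < (q : ℝ) := by
    have : 0 < q := by omega
    exact_mod_cast this
  induction n with
  | zero => intro x hx; simp [hF0]
  | succ n ih =>
    intro x hx
    obtain ⟨hx0, hx1⟩ := hx
    have hqn : (0 : ℝ) < (q : ℝ) ^ n := by positivity
    have hqn1 : (0 : ℝ) < (q : ℝ) ^ (n + 1) := by positivity
    have hmem : ∀ k : ℕ, k < q ^ n → ∀ y : ℝ, 0 ≤ y → y ≤ 1 →
        (y + k) / (q : ℝ) ^ n ∈ Set.Icc (0 : ℝ) 1 := by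
      intro k hk y hy0 hy1
      have hkle : (k : ℝ) + 1 ≤ (q : ℝ) ^ n := by
        have : (k + 1 : ℕ) ≤ q ^ n := hk
        calc (k : ℝ) + 1 = ((k + 1 : ℕ) : ℝ) := by push_cast; ring
        _ ≤ ((q ^ n : ℕ) : ℝ) := by exact_mod_cast this
        _ = (q : ℝ) ^ n := by push_cast; ring
      constructor
      · positivity
      · rw [div_le_one hqn]; nlinarith [Nat.cast_nonneg (α := ℝ) k]
    calc F x = ∑ k ∈ Finset.range (q ^ n),
        (F ((x + k) / (q : ℝ) ^ n) - F ((k : ℝ) / (q : ℝ) ^ n)) := ih x ⟨hx0, hx1⟩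
      _ = ∑ k ∈ Finset.range (q ^ n), ∑ j ∈ Finset.range q,
          (F ((x + ((j * q ^ n + k : ℕ) : ℝ)) / (q : ℝ) ^ (n + 1))
            - F (((j * q ^ n + k : ℕ) : ℝ) / (q : ℝ) ^ (n + 1))) := by
        refine Finset.sum_congr rfl (fun k hk => ?_)
        rw [Finset.mem_range] at hk
        have h1 := heq _ (hmem k hk x hx0 hx1)
        have h2 := heq _ (hmem k hk 0 le_rfl zero_le_one)
        rw [zero_add] at h2
        rw [h1, h2, ← Finset.sum_sub_distrib]
        refine Finset.sum_congr rfl (fun j hj => ?_)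
        have e1 : ((x + k) / (q : ℝ) ^ n + j) / q
            = (x + ((j * q ^ n + k : ℕ) : ℝ)) / (q : ℝ) ^ (n + 1) := by
          push_cast
          field_simp
          ring
        have e2 : ((k : ℝ) / (q : ℝ) ^ n + j) / q
            = ((j * q ^ n + k : ℕ) : ℝ) / (q : ℝ) ^ (n + 1) := by
          push_cast
          field_simp
          ring
        rw [e1, e2]
        ring
      _ = ∑ k ∈ Finset.range (q ^ (n + 1)),
          (F ((x + k) / (q : ℝ) ^ (n + 1)) - F ((k : ℝ) / (q : ℝ) ^ (n + 1))) := by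
        rw [Finset.sum_comm, show q ^ (n + 1) = q * q ^ n by ring,
          my_sum_range_mul (fun m => F ((x + m) / (q : ℝ) ^ (n + 1))
          - F ((m : ℝ) / (q : ℝ) ^ (n + 1))) q (q ^ n)]

lemma my_per_interval (h g : ℝ → ℝ) (hint : Integrable h volume)
    (hgc : Continuous g) (hgint : Integrable g volume)
    (a w x ε' : ℝ) (hw : 0 < w) (hx0 : 0 ≤ x) (hx1 : x ≤ 1) (hε' : 0 ≤ ε')
    (hg : ∀ t ∈ Set.Icc a (a + w), |g t - g a| ≤ ε') :
    |(∫ t in a..(a + x * w), h t) - x * ∫ t in a..(a + w), h t|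
      ≤ 2 * (∫ t in a..(a + w), |h t - g t|) + 2 * ε' * w := by
  set c := x * w with hc
  have hc0 : 0 ≤ c := by positivity
  have hcw : c ≤ w := by nlinarith
  have hiG : ∀ u v : ℝ, IntervalIntegrable g volume u v := fun u v =>
    hgc.intervalIntegrable u v
  have hiHG : ∀ u v : ℝ, IntervalIntegrable (fun t => h t - g t) volume u v :=
    fun u v => (hint.sub hgint).intervalIntegrable
  have hiA : IntervalIntegrable (fun t => |h t - g t|) volume a (a + w) :=
    ((hint.sub hgint).abs).intervalIntegrable
  set D := ∫ t in a..(a + w), |h t - g t| with hD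
  have hD0 : 0 ≤ D := by
    apply intervalIntegral.integral_nonneg (by linarith)
    intro u _; exact abs_nonneg _
  have d1 : ∀ b : ℝ, (∫ t in a..b, h t)
      = (∫ t in a..b, (h t - g t)) + ((∫ t in a..b, (g t - g a)) + (b - a) * g a) := by
    intro b
    have e2 : (∫ t in a..b, (g t - g a))
        = (∫ t in a..b, g t) - ∫ _t in a..b, (g a : ℝ) :=
      intervalIntegral.integral_sub (hiG a b) intervalIntegrable_const
    have e1 : (∫ t in a..b, (h t - g t))
        = (∫ t in a..b, h t) - ∫ t in a..b, g t :=
      intervalIntegral.integral_sub hint.intervalIntegrable (hiG a b)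
    rw [e1, e2, intervalIntegral.integral_const, smul_eq_mul]
    ring
  set A := ∫ t in a..(a + c), (h t - g t) with hA'
  set B := ∫ t in a..(a + w), (h t - g t) with hB'
  set P := ∫ t in a..(a + c), (g t - g a) with hP'
  set Q := ∫ t in a..(a + w), (g t - g a) with hQ'
  have hA : |A| ≤ D := by
    calc |A| ≤ ∫ t in a..(a + c), |h t - g t| :=
          intervalIntegral.abs_integral_le_integral_abs (by linarith)
    _ ≤ D := by
        apply intervalIntegral.integral_mono_interval le_rfl (by linarith) (by linarith)
          (Filter.Eventually.of_forall fun t => abs_nonneg _) hiA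
  have hB : |B| ≤ D :=
    intervalIntegral.abs_integral_le_integral_abs (by linarith)
  have bound : ∀ b : ℝ, a ≤ b → b ≤ a + w →
      |∫ t in a..b, (g t - g a)| ≤ ε' * (b - a) := by
    intro b hab hbw
    have := intervalIntegral.norm_integral_le_of_norm_le_const
      (C := ε') (f := fun t => g t - g a) (a := a) (b := b) ?_
    · rw [Real.norm_eq_abs] at this
      calc |∫ t in a..b, (g t - g a)| ≤ ε' * |b - a| := this
      _ = ε' * (b - a) := by rw [abs_of_nonneg (by linarith)]
    · intro t ht
      rw [Set.uIoc_of_le hab] at ht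
      rw [Real.norm_eq_abs]
      exact hg t ⟨le_of_lt ht.1, le_trans ht.2 hbw⟩
  have hP : |P| ≤ ε' * c := by
    have := bound (a + c) (by linarith) (by linarith)
    simpa using this
  have hQ : |Q| ≤ ε' * w := by
    have := bound (a + w) (by linarith) le_rfl
    simpa using this
  have hx' : |x| ≤ 1 := abs_le.mpr ⟨by linarith, hx1⟩
  have hxB : |x * B| ≤ D := by
    rw [abs_mul]
    calc |x| * |B| ≤ 1 * D := mul_le_mul hx' hB (abs_nonneg _) zero_le_one
    _ = D := one_mul D
  have hxQ : |x * Q| ≤ ε' * w := by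
    rw [abs_mul]
    calc |x| * |Q| ≤ 1 * (ε' * w) := mul_le_mul hx' hQ (abs_nonneg _) zero_le_one
    _ = ε' * w := one_mul _
  have expr_eq : (∫ t in a..(a + c), h t) - x * ∫ t in a..(a + w), h t
      = A - x * B + (P - x * Q) := by
    rw [d1 (a + c), d1 (a + w), ← hA', ← hB', ← hP', ← hQ']
    have e3 : a + c - a = c := by ring
    have e4 : a + w - a = w := by ring
    rw [e3, e4, hc]
    ring
  rw [expr_eq]
  have h1 := abs_le.mp hA
  have h2 := abs_le.mp hxB
  have h3 := abs_le.mp hP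
  have h4 := abs_le.mp hxQ
  rw [abs_le]
  constructor <;> nlinarith

/-- If the CDF of a probability measure on `[0,1]` satisfies the stationarity functional
equation and the measure is absolutely continuous w.r.t. Lebesgue measure, then the CDF
is the uniform CDF on `[0,1]`. -/
theorem stmt_6 (q : ℕ) (hq : 2 ≤ q) (μ : Measure ℝ) [IsProbabilityMeasure μ]
    (hsupp : μ (Set.Icc 0 1) = 1)
    (F : ℝ → ℝ) (hF : ∀ x, F x = (μ (Set.Iic x)).toReal)
    (heq : ∀ x ∈ Set.Icc (0 : ℝ) 1,
      F x = F 0 + ∑ j ∈ Finset.range q, (F ((x + j) / q) - F ((j : ℝ) / q)))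
    (hac : μ ≪ volume) :
    ∀ x ∈ Set.Icc (0 : ℝ) 1, F x = x := by
  set h : ℝ → ℝ := fun t => (μ.rnDeriv volume t).toReal with hh
  have hint : Integrable h volume := Measure.integrable_toReal_rnDeriv
  have hFdiff : ∀ a b : ℝ, a ≤ b → F b - F a = ∫ t in a..b, h t := by
    intro a b hab
    rw [hF, hF, intervalIntegral.integral_of_le hab,
      Measure.setIntegral_toReal_rnDeriv hac (Set.Ioc a b)]
    have hsplit : μ (Set.Iic b) = μ (Set.Iic a) + μ (Set.Ioc a b) := by
      rw [← measure_union (Set.Iic_disjoint_Ioc le_rfl) measurableSet_Ioc,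
        Set.Iic_union_Ioc_eq_Iic hab]
    rw [hsplit, ENNReal.toReal_add (measure_ne_top μ _) (measure_ne_top μ _)]
    rw [measureReal_def]
    ring
  have hcompl : μ (Set.Icc (0:ℝ) 1)ᶜ = 0 := by
    rw [measure_compl measurableSet_Icc (measure_ne_top μ _), hsupp, measure_univ]
    simp
  have hF0 : F 0 = 0 := by
    have h1 : μ (Set.Iio (0:ℝ)) = 0 := by
      refine measure_mono_null (fun t ht => ?_) hcompl
      simp only [Set.mem_compl_iff, Set.mem_Icc, Set.mem_Iio] at *
      intro hc; linarith [hc.1]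
    have h2 : μ {(0:ℝ)} = 0 := hac (by simp)
    have h3 : μ (Set.Iic (0:ℝ)) = 0 := by
      have e : Set.Iic (0:ℝ) = Set.Iio 0 ∪ {0} := by
        ext t; simp [le_iff_lt_or_eq]
      rw [e]
      exact le_antisymm ((measure_union_le _ _).trans (by simp [h1, h2])) (zero_le)
    rw [hF, h3]; simp
  have hIic1 : μ (Set.Iic (1:ℝ)) = 1 := by
    refine le_antisymm prob_le_one ?_
    rw [← hsupp]
    exact measure_mono (fun t ht => ht.2)
  have hint01 : ∫ t in (0:ℝ)..1, h t = 1 := by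
    have hd := hFdiff 0 1 zero_le_one
    rw [hF0, sub_zero, hF, hIic1] at hd
    rw [← hd]; simp
  have heq' : ∀ y ∈ Set.Icc (0 : ℝ) 1,
      F y = ∑ j ∈ Finset.range q, (F ((y + j) / q) - F ((j : ℝ) / q)) := by
    intro y hy
    have := heq y hy
    rwa [hF0, zero_add] at this
  intro x hx
  obtain ⟨hx0, hx1⟩ := hx
  have key : ∀ ε : ℝ, 0 < ε → |F x - x| ≤ ε := by
    intro ε hε
    have hε8 : (0:ℝ) < ε / 8 := by linarith
    obtain ⟨g, hgsupp, hgL1, hgc, hgint⟩ :=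
      hint.exists_hasCompactSupport_integral_sub_le hε8
    have hgu : UniformContinuous g :=
      hgc.uniformContinuous_of_tendsto_cocompact hgsupp.is_zero_at_infty
    obtain ⟨δ, hδ0, hδ⟩ := Metric.uniformContinuous_iff.mp hgu (ε / 8) hε8
    have hq1 : (1:ℝ) < (q:ℝ) := by exact_mod_cast (by omega : 1 < q)
    obtain ⟨n, hn⟩ := pow_unbounded_of_one_lt (1 / δ) hq1
    set N : ℝ := (q:ℝ) ^ n with hNdef
    have hN0 : 0 < N := by positivity
    have hNδ : 1 / N < δ := by
      rw [div_lt_iff₀ hN0]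
      have : 1 < δ * N := by
        calc (1:ℝ) = δ * (1 / δ) := by field_simp
        _ < δ * N := by exact mul_lt_mul_of_pos_left hn hδ0
      linarith
    set w : ℝ := 1 / N with hwdef
    have hw0 : 0 < w := by positivity
    have hcast : ((q ^ n : ℕ) : ℝ) = N := by push_cast; rfl
    set a : ℕ → ℝ := fun k => (k : ℝ) / N with ha
    have hastep : ∀ k : ℕ, a (k + 1) = a k + w := by
      intro k
      simp only [ha, hwdef]
      push_cast
      field_simp
    have hIabs : ∀ u v : ℝ, IntervalIntegrable (fun t => |h t - g t|) volume u v :=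
      fun u v => ((hint.sub hgint).abs).intervalIntegrable
    have ha0 : a 0 = 0 := by simp [ha]
    have haN : a (q ^ n) = 1 := by
      simp only [ha, hcast]
      exact div_self (ne_of_gt hN0)
    have hsumh : ∑ k ∈ Finset.range (q ^ n), ∫ t in a k..(a k + w), h t = 1 := by
      calc ∑ k ∈ Finset.range (q ^ n), ∫ t in a k..(a k + w), h t
          = ∑ k ∈ Finset.range (q ^ n), ∫ t in a k..a (k + 1), h t :=
            Finset.sum_congr rfl (fun k _ => by rw [hastep k])
      _ = ∫ t in (a 0)..(a (q ^ n)), h t :=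
            intervalIntegral.sum_integral_adjacent_intervals
              (fun k _ => hint.intervalIntegrable)
      _ = 1 := by rw [ha0, haN, hint01]
    have hadj2 : ∑ k ∈ Finset.range (q ^ n), ∫ t in a k..(a k + w), |h t - g t|
        = ∫ t in (0:ℝ)..1, |h t - g t| := by
      calc ∑ k ∈ Finset.range (q ^ n), ∫ t in a k..(a k + w), |h t - g t|
          = ∑ k ∈ Finset.range (q ^ n), ∫ t in a k..a (k + 1), |h t - g t| :=
            Finset.sum_congr rfl (fun k _ => by rw [hastep k])
      _ = ∫ t in (a 0)..(a (q ^ n)), |h t - g t| :=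
            intervalIntegral.sum_integral_adjacent_intervals (fun k _ => hIabs _ _)
      _ = _ := by rw [ha0, haN]
    have habs_le : ∫ t in (0:ℝ)..1, |h t - g t| ≤ ε / 8 := by
      rw [intervalIntegral.integral_of_le zero_le_one]
      calc ∫ t in Set.Ioc (0:ℝ) 1, |h t - g t| ≤ ∫ t, |h t - g t| :=
            setIntegral_le_integral ((hint.sub hgint).abs)
              (Filter.Eventually.of_forall fun t => abs_nonneg _)
      _ ≤ ε / 8 := by simpa [Real.norm_eq_abs] using hgL1
    have hiterx := my_iter q hq F hF0 heq' n x ⟨hx0, hx1⟩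
    rw [← hNdef] at hiterx
    have hFx : F x = ∑ k ∈ Finset.range (q ^ n), ∫ t in a k..(a k + x * w), h t := by
      rw [hiterx]
      refine Finset.sum_congr rfl (fun k hk => ?_)
      have hle : (k:ℝ) / N ≤ (x + k) / N :=
        (div_le_div_iff_of_pos_right hN0).mpr (by linarith)
      have hd := hFdiff ((k:ℝ) / N) ((x + k) / N) hle
      have harg : (x + (k:ℝ)) / N = a k + x * w := by
        simp only [ha, hwdef, mul_one_div, ← add_div]
        ring_nf
      rw [hd, harg]
    have hdiff : F x - x = ∑ k ∈ Finset.range (q ^ n),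
        ((∫ t in a k..(a k + x * w), h t) - x * ∫ t in a k..(a k + w), h t) := by
      rw [Finset.sum_sub_distrib, ← hFx, ← Finset.mul_sum, hsumh, mul_one]
    have hgk : ∀ k : ℕ, ∀ t ∈ Set.Icc (a k) (a k + w), |g t - g (a k)| ≤ ε / 8 := by
      intro k t ht
      refine le_of_lt ?_
      have hdist : dist t (a k) < δ := by
        rw [Real.dist_eq, abs_of_nonneg (by linarith [ht.1])]
        have := ht.2
        calc t - a k ≤ w := by linarith
        _ < δ := by rw [hwdef]; exact hNδ
      have := hδ hdist
      rwa [Real.dist_eq] at this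
    calc |F x - x| = |∑ k ∈ Finset.range (q ^ n),
          ((∫ t in a k..(a k + x * w), h t) - x * ∫ t in a k..(a k + w), h t)| := by
          rw [hdiff]
    _ ≤ ∑ k ∈ Finset.range (q ^ n),
          |(∫ t in a k..(a k + x * w), h t) - x * ∫ t in a k..(a k + w), h t| :=
          Finset.abs_sum_le_sum_abs _ _
    _ ≤ ∑ k ∈ Finset.range (q ^ n),
          (2 * (∫ t in a k..(a k + w), |h t - g t|) + 2 * (ε / 8) * w) :=
          Finset.sum_le_sum (fun k _ =>
            my_per_interval h g hint hgc hgint (a k) w x (ε / 8) hw0 hx0 hx1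
              (le_of_lt hε8) (hgk k))
    _ = 2 * (∫ t in (0:ℝ)..1, |h t - g t|) + ((q ^ n : ℕ) : ℝ) * (2 * (ε / 8) * w) := by
          rw [Finset.sum_add_distrib, ← Finset.mul_sum, hadj2, Finset.sum_const,
            Finset.card_range, nsmul_eq_mul]
    _ ≤ 2 * (ε / 8) + ((q ^ n : ℕ) : ℝ) * (2 * (ε / 8) * w) := by
          have : ((q ^ n : ℕ) : ℝ) * (2 * (ε / 8) * w) = ((q ^ n : ℕ) : ℝ) * (2 * (ε / 8) * w) := rfl
          nlinarith [habs_le]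
    _ ≤ ε := by
          rw [hcast, hwdef]
          have : N * (2 * (ε / 8) * (1 / N)) = 2 * (ε / 8) := by field_simp
          rw [this]
          linarith
  by_contra hne
  have h0 : 0 < |F x - x| := abs_pos.mpr (sub_ne_zero.mpr hne)
  have := key (|F x - x| / 2) (by linarith)
  linarith
end

section
/- Let q ≥ 2 be an integer and F a CDF on [0,1] satisfying the stationarity functional equation. If s ∈ [0,1] is a discontinuity point of F, then there exist n ∈ ℕ and a cycle (s₁,...,s_n) with s = s₁ such that s₁,...,s_n are all discontinuity points of F and the jumps of F at these n points are all equal. -/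
open MeasureTheory Filter Function Set

/-- Every discontinuity point of a CDF satisfying the stationarity functional equation
belongs to a cycle of purely repeating base-`q` numbers which are all discontinuity
points with equal jumps. -/
theorem stmt_12 (q : ℕ) (hq : 2 ≤ q) (μ : Measure ℝ) [IsProbabilityMeasure μ]
    (hsupp : μ (Set.Icc 0 1) = 1)
    (F : ℝ → ℝ) (hF : ∀ x, F x = (μ (Set.Iic x)).toReal)
    (heq : ∀ x ∈ Set.Icc (0 : ℝ) 1,
      F x = F 0 + ∑ j ∈ Finset.range q, (F ((x + j) / q) - F ((j : ℝ) / q)))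
    (s₀ : ℝ) (hs₀ : s₀ ∈ Set.Icc (0 : ℝ) 1) (hdisc : ¬ ContinuousAt F s₀) :
    ∃ (n : ℕ) (hn : 0 < n) (t : Fin n → ℕ) (s : Fin n → ℝ),
      (∀ i, t i < q) ∧
      (∀ k : Fin n, s k =
        (∑ j : Fin n, (t (j - k) : ℝ) / (q : ℝ) ^ ((j : ℕ) + 1)) / (1 - ((q : ℝ) ^ n)⁻¹)) ∧
      Function.Injective s ∧
      s ⟨0, hn⟩ = s₀ ∧
      (∀ k : Fin n, ¬ ContinuousAt F (s k)) ∧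
      (∀ k : Fin n, μ {s k} = μ {s₀}) := by
  have hq0 : (0:ℝ) < q := by positivity
  have hq1 : (1:ℝ) < q := by exact_mod_cast hq.trans_lt' one_lt_two
  set G := ProbabilityTheory.cdf μ with hG
  have hFG : F = ⇑G := funext fun x => by
    rw [hF, hG, ProbabilityTheory.cdf_eq_real]; rfl
  have hmono : Monotone F := hFG ▸ G.mono
  have hjump : ∀ x : ℝ, μ {x} = ENNReal.ofReal (F x - Function.leftLim F x) := by
    intro x
    conv_lhs => rw [← ProbabilityTheory.measure_cdf μ]
    rw [← hG, StieltjesFunction.measure_singleton, ← hFG]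
  have hll : ∀ x : ℝ, Function.leftLim F x ≤ F x := fun x => hmono.leftLim_le le_rfl
  -- Key jump relation
  have keyA : ∀ x : ℝ, 0 < x → x ≤ 1 →
      μ {x} = ∑ j ∈ Finset.range q, μ {(x + (j:ℝ)) / q} := by
    intro x hx0 hx1
    have hg : ∀ j ∈ Finset.range q,
        Tendsto (fun y : ℝ => (y + (j:ℝ)) / q) (nhdsWithin x (Iio x))
          (nhdsWithin ((x + j) / q) (Iio ((x + j) / q))) := by
      intro j _
      apply tendsto_nhdsWithin_of_tendsto_nhds_of_eventually_within
      · exact ((tendsto_id.add_const _).div_const _).mono_left nhdsWithin_le_nhds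
      · filter_upwards [self_mem_nhdsWithin] with y (hy : y < x)
        exact div_lt_div_of_pos_right (by linarith) hq0
    have h1 : Tendsto F (nhdsWithin x (Iio x)) (nhds (Function.leftLim F x)) :=
      hmono.tendsto_leftLim x
    have h2 : Tendsto (fun y : ℝ => F 0 + ∑ j ∈ Finset.range q, (F ((y + j) / q) - F ((j:ℝ) / q)))
        (nhdsWithin x (Iio x))
        (nhds (F 0 + ∑ j ∈ Finset.range q,
          (Function.leftLim F ((x + j) / q) - F ((j:ℝ) / q)))) := by
      refine tendsto_const_nhds.add (tendsto_finset_sum _ fun j hj => ?_)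
      exact ((hmono.tendsto_leftLim _).comp (hg j hj)).sub tendsto_const_nhds
    have heqv : (fun y : ℝ => F 0 + ∑ j ∈ Finset.range q, (F ((y + j) / q) - F ((j:ℝ) / q)))
        =ᶠ[nhdsWithin x (Iio x)] F := by
      filter_upwards [Ioo_mem_nhdsLT_of_mem (⟨hx0, le_rfl⟩ : x ∈ Ioc 0 x)] with y hy
      exact (heq y ⟨hy.1.le, hy.2.le.trans hx1⟩).symm
    have hL : Function.leftLim F x
        = F 0 + ∑ j ∈ Finset.range q, (Function.leftLim F ((x + j) / q) - F ((j:ℝ) / q)) :=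
      tendsto_nhds_unique h1 (h2.congr' heqv)
    have hFx := heq x ⟨hx0.le, hx1⟩
    have hsub : F x - Function.leftLim F x
        = ∑ j ∈ Finset.range q, (F ((x + j) / q) - Function.leftLim F ((x + j) / q)) := by
      rw [hFx, hL, add_sub_add_left_eq_sub, ← Finset.sum_sub_distrib]
      exact Finset.sum_congr rfl fun j _ => by ring
    rw [hjump x, hsub, ENNReal.ofReal_sum_of_nonneg (fun j _ => sub_nonneg.2 (hll _))]
    exact Finset.sum_congr rfl fun j _ => (hjump _).symm
  -- continuity characterizations
  have hnotcont : ∀ x : ℝ, 0 < μ {x} → ¬ ContinuousAt F x := by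
    intro x hx hc
    have h1 : Tendsto F (nhdsWithin x (Iio x)) (nhds (F x)) :=
      (hc.continuousWithinAt : ContinuousWithinAt F (Iio x) x)
    have h3 : Function.leftLim F x = F x := tendsto_nhds_unique (hmono.tendsto_leftLim x) h1
    rw [hjump x, h3, sub_self, ENNReal.ofReal_zero] at hx
    exact lt_irrefl _ hx
  have hcont : ∀ x : ℝ, μ {x} = 0 → ContinuousAt F x := by
    intro x hx
    have hL : Function.leftLim F x = F x := by
      have h := hjump x
      rw [hx, eq_comm, ENNReal.ofReal_eq_zero] at h
      linarith [hll x]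
    rw [continuousAt_iff_continuous_left'_right']
    refine ⟨hmono.continuousWithinAt_Iio_iff_leftLim_eq.2 hL, ?_⟩
    rw [hFG]
    exact (G.right_continuous x).mono Ioi_subset_Ici_self
  have hs0pos : 0 < μ {s₀} := by
    rcases eq_or_lt_of_le (zero_le : 0 ≤ μ {s₀}) with h | h
    · exact absurd (hcont s₀ h.symm) hdisc
    · exact h
  -- special cases s₀ = 0 and s₀ = 1
  rcases eq_or_ne s₀ 0 with rfl | hne0
  · refine ⟨1, one_pos, fun _ => 0, fun _ => 0, fun i => by show 0 < q; omega, ?_, ?_, rfl, ?_, ?_⟩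
    · intro k; simp
    · intro a b _; exact Subsingleton.elim a b
    · intro k; exact hdisc
    · intro k; rfl
  rcases eq_or_ne s₀ 1 with rfl | hne1
  · refine ⟨1, one_pos, fun _ => q - 1, fun _ => 1,
      fun i => by show q - 1 < q; omega, ?_, ?_, rfl, ?_, ?_⟩
    · intro k
      have h1 : ((q - 1 : ℕ) : ℝ) = (q:ℝ) - 1 := by
        push_cast [Nat.cast_sub (by omega : 1 ≤ q)]; ring
      have hqne : (q:ℝ) ≠ 0 := by positivity
      have h2 : (1:ℝ) - ((q:ℝ)^1)⁻¹ ≠ 0 := by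
        rw [pow_one]
        have : (q:ℝ)⁻¹ < 1 := inv_lt_one_of_one_lt₀ hq1
        intro h; linarith
      show (1:ℝ) = _
      rw [Fin.sum_univ_one, eq_div_iff h2, h1]
      simp only [Fin.val_zero, zero_add, pow_one]
      field_simp
    · intro a b _; exact Subsingleton.elim a b
    · intro k; exact hdisc
    · intro k; rfl
  -- main case: s₀ ∈ (0,1)
  classical
  have hqne : (q:ℝ) ≠ 0 := ne_of_gt hq0
  have hs₀Ioo : s₀ ∈ Set.Ioo (0:ℝ) 1 := ⟨hs₀.1.lt_of_ne (Ne.symm hne0), hs₀.2.lt_of_ne hne1⟩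
  set X : ℕ → ℝ := fun k => (fun y => Int.fract ((q:ℝ) * y))^[k] s₀ with hXdef
  have hX0 : X 0 = s₀ := rfl
  have hXs : ∀ k, X (k+1) = Int.fract ((q:ℝ) * X k) := fun k =>
    Function.iterate_succ_apply' _ k s₀
  have hshift : ∀ i j m : ℕ, X i = X j → X (m + i) = X (m + j) := by
    intro i j m h
    show (fun y => Int.fract ((q:ℝ) * y))^[m + i] s₀
        = (fun y => Int.fract ((q:ℝ) * y))^[m + j] s₀
    rw [Function.iterate_add_apply, Function.iterate_add_apply]
    exact congrArg _ h
  -- representation of a point of (0,1) via its image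
  have rep : ∀ y : ℝ, y ∈ Set.Ioo (0:ℝ) 1 →
      ∃ m : ℕ, m < q ∧ y = (Int.fract ((q:ℝ)*y) + (m:ℝ))/q := by
    intro y hy
    have h0 : (0:ℝ) ≤ (q:ℝ)*y := by nlinarith [hy.1]
    have hfl0 : 0 ≤ ⌊(q:ℝ)*y⌋ := Int.floor_nonneg.2 h0
    refine ⟨(⌊(q:ℝ)*y⌋).toNat, ?_, ?_⟩
    · have h1 : (q:ℝ)*y < (q:ℝ) := by nlinarith [hy.2]
      have h2 : ⌊(q:ℝ)*y⌋ < (q:ℤ) := Int.floor_lt.2 (by exact_mod_cast h1)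
      omega
    · have hc : (((⌊(q:ℝ)*y⌋).toNat : ℕ) : ℝ) = ((⌊(q:ℝ)*y⌋ : ℤ) : ℝ) := by
        exact_mod_cast Int.toNat_of_nonneg hfl0
      rw [hc, ← Int.self_sub_floor]
      field_simp
      ring
  -- step lemma
  have step : ∀ y : ℝ, y ∈ Set.Ioo (0:ℝ) 1 → μ {s₀} ≤ μ {y} →
      Int.fract ((q:ℝ)*y) ∈ Set.Ioo (0:ℝ) 1 ∧ μ {y} ≤ μ {Int.fract ((q:ℝ)*y)} := by
    intro y hy hμy
    obtain ⟨m, hmq, hrep⟩ := rep y hy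
    have hz1 : Int.fract ((q:ℝ)*y) < 1 := Int.fract_lt_one _
    rcases eq_or_lt_of_le (Int.fract_nonneg ((q:ℝ)*y)) with hz0 | hz0
    · exfalso
      rw [← hz0, zero_add] at hrep
      have hm1 : 1 ≤ m := by
        by_contra h
        have hm0 : m = 0 := by omega
        rw [hm0] at hrep
        norm_num at hrep
        rw [hrep] at hy
        exact lt_irrefl _ hy.1
      have hterm1 : ((1:ℝ) + ((q-1:ℕ):ℝ))/q = 1 := by
        rw [Nat.cast_sub (by omega : 1 ≤ q)]
        field_simp
        norm_num
      have hterm2 : ((1:ℝ) + ((m-1:ℕ):ℝ))/q = y := by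
        rw [hrep, Nat.cast_sub hm1]
        push_cast
        ring_nf
      have hpair : μ {(1:ℝ)} + μ {y} ≤ μ {(1:ℝ)} := by
        calc μ {(1:ℝ)} + μ {y}
            = ∑ i ∈ ({q-1, m-1} : Finset ℕ), μ {((1:ℝ) + (i:ℝ))/q} := by
              rw [Finset.sum_pair (by omega : q-1 ≠ m-1), hterm1, hterm2]
          _ ≤ ∑ i ∈ Finset.range q, μ {((1:ℝ) + (i:ℝ))/q} := by
              refine Finset.sum_le_sum_of_subset ?_
              intro i hi
              simp only [Finset.mem_insert, Finset.mem_singleton] at hi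
              rcases hi with rfl | rfl <;> exact Finset.mem_range.2 (by omega)
          _ = μ {(1:ℝ)} := (keyA 1 one_pos le_rfl).symm
      have h1 : μ {y} + μ {(1:ℝ)} ≤ 0 + μ {(1:ℝ)} := by
        rw [zero_add, add_comm]; exact hpair
      have hy0 : μ {y} ≤ 0 := ENNReal.le_of_add_le_add_right (measure_ne_top μ _) h1
      exact hs0pos.ne' (le_antisymm (hμy.trans hy0) zero_le)
    · refine ⟨⟨hz0, hz1⟩, ?_⟩
      calc μ {y} = μ {((Int.fract ((q:ℝ)*y)) + (m:ℝ))/q} := by rw [← hrep]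
        _ ≤ ∑ i ∈ Finset.range q, μ {((Int.fract ((q:ℝ)*y)) + (i:ℝ))/q} :=
            Finset.single_le_sum (f := fun i : ℕ => μ {((Int.fract ((q:ℝ)*y)) + (i:ℝ))/q})
              (fun i _ => zero_le) (Finset.mem_range.2 hmq)
        _ = μ {Int.fract ((q:ℝ)*y)} := (keyA _ hz0 hz1.le).symm
  -- invariant along the orbit
  have inv : ∀ k, X k ∈ Set.Ioo (0:ℝ) 1 ∧ μ {s₀} ≤ μ {X k} := by
    intro k
    induction k with
    | zero => exact ⟨hs₀Ioo, le_rfl⟩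
    | succ k ih =>
      obtain ⟨h1, h2⟩ := step (X k) ih.1 ih.2
      rw [← hXs k] at h1 h2
      exact ⟨h1, ih.2.trans h2⟩
  have monoX : ∀ j k : ℕ, j ≤ k → μ {X j} ≤ μ {X k} := by
    intro j k hjk
    induction hjk with
    | refl => exact le_rfl
    | @step k' h ih =>
      refine ih.trans ?_
      have := (step (X k') (inv k').1 (inv k').2).2
      rw [← hXs k'] at this
      exact this
  -- finiteness of large atoms
  have hfin : Set.Finite {x : ℝ | μ {s₀} ≤ μ {x}} :=
    Measure.finite_const_le_meas_of_disjoint_iUnion μ hs0pos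
      (fun x : ℝ => measurableSet_singleton x)
      (fun x y hxy => Set.disjoint_singleton.2 hxy) (measure_ne_top μ _)
  have hP : ∃ a : ℕ, ∃ b, a < b ∧ X a = X b := by
    obtain ⟨a, -, b, -, hab, hXab⟩ := Set.infinite_univ.exists_ne_map_eq_of_mapsTo
      (Set.mapsTo_univ_iff.2 fun k => (inv k).2 : Set.MapsTo X Set.univ {x | μ {s₀} ≤ μ {x}})
      hfin
    rcases hab.lt_or_gt with h | h
    exacts [⟨a, b, h, hXab⟩, ⟨b, a, h, hXab.symm⟩]
  obtain ⟨b, hab, hXab⟩ := Nat.find_spec hP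
  have ha₀0 : Nat.find hP = 0 := by
    by_contra h
    set a₀ := Nat.find hP with ha₀def
    obtain ⟨m, hm⟩ : ∃ m, a₀ = m + 1 := ⟨a₀ - 1, by omega⟩
    have hne : X m ≠ X (b-1) := by
      intro hcontra
      exact Nat.find_min hP (show m < a₀ by omega) ⟨b-1, by omega, hcontra⟩
    obtain ⟨m₁, hm₁q, hrep₁⟩ := rep (X m) (inv m).1
    obtain ⟨m₂, hm₂q, hrep₂⟩ := rep (X (b-1)) (inv (b-1)).1
    have e₁ : X m = (X a₀ + (m₁:ℝ))/q := by
      rw [hrep₁]; congr 2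
      rw [← hXs m, ← hm]
    have e₂ : X (b-1) = (X a₀ + (m₂:ℝ))/q := by
      rw [hrep₂]; congr 2
      rw [← hXs (b-1), show b - 1 + 1 = b by omega, ← hXab]
    have hmm : m₁ ≠ m₂ := fun hc => hne (by rw [e₁, e₂, hc])
    have hx := (inv a₀).1
    have hpair : μ {X m} + μ {X (b-1)} ≤ μ {X a₀} := by
      calc μ {X m} + μ {X (b-1)}
          = ∑ i ∈ ({m₁, m₂} : Finset ℕ), μ {(X a₀ + (i:ℝ))/q} := by
            rw [Finset.sum_pair hmm, ← e₁, ← e₂]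
        _ ≤ ∑ i ∈ Finset.range q, μ {(X a₀ + (i:ℝ))/q} := by
            refine Finset.sum_le_sum_of_subset ?_
            intro i hi
            simp only [Finset.mem_insert, Finset.mem_singleton] at hi
            rcases hi with rfl | rfl <;> exact Finset.mem_range.2 (by omega)
        _ = μ {X a₀} := (keyA _ hx.1 hx.2.le).symm
    have h1 : μ {s₀} + μ {X a₀} ≤ 0 + μ {X a₀} := by
      rw [zero_add]
      exact le_trans (add_le_add (inv m).2 (monoX a₀ (b-1) (by omega))) hpair
    have h2 : μ {s₀} ≤ 0 := ENNReal.le_of_add_le_add_right (measure_ne_top μ _) h1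
    exact hs0pos.ne' (le_antisymm h2 zero_le)
  have hQ : ∃ b : ℕ, 0 < b ∧ X 0 = X b := ⟨b, by omega, by rw [← ha₀0]; exact hXab⟩
  set n := Nat.find hQ with hndef
  obtain ⟨hn, hX0n⟩ := Nat.find_spec hQ
  have hper : ∀ k, X (k + n) = X k := by
    intro k
    have h := hshift n 0 k hX0n.symm
    simpa using h
  have hdist : ∀ i j, i < n → j < n → X i = X j → i = j := by
    intro i j hi hj hij
    by_contra hne
    wlog h : i < j generalizing i j
    · exact this j i hj hi hij.symm (Ne.symm hne) (by omega)
    have ha : X ((n-j) + i) = X ((n-j) + j) := hshift i j (n-j) hij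
    rw [show (n-j) + j = n by omega] at ha
    rw [← hX0n] at ha
    exact Nat.find_min hQ (show (n-j)+i < n by omega) ⟨by omega, ha.symm⟩
  have hmassn : ∀ k, k ≤ n → μ {X k} = μ {X 0} := by
    intro k hk
    refine le_antisymm ?_ (monoX 0 k (Nat.zero_le _))
    refine (monoX k n hk).trans_eq ?_
    rw [← hX0n]
  -- digits
  set d : ℕ → ℕ := fun k => (⌊(q:ℝ) * X k⌋).toNat with hddef
  have hdlt : ∀ k, d k < q := by
    intro k
    have h := (inv k).1
    have h1 : (q:ℝ) * X k < (q:ℝ) := by nlinarith [h.2]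
    have h2 : ⌊(q:ℝ) * X k⌋ < (q:ℤ) := Int.floor_lt.2 (by exact_mod_cast h1)
    have h3 : d k = (⌊(q:ℝ) * X k⌋).toNat := rfl
    omega
  have hdrec : ∀ k, X (k+1) = (q:ℝ) * X k - (d k : ℝ) := by
    intro k
    have h := (inv k).1
    have h0 : 0 ≤ ⌊(q:ℝ) * X k⌋ := Int.floor_nonneg.2 (by nlinarith [h.1])
    have hc : ((d k : ℕ) : ℝ) = ((⌊(q:ℝ) * X k⌋ : ℤ) : ℝ) := by
      exact_mod_cast Int.toNat_of_nonneg h0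
    rw [hXs k, hc, ← Int.self_sub_floor]
  -- telescoping
  have tel : ∀ i m : ℕ,
      X i = (∑ j ∈ Finset.range m, (d (i+j) : ℝ)/(q:ℝ)^(j+1)) + X (i+m)/(q:ℝ)^m := by
    intro i m
    induction m with
    | zero => simp
    | succ m ih =>
      rw [Finset.sum_range_succ]
      have h1 : X (i + m) = ((d (i+m):ℝ) + X (i+(m+1)))/q := by
        rw [show i + (m+1) = (i+m)+1 by omega, hdrec (i+m)]
        field_simp
        ring
      rw [ih, h1]
      have hqp : (q:ℝ)^m ≠ 0 := by positivity
      field_simp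
      ring
  have hqnpos : (0:ℝ) < 1 - ((q:ℝ)^n)⁻¹ := by
    have h1 : (1:ℝ) < (q:ℝ)^n := one_lt_pow₀ hq1 hn.ne'
    have h2 := inv_lt_one_of_one_lt₀ h1
    linarith
  have keyF : ∀ i, X i
      = (∑ j ∈ Finset.range n, (d (i+j) : ℝ)/(q:ℝ)^(j+1)) / (1 - ((q:ℝ)^n)⁻¹) := by
    intro i
    have h := tel i n
    rw [hper i] at h
    rw [eq_div_iff (ne_of_gt hqnpos)]
    have hqn : (q:ℝ)^n ≠ 0 := by positivity
    field_simp at h ⊢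
    linarith [h]
  have hpermul : ∀ c k, X (k + n*c) = X k := by
    intro c
    induction c with
    | zero => simp
    | succ c ih =>
      intro k
      rw [show k + n*(c+1) = (k + n*c) + n by ring, hper, ih]
  have dmod : ∀ a : ℕ, d a = d (a % n) := by
    intro a
    show (⌊(q:ℝ) * X a⌋).toNat = (⌊(q:ℝ) * X (a % n)⌋).toNat
    conv_lhs => rw [show a = a % n + n * (a / n) from (Nat.mod_add_div a n).symm]
    rw [hpermul (a / n) (a % n)]
  -- assemble
  refine ⟨n, hn, fun m => d (m:ℕ), fun k => X ((n - (k:ℕ)) % n),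
    fun i => hdlt _, ?_, ?_, ?_, ?_, ?_⟩
  · intro k
    show X ((n - (k:ℕ)) % n) = _
    rw [keyF ((n - (k:ℕ)) % n)]
    congr 1
    rw [← Fin.sum_univ_eq_sum_range
      (fun j => (d ((n - (k:ℕ)) % n + j) : ℝ)/(q:ℝ)^(j+1)) n]
    refine Finset.sum_congr rfl fun j _ => ?_
    have hval : ((j - k : Fin n) : ℕ) = (n - (k:ℕ) + (j:ℕ)) % n := by
      rw [Fin.sub_def]
    have hd : d ((n - (k:ℕ)) % n + (j:ℕ)) = d ((j - k : Fin n) : ℕ) := by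
      rw [dmod ((n - (k:ℕ)) % n + (j:ℕ)), hval, Nat.mod_add_mod]
    show (d ((n - (k:ℕ)) % n + (j:ℕ)) : ℝ)/(q:ℝ)^((j:ℕ)+1)
        = (d ((j - k : Fin n) : ℕ) : ℝ)/(q:ℝ)^((j:ℕ)+1)
    rw [hd]
  · intro k₁ k₂ hk
    have h1 : (n - (k₁:ℕ)) % n < n := Nat.mod_lt _ hn
    have h2 : (n - (k₂:ℕ)) % n < n := Nat.mod_lt _ hn
    have h3 := hdist _ _ h1 h2 hk
    have e : ∀ k : Fin n, (n - (k:ℕ)) % n = if (k:ℕ) = 0 then 0 else n - (k:ℕ) := by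
      intro k
      by_cases hc : (k:ℕ) = 0
      · simp [hc]
      · rw [if_neg hc, Nat.mod_eq_of_lt (by omega)]
    rw [e k₁, e k₂] at h3
    have hk₁ := k₁.isLt
    have hk₂ := k₂.isLt
    apply Fin.ext
    split_ifs at h3 <;> omega
  · show X ((n - 0) % n) = s₀
    rw [Nat.sub_zero, Nat.mod_self]
    exact hX0
  · intro k
    apply hnotcont
    have h := hmassn ((n - (k:ℕ)) % n) (Nat.mod_lt _ hn).le
    rw [hX0] at h
    rw [h]
    exact hs0pos
  · intro k
    have h := hmassn ((n - (k:ℕ)) % n) (Nat.mod_lt _ hn).le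
    rw [hX0] at h
    exact h
end

section
/- Let q ≥ 2 be an integer and (s₁,...,s_n) a cycle of order n. Then the empirical CDF F(x) = (1/n) Σ_{j=1}^n H(x − s_j) satisfies the stationarity functional equation F(x) = F(0) + Σ_{j=0}^{q-1}[F((x+j)/q) − F(j/q)] for all x ∈ [0,1]. -/
lemma step_13 (q : ℕ) (H : ℝ → ℝ) (hH : ∀ x, H x = if 0 ≤ x then 1 else 0)
    (x sv : ℝ) (hx0 : 0 ≤ x) (hx1 : x ≤ 1) (hs0 : 0 ≤ sv) (hs1 : sv ≤ 1)
    (d : ℕ) (hd : d < q) (hzero : sv = 0 → d = 0) :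
    ∑ j ∈ Finset.range q, (H (x + j - d - sv) - H ((j : ℝ) - d - sv))
      = H (x - sv) - H (-sv) := by
  rw [Finset.sum_eq_single_of_mem d (Finset.mem_range.2 hd)]
  · have h1 : x + (d:ℝ) - d - sv = x - sv := by ring
    have h2 : (d:ℝ) - d - sv = -sv := by ring
    rw [h1, h2]
  · intro j _ hj
    rcases lt_or_gt_of_ne hj with hlt | hgt
    · -- j < d : both arguments negative
      have hd1 : d ≠ 0 := by omega
      have hsv : 0 < sv := by
        rcases hs0.lt_or_eq with h | h
        · exact h
        · exact absurd (hzero h.symm) hd1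
      have hjd : (j:ℝ) + 1 ≤ d := by exact_mod_cast hlt
      rw [hH, hH, if_neg (by linarith), if_neg (by linarith)]
      ring
    · -- j > d : both arguments nonneg
      have hjd : (d:ℝ) + 1 ≤ j := by exact_mod_cast hgt
      rw [hH, hH, if_pos (by linarith), if_pos (by linarith)]
      ring

lemma recur_13 (q m : ℕ) (hq : 2 ≤ q) (t : Fin (m+1) → ℕ)
    (s : Fin (m+1) → ℝ)
    (hs : ∀ k : Fin (m+1), s k =
      (∑ j : Fin (m+1), (t (j - k) : ℝ) / (q : ℝ) ^ ((j : ℕ) + 1)) / (1 - ((q : ℝ) ^ (m+1))⁻¹))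
    (k : Fin (m+1)) :
    (q : ℝ) * s k = (t (-k) : ℝ) + s (k - 1) := by
  have hq0 : (0:ℝ) < q := by positivity
  have hq1 : (1:ℝ) < q := by exact_mod_cast hq.trans_lt' one_lt_two
  have hqn : (1:ℝ) < (q:ℝ) ^ (m+1) := one_lt_pow₀ hq1 (Nat.succ_ne_zero m)
  have hD : (0:ℝ) < 1 - ((q:ℝ) ^ (m+1))⁻¹ := by
    have : ((q:ℝ) ^ (m+1))⁻¹ < 1 := inv_lt_one_of_one_lt₀ hqn
    linarith
  set D : ℝ := 1 - ((q:ℝ) ^ (m+1))⁻¹ with hDdef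
  set U : Fin (m+1) → ℝ := fun k => ∑ j : Fin (m+1), (t (j - k) : ℝ) / (q : ℝ) ^ ((j : ℕ) + 1) with hU
  -- key sum identity
  have e1 : (q:ℝ) * U k = (t (-k) : ℝ) + ∑ j ∈ Finset.univ.erase (0 : Fin (m+1)),
      (t (j - k) : ℝ) / (q : ℝ) ^ ((j : ℕ)) := by
    rw [hU, Finset.mul_sum]
    have : ∀ j : Fin (m+1), (q:ℝ) * ((t (j - k) : ℝ) / (q : ℝ) ^ ((j : ℕ) + 1))
        = (t (j - k) : ℝ) / (q : ℝ) ^ ((j : ℕ)) := by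
      intro j
      rw [pow_succ]
      field_simp
    rw [Finset.sum_congr rfl (fun j _ => this j)]
    rw [← Finset.add_sum_erase _ _ (Finset.mem_univ (0 : Fin (m+1)))]
    simp [zero_sub]
  have e2 : U (k - 1) = (t (-k) : ℝ) / (q:ℝ) ^ (m+1) + ∑ j ∈ Finset.univ.erase (0 : Fin (m+1)),
      (t (j - k) : ℝ) / (q : ℝ) ^ ((j : ℕ)) := by
    show (∑ j : Fin (m+1), (t (j - (k - 1)) : ℝ) / (q : ℝ) ^ ((j : ℕ) + 1)) = _
    have this : (∑ j : Fin (m+1), (t (j - (k - 1)) : ℝ) / (q : ℝ) ^ ((j : ℕ) + 1))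
        = ∑ i : Fin (m+1), (t (i - k) : ℝ) / (q : ℝ) ^ (((i - 1 : Fin (m+1)) : ℕ) + 1) :=
      Fintype.sum_equiv (Equiv.addRight (1 : Fin (m+1))) _ _
      (by
        intro j
        simp only [Equiv.coe_addRight]
        congr 2
        · congr 1
          abel
        · congr 1
          simp [add_sub_cancel_right])
    rw [this]
    rw [← Finset.add_sum_erase _ _ (Finset.mem_univ (0 : Fin (m+1)))]
    congr 1
    · have h01 : ((0 - 1 : Fin (m+1)) : ℕ) = m := by
        rw [Fin.coe_sub_one]; simp
      rw [h01, zero_sub]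
    · apply Finset.sum_congr rfl
      intro j hj
      have hj0 : j ≠ 0 := (Finset.mem_erase.1 hj).1
      congr 1
      have : ((j - 1 : Fin (m+1)) : ℕ) = (j : ℕ) - 1 := by
        rw [Fin.coe_sub_one, if_neg hj0]
      rw [this]
      have : (j:ℕ) - 1 + 1 = (j:ℕ) := Nat.succ_pred_eq_of_pos (Fin.pos_of_ne_zero hj0)
      rw [this]
  have key : (q:ℝ) * U k = (t (-k) : ℝ) * D + U (k - 1) := by
    rw [e1, e2, hDdef]
    rw [div_eq_mul_inv]
    ring
  rw [hs k, hs (k-1)]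
  show (q:ℝ) * (U k / D) = (t (-k) : ℝ) + U (k-1) / D
  rw [mul_div_assoc', key]
  field_simp

lemma bound_13 (q m : ℕ) (hq : 2 ≤ q) (t : Fin (m+1) → ℕ) (ht : ∀ i, t i < q)
    (s : Fin (m+1) → ℝ)
    (hs : ∀ k : Fin (m+1), s k =
      (∑ j : Fin (m+1), (t (j - k) : ℝ) / (q : ℝ) ^ ((j : ℕ) + 1)) / (1 - ((q : ℝ) ^ (m+1))⁻¹))
    (k : Fin (m+1)) : 0 ≤ s k ∧ s k ≤ 1 := by
  have hq0 : (0:ℝ) < q := by positivity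
  have hq1 : (1:ℝ) < q := by exact_mod_cast hq.trans_lt' one_lt_two
  have hqn : (1:ℝ) < (q:ℝ) ^ (m+1) := one_lt_pow₀ hq1 (Nat.succ_ne_zero m)
  have hD : (0:ℝ) < 1 - ((q:ℝ) ^ (m+1))⁻¹ := by
    have : ((q:ℝ) ^ (m+1))⁻¹ < 1 := inv_lt_one_of_one_lt₀ hqn
    linarith
  have hU0 : 0 ≤ ∑ j : Fin (m+1), (t (j - k) : ℝ) / (q : ℝ) ^ ((j : ℕ) + 1) := by
    positivity
  have hgeom : ∑ j ∈ Finset.range (m+1), (((q:ℝ)^j)⁻¹ - ((q:ℝ)^(j+1))⁻¹)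
      = 1 - ((q:ℝ) ^ (m+1))⁻¹ := by
    rw [Finset.sum_range_sub' (fun i => ((q:ℝ)^i)⁻¹)]
    simp
  have hUle : (∑ j : Fin (m+1), (t (j - k) : ℝ) / (q : ℝ) ^ ((j : ℕ) + 1))
      ≤ 1 - ((q:ℝ) ^ (m+1))⁻¹ := by
    calc (∑ j : Fin (m+1), (t (j - k) : ℝ) / (q : ℝ) ^ ((j : ℕ) + 1))
        ≤ ∑ j : Fin (m+1), ((q:ℝ) - 1) / (q : ℝ) ^ ((j : ℕ) + 1) := by
          apply Finset.sum_le_sum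
          intro j _
          have h1 : (t (j - k) : ℝ) + 1 ≤ q := by exact_mod_cast ht (j - k)
          gcongr
          linarith
      _ = ∑ j ∈ Finset.range (m+1), ((q:ℝ) - 1) / (q : ℝ) ^ (j + 1) := by
          rw [Fin.sum_univ_eq_sum_range (fun j => ((q:ℝ) - 1) / (q : ℝ) ^ (j + 1))]
      _ = ∑ j ∈ Finset.range (m+1), (((q:ℝ)^j)⁻¹ - ((q:ℝ)^(j+1))⁻¹) := by
          apply Finset.sum_congr rfl
          intro j _
          rw [pow_succ]
          field_simp
      _ = 1 - ((q:ℝ) ^ (m+1))⁻¹ := hgeom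
  rw [hs k]
  constructor
  · exact div_nonneg hU0 hD.le
  · rw [div_le_one hD]
    exact hUle

lemma zero_13 (q m : ℕ) (hq : 2 ≤ q) (t : Fin (m+1) → ℕ)
    (s : Fin (m+1) → ℝ)
    (hs : ∀ k : Fin (m+1), s k =
      (∑ j : Fin (m+1), (t (j - k) : ℝ) / (q : ℝ) ^ ((j : ℕ) + 1)) / (1 - ((q : ℝ) ^ (m+1))⁻¹))
    (k : Fin (m+1)) (h0 : s k = 0) : ∀ i, t i = 0 := by
  have hq0 : (0:ℝ) < q := by positivity
  have hq1 : (1:ℝ) < q := by exact_mod_cast hq.trans_lt' one_lt_two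
  have hqn : (1:ℝ) < (q:ℝ) ^ (m+1) := one_lt_pow₀ hq1 (Nat.succ_ne_zero m)
  have hD : (0:ℝ) < 1 - ((q:ℝ) ^ (m+1))⁻¹ := by
    have : ((q:ℝ) ^ (m+1))⁻¹ < 1 := inv_lt_one_of_one_lt₀ hqn
    linarith
  rw [hs k, div_eq_zero_iff] at h0
  rcases h0 with h0 | h0
  · have hall := (Finset.sum_eq_zero_iff_of_nonneg (by
      intro j _; positivity)).1 h0
    intro i
    have := hall (i + k) (Finset.mem_univ _)
    rw [add_sub_cancel_right, div_eq_zero_iff] at this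
    rcases this with h | h
    · exact_mod_cast h
    · exact absurd h (by positivity)
  · linarith

/-- The empirical CDF of a cycle of purely repeating base-`q` numbers satisfies the
stationarity functional equation. -/
theorem stmt_13 (q n : ℕ) (hq : 2 ≤ q) (hn : 0 < n)
    (t : Fin n → ℕ) (ht : ∀ i, t i < q)
    (s : Fin n → ℝ)
    (hs : ∀ k : Fin n, s k =
      (∑ j : Fin n, (t (j - k) : ℝ) / (q : ℝ) ^ ((j : ℕ) + 1)) / (1 - ((q : ℝ) ^ n)⁻¹))
    (hdistinct : Function.Injective s)
    (H : ℝ → ℝ) (hH : ∀ x, H x = if 0 ≤ x then 1 else 0)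
    (F : ℝ → ℝ) (hF : ∀ x, F x = (1 / n) * ∑ k : Fin n, H (x - s k)) :
    ∀ x ∈ Set.Icc (0 : ℝ) 1,
      F x = F 0 + ∑ j ∈ Finset.range q, (F ((x + j) / q) - F ((j : ℝ) / q)) := by
  intro x hx
  obtain ⟨hx0, hx1⟩ := hx
  obtain ⟨m, rfl⟩ := Nat.exists_eq_succ_of_ne_zero hn.ne'
  have hq0 : (0:ℝ) < q := by
    have : 0 < q := by omega
    exact_mod_cast this
  have recur := recur_13 q m hq t s hs
  have bound := bound_13 q m hq t ht s hs
  have zero := zero_13 q m hq t s hs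
  -- per-cycle-element identity
  have main : ∀ k : Fin (m+1),
      ∑ j ∈ Finset.range q, (H ((x + j)/(q:ℝ) - s k) - H ((j:ℝ)/(q:ℝ) - s k))
        = H (x - s (k-1)) - H (-(s (k-1))) := by
    intro k
    have hdiv : ∀ y : ℝ, H (y / (q:ℝ) - s k) = H (y - (t (-k):ℝ) - s (k-1)) := by
      intro y
      have harg : y / (q:ℝ) - s k = (y - (t (-k):ℝ) - s (k-1)) / q := by
        rw [div_sub' (ne_of_gt hq0)]
        congr 1
        have := recur k
        linarith
      rw [harg, hH, hH]
      rcases le_or_gt 0 (y - (t (-k):ℝ) - s (k - 1)) with h | h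
      · rw [if_pos (div_nonneg h hq0.le), if_pos h]
      · rw [if_neg (not_le.2 (div_neg_of_neg_of_pos h hq0)), if_neg (not_le.2 h)]
    calc ∑ j ∈ Finset.range q, (H ((x + j)/(q:ℝ) - s k) - H ((j:ℝ)/(q:ℝ) - s k))
        = ∑ j ∈ Finset.range q,
            (H (x + j - (t (-k):ℝ) - s (k-1)) - H ((j:ℝ) - (t (-k):ℝ) - s (k-1))) := by
          refine Finset.sum_congr rfl fun j _ => ?_
          rw [hdiv ((x : ℝ) + j), hdiv (j:ℝ)]
      _ = H (x - s (k-1)) - H (-(s (k-1))) := by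
          refine step_13 q H hH x (s (k-1)) hx0 hx1 (bound (k-1)).1 (bound (k-1)).2
            (t (-k)) (ht _) fun h0 => zero (k-1) h0 (-k)
  have sum_shift : ∑ k : Fin (m+1), (H (x - s (k-1)) - H (-(s (k-1))))
      = ∑ k : Fin (m+1), (H (x - s k) - H (-(s k))) :=
    Fintype.sum_equiv (Equiv.subRight (1 : Fin (m+1))) _ _ (fun k => rfl)
  have key : ∑ j ∈ Finset.range q,
      ((∑ k : Fin (m+1), H ((x + j)/(q:ℝ) - s k)) - ∑ k : Fin (m+1), H ((j:ℝ)/(q:ℝ) - s k))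
      = (∑ k : Fin (m+1), H (x - s k)) - ∑ k : Fin (m+1), H (-(s k)) := by
    calc ∑ j ∈ Finset.range q,
        ((∑ k : Fin (m+1), H ((x + j)/(q:ℝ) - s k)) - ∑ k : Fin (m+1), H ((j:ℝ)/(q:ℝ) - s k))
        = ∑ j ∈ Finset.range q, ∑ k : Fin (m+1),
            (H ((x + j)/(q:ℝ) - s k) - H ((j:ℝ)/(q:ℝ) - s k)) := by
          refine Finset.sum_congr rfl fun j _ => (Finset.sum_sub_distrib _ _).symm
      _ = ∑ k : Fin (m+1), ∑ j ∈ Finset.range q,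
            (H ((x + j)/(q:ℝ) - s k) - H ((j:ℝ)/(q:ℝ) - s k)) := Finset.sum_comm
      _ = ∑ k : Fin (m+1), (H (x - s (k-1)) - H (-(s (k-1)))) :=
          Finset.sum_congr rfl fun k _ => main k
      _ = ∑ k : Fin (m+1), (H (x - s k) - H (-(s k))) := sum_shift
      _ = (∑ k : Fin (m+1), H (x - s k)) - ∑ k : Fin (m+1), H (-(s k)) :=
          Finset.sum_sub_distrib _ _
  simp only [hF, zero_sub]
  have split : ∑ j ∈ Finset.range q,
      ((1 / ((m+1 : ℕ):ℝ)) * ∑ k : Fin (m+1), H ((x + j)/(q:ℝ) - s k)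
        - (1 / ((m+1 : ℕ):ℝ)) * ∑ k : Fin (m+1), H ((j:ℝ)/(q:ℝ) - s k))
      = (1 / ((m+1 : ℕ):ℝ)) * ∑ j ∈ Finset.range q,
          ((∑ k : Fin (m+1), H ((x + j)/(q:ℝ) - s k)) - ∑ k : Fin (m+1), H ((j:ℝ)/(q:ℝ) - s k)) := by
    rw [Finset.mul_sum]
    exact Finset.sum_congr rfl fun j _ => by ring
  rw [split, key]
  ring
end
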